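/- arXiv:math/0508425 — 10 statements merged into one kernel-verified Lean document; each statement's English description precedes it below -/
import Mathlib

section
/- Let -π ≤ α < β ≤ π with β - α > π, let (p_k) be a sequence of complex numbers, and let σ > 0. Suppose P₁ and P₂ are analytic, single-valued functions on the sector S(α,β) and that for i = 1,2 there exist positive constants M_i, a_i such that for every integer n ≥ 0 and every z ∈ S(α,β) with |z| ≥ σ one has |P_i(z) - Σ_{k=0}^{n-1} p_k z^{-(k+1)}| ≤ M_i · n! / (a_i^n |z|^{n+1}). Then P₁(z) = P₂(z) for all z ∈ S(α,β). -/
open Set Filter Complex Topology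

private lemma watson_sector_isOpen (α β : ℝ) (hβ : β ≤ Real.pi) :
    IsOpen {z : ℂ | z ≠ 0 ∧ α < z.arg ∧ z.arg < β} := by
  rw [isOpen_iff_mem_nhds]
  rintro z ⟨hz0, h1, h2⟩
  have hs : z ∈ slitPlane :=
    mem_slitPlane_iff_arg.mpr ⟨ne_of_lt (lt_of_lt_of_le h2 hβ), hz0⟩
  have hc : ContinuousAt Complex.arg z := continuousAt_arg hs
  have h3 : Complex.arg ⁻¹' Set.Ioo α β ∈ 𝓝 z := hc (Ioo_mem_nhds h1 h2)
  have h4 : {(0:ℂ)}ᶜ ∈ 𝓝 z := isOpen_compl_singleton.mem_nhds hz0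
  filter_upwards [h3, h4] with w hw1 hw2
  exact ⟨hw2, hw1.1, hw1.2⟩

private lemma watson_sector_isPreconnected (α β : ℝ) (hα : -Real.pi ≤ α) (hβ : β ≤ Real.pi) :
    IsPreconnected {z : ℂ | z ≠ 0 ∧ α < z.arg ∧ z.arg < β} := by
  have himg : {z : ℂ | z ≠ 0 ∧ α < z.arg ∧ z.arg < β} =
      (fun p : ℝ × ℝ => (p.1 : ℂ) * Complex.exp (p.2 * Complex.I)) ''
        (Set.Ioi (0:ℝ) ×ˢ Set.Ioo α β) := by
    ext z
    constructor
    · rintro ⟨hz0, h1, h2⟩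
      exact ⟨(‖z‖, Complex.arg z), ⟨norm_pos_iff.mpr hz0, h1, h2⟩,
        Complex.norm_mul_exp_arg_mul_I z⟩
    · rintro ⟨⟨r, θ⟩, ⟨hr, hθ1, hθ2⟩, rfl⟩
      simp only [Set.mem_Ioi] at hr
      simp only [Set.mem_Ioo] at hθ1 hθ2
      have harg : Complex.arg ((r : ℂ) * Complex.exp (θ * Complex.I)) = θ := by
        rw [Complex.arg_real_mul _ hr, Complex.exp_mul_I,
          Complex.arg_cos_add_sin_mul_I ⟨lt_of_le_of_lt hα hθ1, hθ2.le.trans hβ⟩]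
      refine ⟨mul_ne_zero (by exact_mod_cast hr.ne') (Complex.exp_ne_zero _), ?_, ?_⟩
      · rw [harg]; exact hθ1
      · rw [harg]; exact hθ2
  rw [himg]
  refine IsPreconnected.image (isPreconnected_Ioi.prod isPreconnected_Ioo) _ ?_
  exact ((Complex.continuous_ofReal.comp continuous_fst).mul
    (Complex.continuous_exp.comp ((Complex.continuous_ofReal.comp continuous_snd).mul
      continuous_const))).continuousOn

private lemma watson_gevrey_exp_decay {M a t : ℝ} (hM : 0 < M) (ha : 0 < a) (ht : 0 < t)
    {x : ℝ} (hx : ∀ n : ℕ, x ≤ M * n.factorial / (a ^ n * t ^ (n + 1))) :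
    x ≤ 2 * M / t * Real.exp (-(a * Real.log 2 / 2) * t) := by
  set n := ⌊a * t / 2⌋₊ with hndef
  have hat : (0:ℝ) ≤ a * t / 2 := by positivity
  have hn1 : (n : ℝ) ≤ a * t / 2 := Nat.floor_le hat
  have hn2 : a * t / 2 < n + 1 := Nat.lt_floor_add_one _
  have e₂ : ((n.factorial : ℝ)) ≤ (a * t / 2) ^ n := by
    calc ((n.factorial : ℝ)) ≤ (n : ℝ) ^ n := by exact_mod_cast Nat.factorial_le_pow n
      _ ≤ (a * t / 2) ^ n := pow_le_pow_left₀ (Nat.cast_nonneg n) hn1 n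
  have hpow : (a * t / 2) ^ n = a ^ n * t ^ n * (1 / 2 : ℝ) ^ n := by
    rw [show a * t / 2 = a * t * (1 / 2) by ring, mul_pow, mul_pow]
  have e₃ : M * n.factorial / (a ^ n * t ^ (n + 1)) ≤ M / t * (1 / 2 : ℝ) ^ n := by
    have h1 : M * n.factorial / (a ^ n * t ^ (n + 1)) ≤
        M * (a ^ n * t ^ n * (1 / 2 : ℝ) ^ n) / (a ^ n * t ^ (n + 1)) := by
      rw [← hpow]; gcongr
    refine h1.trans (le_of_eq ?_)
    rw [pow_succ]
    field_simp
  have l2 : (0:ℝ) < Real.log 2 := Real.log_pos one_lt_two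
  have e₄ : ((1 / 2 : ℝ)) ^ n ≤ 2 * Real.exp (-(a * Real.log 2 / 2) * t) := by
    have h12 : ((1 / 2 : ℝ)) ^ n = Real.exp (-((n : ℝ) * Real.log 2)) := by
      rw [show -((n : ℝ) * Real.log 2) = (n : ℝ) * Real.log (1 / 2) by
        rw [one_div, Real.log_inv]; ring, Real.exp_nat_mul, Real.exp_log (by norm_num)]
    have h2e : 2 * Real.exp (-(a * Real.log 2 / 2) * t) =
        Real.exp (Real.log 2 + -(a * Real.log 2 / 2) * t) := by
      rw [Real.exp_add, Real.exp_log two_pos]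
    rw [h12, h2e]
    apply Real.exp_le_exp.mpr
    nlinarith [mul_le_mul_of_nonneg_right hn2.le l2.le]
  calc x ≤ M * n.factorial / (a ^ n * t ^ (n + 1)) := hx n
    _ ≤ M / t * (1 / 2 : ℝ) ^ n := e₃
    _ ≤ M / t * (2 * Real.exp (-(a * Real.log 2 / 2) * t)) := by
        apply mul_le_mul_of_nonneg_left e₄ (by positivity)
    _ = 2 * M / t * Real.exp (-(a * Real.log 2 / 2) * t) := by ring

private noncomputable def watsonMap (α β R : ℝ) (w : ℂ) : ℂ :=
  Complex.exp ((((β - α) / Real.pi : ℝ) : ℂ) * Complex.log (w + (R : ℂ)) +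
    (((α + β) / 2 : ℝ) : ℂ) * Complex.I)

private lemma watsonMap_props (α β : ℝ) (hα : -Real.pi ≤ α) (hβ : β ≤ Real.pi)
    (hopening : Real.pi < β - α) {R : ℝ} (hR : 1 ≤ R) {w : ℂ} (hw : 0 ≤ w.re) :
    watsonMap α β R w ≠ 0 ∧ α < (watsonMap α β R w).arg ∧ (watsonMap α β R w).arg < β ∧
      ‖watsonMap α β R w‖ = ‖w + (R : ℂ)‖ ^ ((β - α) / Real.pi) := by
  have hπ : (0:ℝ) < Real.pi := Real.pi_pos
  set ρ := (β - α) / Real.pi with hρdef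
  set θ₀ := (α + β) / 2 with hθdef
  have hρ1 : 1 < ρ := (one_lt_div hπ).mpr hopening
  have hρ0 : 0 < ρ := lt_trans one_pos hρ1
  set ζ := w + (R : ℂ) with hζdef
  have hζre : 0 < ζ.re := by
    simp only [hζdef, Complex.add_re, Complex.ofReal_re]
    linarith
  have hζ0 : ζ ≠ 0 := by
    intro h; rw [h] at hζre; simp at hζre
  have harg2 : |ζ.arg| < Real.pi / 2 := Complex.abs_arg_lt_pi_div_two_iff.mpr (Or.inl hζre)
  set ψ := θ₀ + ρ * ζ.arg with hψdef
  have hhalf : ρ * (Real.pi / 2) = (β - α) / 2 := by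
    rw [hρdef]; field_simp
  have habsmul : |ρ * ζ.arg| < (β - α) / 2 := by
    rw [abs_mul, abs_of_pos hρ0, ← hhalf]
    exact mul_lt_mul_of_pos_left harg2 hρ0
  have habs' := abs_lt.mp habsmul
  have hψα : α < ψ := by rw [hψdef, hθdef]; linarith [habs'.1]
  have hψβ : ψ < β := by rw [hψdef, hθdef]; linarith [habs'.2]
  have hψIoc : ψ ∈ Set.Ioc (-Real.pi) Real.pi :=
    ⟨lt_of_le_of_lt hα hψα, le_trans hψβ.le hβ⟩
  have key : watsonMap α β R w =
      ((Real.exp (ρ * Real.log (‖ζ‖)) : ℝ) : ℂ) * Complex.exp ((ψ : ℝ) * Complex.I) := by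
    rw [watsonMap, ← hζdef, ← hρdef, ← hθdef, Complex.ofReal_exp, ← Complex.exp_add]
    congr 1
    rw [Complex.log]
    push_cast [hψdef]
    ring
  have habs : ‖watsonMap α β R w‖ = ‖ζ‖ ^ ρ := by
    rw [key, norm_mul, Complex.norm_real, Real.norm_eq_abs, Complex.norm_exp_ofReal_mul_I, mul_one,
      abs_of_pos (Real.exp_pos _), Real.rpow_def_of_pos (norm_pos_iff.mpr hζ0), mul_comm]
  have hargm : (watsonMap α β R w).arg = ψ := by
    rw [key, Complex.arg_real_mul _ (Real.exp_pos _), Complex.exp_mul_I,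
      Complex.arg_cos_add_sin_mul_I hψIoc]
  refine ⟨?_, ?_, ?_, ?_⟩
  · rw [watsonMap]; exact Complex.exp_ne_zero _
  · rw [hargm]; exact hψα
  · rw [hargm]; exact hψβ
  · rw [habs]
/-- **Watson's uniqueness theorem (order 1).**
Let `-π ≤ α < β ≤ π` with `β - α > π`. If `P₁` and `P₂` are analytic on the
sector `S(α,β) = {z ≠ 0 : α < arg z < β}` and both admit the Gevrey estimates
of order 1 with the same coefficient sequence `p` (with possibly different
constants `Mᵢ, aᵢ`, valid for `|z| ≥ σ`), then `P₁ = P₂` on `S(α,β)`. -/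
theorem watson_uniqueness_order_one
    (α β : ℝ) (hα : -Real.pi ≤ α) (hβ : β ≤ Real.pi) (hαβ : α < β)
    (hopening : Real.pi < β - α)
    (p : ℕ → ℂ) (σ : ℝ) (hσ : 0 < σ)
    (P₁ P₂ : ℂ → ℂ)
    (hP₁ : DifferentiableOn ℂ P₁ {z : ℂ | z ≠ 0 ∧ α < z.arg ∧ z.arg < β})
    (hP₂ : DifferentiableOn ℂ P₂ {z : ℂ | z ≠ 0 ∧ α < z.arg ∧ z.arg < β})
    (M₁ a₁ : ℝ) (hM₁ : 0 < M₁) (ha₁ : 0 < a₁)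
    (hest₁ : ∀ (n : ℕ) (z : ℂ), z ≠ 0 → α < z.arg → z.arg < β →
      σ ≤ ‖z‖ →
      ‖P₁ z - ∑ k ∈ Finset.range n, p k / z ^ (k + 1)‖ ≤
        M₁ * n.factorial / (a₁ ^ n * ‖z‖ ^ (n + 1)))
    (M₂ a₂ : ℝ) (hM₂ : 0 < M₂) (ha₂ : 0 < a₂)
    (hest₂ : ∀ (n : ℕ) (z : ℂ), z ≠ 0 → α < z.arg → z.arg < β →
      σ ≤ ‖z‖ →
      ‖P₂ z - ∑ k ∈ Finset.range n, p k / z ^ (k + 1)‖ ≤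
        M₂ * n.factorial / (a₂ ^ n * ‖z‖ ^ (n + 1))) :
    ∀ z : ℂ, z ≠ 0 → α < z.arg → z.arg < β → P₁ z = P₂ z := by
  have hπ : (0:ℝ) < Real.pi := Real.pi_pos
  set S : Set ℂ := {z : ℂ | z ≠ 0 ∧ α < z.arg ∧ z.arg < β} with hSdef
  have hSopen : IsOpen S := watson_sector_isOpen α β hβ
  have hSpre : IsPreconnected S := watson_sector_isPreconnected α β hα hβ
  set F : ℂ → ℂ := fun z => P₁ z - P₂ z with hFdef
  have hFdiff : DifferentiableOn ℂ F S := hP₁.sub hP₂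
  set a := min a₁ a₂ with hadef
  have ha : 0 < a := lt_min ha₁ ha₂
  have hlog2 : (0:ℝ) < Real.log 2 := Real.log_pos one_lt_two
  set b := a * Real.log 2 / 2 with hbdef
  have hb : 0 < b := by rw [hbdef]; positivity
  set ρ := (β - α) / Real.pi with hρdef
  have hρ1 : 1 < ρ := (one_lt_div hπ).mpr hopening
  set R := max σ 1 with hRdef
  have hR1 : 1 ≤ R := le_max_right _ _
  have hRσ : σ ≤ R := le_max_left _ _
  have hR0 : 0 < R := lt_of_lt_of_le one_pos hR1
  have hM12 : (0:ℝ) < M₁ + M₂ := by linarith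
  -- uniform Gevrey estimate for the difference
  have hFest : ∀ z : ℂ, z ∈ S → σ ≤ ‖z‖ → ∀ n : ℕ,
      ‖F z‖ ≤ (M₁ + M₂) * n.factorial / (a ^ n * ‖z‖ ^ (n + 1)) := by
    rintro z ⟨hz0, h1, h2⟩ h3 n
    have k₁ := hest₁ n z hz0 h1 h2 h3
    have k₂ := hest₂ n z hz0 h1 h2 h3
    have tpos : (0:ℝ) < ‖z‖ := lt_of_lt_of_le hσ h3
    have tri : ‖F z‖ ≤
        ‖P₁ z - ∑ k ∈ Finset.range n, p k / z ^ (k + 1)‖ +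
        ‖P₂ z - ∑ k ∈ Finset.range n, p k / z ^ (k + 1)‖ := by
      calc ‖F z‖ = dist (P₁ z) (P₂ z) := by rw [Complex.dist_eq]
        _ ≤ dist (P₁ z) (∑ k ∈ Finset.range n, p k / z ^ (k + 1)) +
            dist (P₂ z) (∑ k ∈ Finset.range n, p k / z ^ (k + 1)) := dist_triangle_right _ _ _
        _ = _ := by rw [Complex.dist_eq, Complex.dist_eq]
    have k₃ : M₁ * n.factorial / (a₁ ^ n * ‖z‖ ^ (n + 1)) ≤
        M₁ * n.factorial / (a ^ n * ‖z‖ ^ (n + 1)) := by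
      gcongr
      exact min_le_left _ _
    have k₄ : M₂ * n.factorial / (a₂ ^ n * ‖z‖ ^ (n + 1)) ≤
        M₂ * n.factorial / (a ^ n * ‖z‖ ^ (n + 1)) := by
      gcongr
      exact min_le_right _ _
    have hsum : (M₁ + M₂) * n.factorial / (a ^ n * ‖z‖ ^ (n + 1)) =
        M₁ * n.factorial / (a ^ n * ‖z‖ ^ (n + 1)) +
        M₂ * n.factorial / (a ^ n * ‖z‖ ^ (n + 1)) := by ring
    linarith
  -- exponential decay of the difference
  have hdecay : ∀ z : ℂ, z ∈ S → σ ≤ ‖z‖ →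
      ‖F z‖ ≤ 2 * (M₁ + M₂) / σ * Real.exp (-b * ‖z‖) := by
    intro z hzS h3
    have tpos : (0:ℝ) < ‖z‖ := lt_of_lt_of_le hσ h3
    have hkey := watson_gevrey_exp_decay hM12 ha tpos (hFest z hzS h3)
    rw [hbdef]
    refine hkey.trans ?_
    gcongr
  -- uniform bound for the difference
  have hbound : ∀ z : ℂ, z ∈ S → σ ≤ ‖z‖ → ‖F z‖ ≤ (M₁ + M₂) / σ := by
    intro z hzS h3
    have hk := hFest z hzS h3 0
    simp only [pow_zero, Nat.factorial_zero, Nat.cast_one, mul_one, one_mul, zero_add, pow_one] at hk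
    refine hk.trans ?_
    gcongr
  -- the conformal map onto the right half-plane
  have hmS : ∀ w : ℂ, 0 ≤ w.re → watsonMap α β R w ∈ S ∧ σ ≤ ‖watsonMap α β R w‖ ∧
      ‖watsonMap α β R w‖ = ‖w + (R:ℂ)‖ ^ ρ := by
    intro w hw
    obtain ⟨h0, h1, h2, h3⟩ := watsonMap_props α β hα hβ hopening hR1 hw
    have hζabs : R ≤ ‖w + (R:ℂ)‖ := by
      have hre : R ≤ (w + (R:ℂ)).re := by
        simp only [Complex.add_re, Complex.ofReal_re]; linarith
      exact hre.trans (Complex.re_le_norm _)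
    have hσm : σ ≤ ‖watsonMap α β R w‖ := by
      calc σ ≤ R := hRσ
        _ = R ^ (1:ℝ) := (Real.rpow_one R).symm
        _ ≤ R ^ ρ := Real.rpow_le_rpow_of_exponent_le hR1 (le_of_lt hρ1)
        _ ≤ ‖w + (R:ℂ)‖ ^ ρ := Real.rpow_le_rpow hR0.le hζabs (by linarith)
        _ = ‖watsonMap α β R w‖ := h3.symm
    exact ⟨⟨h0, h1, h2⟩, hσm, h3⟩
  have hmdiffAt : ∀ w : ℂ, 0 ≤ w.re → DifferentiableAt ℂ (watsonMap α β R) w := by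
    intro w hw
    have hslit : w + (R:ℂ) ∈ Complex.slitPlane := by
      refine Complex.mem_slitPlane_iff.mpr (Or.inl ?_)
      simp only [Complex.add_re, Complex.ofReal_re]; linarith
    have h1 : DifferentiableAt ℂ (fun w : ℂ => w + (R:ℂ)) w := differentiableAt_id.add_const _
    have h2 : DifferentiableAt ℂ (fun w : ℂ => Complex.log (w + (R:ℂ))) w :=
      DifferentiableAt.comp (g := Complex.log) w (Complex.differentiableAt_log hslit) h1
    have h3 : DifferentiableAt ℂ (fun w : ℂ =>
        (((β - α) / Real.pi : ℝ) : ℂ) * Complex.log (w + (R:ℂ)) +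
        (((α + β) / 2 : ℝ) : ℂ) * Complex.I) w := (h2.const_mul _).add_const _
    exact Complex.differentiable_exp.differentiableAt.comp w h3
  have hGdiffAt : ∀ w : ℂ, 0 ≤ w.re →
      DifferentiableAt ℂ (fun w => F (watsonMap α β R w)) w := by
    intro w hw
    have hmem := (hmS w hw).1
    have hF : DifferentiableAt ℂ F (watsonMap α β R w) :=
      hFdiff.differentiableAt (hSopen.mem_nhds hmem)
    exact hF.comp w (hmdiffAt w hw)
  have hGd : DiffContOnCl ℂ (fun w => F (watsonMap α β R w)) {w : ℂ | 0 < w.re} := by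
    constructor
    · exact fun w hw => (hGdiffAt w (le_of_lt hw)).differentiableWithinAt
    · rw [closure_setOf_lt_re]
      exact fun w hw => (hGdiffAt w hw).continuousAt.continuousWithinAt
  have hGexp : ∃ c < (2:ℝ), ∃ B, (fun w => F (watsonMap α β R w)) =O[Bornology.cobounded ℂ ⊓
      Filter.principal {z : ℂ | 0 < z.re}] fun z => Real.exp (B * ‖z‖ ^ c) := by
    refine ⟨1, one_lt_two, 0, Asymptotics.IsBigO.of_bound ((M₁ + M₂)/σ) ?_⟩
    have hmem : {z : ℂ | 0 < z.re} ∈ Bornology.cobounded ℂ ⊓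
        Filter.principal {z : ℂ | 0 < z.re} :=
      Filter.mem_inf_of_right (Filter.mem_principal_self _)
    filter_upwards [hmem] with w hw
    obtain ⟨hmemS, hσm, _⟩ := hmS w (le_of_lt hw)
    simp only [zero_mul, Real.exp_zero, norm_one, mul_one]
    exact hbound _ hmemS hσm
  have hGre : Asymptotics.SuperpolynomialDecay Filter.atTop Real.exp
      (fun x : ℝ => ‖F (watsonMap α β R x)‖) := by
    intro nn
    have htend1 : Filter.Tendsto (fun x : ℝ => x + R) Filter.atTop Filter.atTop :=
      tendsto_atTop_add_const_right _ R tendsto_id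
    have htend2 : Filter.Tendsto (fun x : ℝ => (x + R) ^ (ρ - 1)) Filter.atTop Filter.atTop :=
      (tendsto_rpow_atTop (by linarith)).comp htend1
    have hev : ∀ᶠ x in Filter.atTop, ((nn:ℝ) + 1) / b ≤ (x + R) ^ (ρ - 1) :=
      htend2.eventually_ge_atTop _
    have hexpo : Filter.Tendsto (fun x : ℝ => (nn:ℝ) * x - b * (x + R) ^ ρ)
        Filter.atTop Filter.atBot := by
      have hneg : Filter.Tendsto (fun x : ℝ => -x) Filter.atTop Filter.atBot :=
        tendsto_neg_atBot_iff.mpr tendsto_id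
      refine tendsto_atBot_mono' Filter.atTop ?_ hneg
      filter_upwards [hev, Filter.eventually_ge_atTop (0:ℝ)] with x hx1 hx2
      have hxR : (0:ℝ) < x + R := by linarith
      have hsplit : (x + R) ^ ρ = (x + R) ^ (ρ - 1) * (x + R) := by
        rw [← Real.rpow_add_one (ne_of_gt hxR) (ρ - 1), sub_add_cancel]
      have h6 := mul_le_mul_of_nonneg_right hx1 hxR.le
      have h5 : ((nn:ℝ) + 1) * (x + R) ≤ b * ((x + R) ^ (ρ - 1) * (x + R)) := by
        calc ((nn:ℝ) + 1) * (x + R) = b * (((nn:ℝ) + 1) / b * (x + R)) := by field_simp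
          _ ≤ b * ((x + R) ^ (ρ - 1) * (x + R)) := mul_le_mul_of_nonneg_left h6 hb.le
      rw [hsplit]
      have hnnR : (0:ℝ) ≤ (nn:ℝ) * R := mul_nonneg (Nat.cast_nonneg nn) hR0.le
      nlinarith [h5]
    have g0 : Filter.Tendsto (fun x : ℝ => 2 * (M₁ + M₂) / σ *
        Real.exp ((nn:ℝ) * x - b * (x + R) ^ ρ)) Filter.atTop (nhds 0) := by
      have := (Real.tendsto_exp_atBot.comp hexpo).const_mul (2 * (M₁ + M₂) / σ)
      simpa using this
    refine squeeze_zero' (Filter.Eventually.of_forall fun x => by positivity) ?_ g0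
    filter_upwards [Filter.eventually_ge_atTop (0:ℝ)] with x hx
    have hre0 : (0:ℝ) ≤ ((x:ℝ):ℂ).re := by simp [hx]
    obtain ⟨hmemS, hσm, habs⟩ := hmS _ hre0
    have hcast : ((x:ℝ):ℂ) + (R:ℂ) = ((x + R : ℝ):ℂ) := by push_cast; ring
    have habs2 : ‖((x:ℝ):ℂ) + (R:ℂ)‖ = x + R := by
      rw [hcast, Complex.norm_real, Real.norm_eq_abs]
      exact abs_of_nonneg (by linarith)
    have hd := hdecay _ hmemS hσm
    rw [habs, habs2] at hd
    calc Real.exp x ^ nn * ‖F (watsonMap α β R x)‖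
        ≤ Real.exp x ^ nn * (2 * (M₁ + M₂) / σ * Real.exp (-b * (x + R) ^ ρ)) := by
          exact mul_le_mul_of_nonneg_left hd (by positivity)
      _ = 2 * (M₁ + M₂) / σ * Real.exp ((nn:ℝ) * x - b * (x + R) ^ ρ) := by
          rw [← Real.exp_nat_mul, show (nn:ℝ) * x - b * (x + R) ^ ρ =
            (nn:ℝ) * x + -b * (x + R) ^ ρ by ring, Real.exp_add]
          ring
  have him : ∃ C, ∀ x : ℝ, ‖F (watsonMap α β R ((x:ℝ) * Complex.I))‖ ≤ C := by
    refine ⟨(M₁ + M₂)/σ, fun x => ?_⟩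
    have hre0 : (0:ℝ) ≤ (((x:ℝ):ℂ) * Complex.I).re := by simp
    obtain ⟨hmemS, hσm, _⟩ := hmS _ hre0
    exact hbound _ hmemS hσm
  have hG0 := PhragmenLindelof.eq_zero_on_right_half_plane_of_superexponential_decay
    hGd hGexp hGre him
  -- identity theorem
  have hz₀re : (0:ℝ) ≤ (0:ℂ).re := by simp
  obtain ⟨hz₀S, _, hz₀abs⟩ := hmS 0 hz₀re
  have hz₀abs' : ‖watsonMap α β R 0‖ = R ^ ρ := by
    rw [hz₀abs, zero_add, Complex.norm_real, Real.norm_eq_abs, abs_of_pos hR0]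
  have hmcont : ContinuousAt (watsonMap α β R) 0 := (hmdiffAt 0 hz₀re).continuousAt
  have hwseq : Filter.Tendsto (fun k : ℕ => ((1/((k:ℝ)+1) : ℝ) : ℂ)) Filter.atTop (nhds 0) := by
    have h1 := tendsto_one_div_add_atTop_nhds_zero_nat (𝕜 := ℝ)
    have h2 := (Complex.continuous_ofReal.tendsto (0:ℝ)).comp h1
    simpa [Function.comp_def] using h2
  have hcomp : Filter.Tendsto (fun k : ℕ => watsonMap α β R ((1/((k:ℝ)+1) : ℝ) : ℂ))
      Filter.atTop (nhds (watsonMap α β R 0)) := hmcont.tendsto.comp hwseq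
  have hwre : ∀ k : ℕ, (0:ℝ) ≤ (((1/((k:ℝ)+1) : ℝ) : ℂ)).re := fun k => by
    rw [Complex.ofReal_re]; positivity
  have hneq : ∀ k : ℕ, watsonMap α β R ((1/((k:ℝ)+1) : ℝ) : ℂ) ≠ watsonMap α β R 0 := by
    intro k
    apply ne_of_apply_ne (‖·‖)
    obtain ⟨_, _, habsk⟩ := hmS _ (hwre k)
    rw [habsk, hz₀abs']
    have hcast : (((1/((k:ℝ)+1) : ℝ)):ℂ) + (R:ℂ) = (((1/((k:ℝ)+1) + R : ℝ)):ℂ) := by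
      push_cast; ring
    have habsk2 : ‖(((1/((k:ℝ)+1) : ℝ)):ℂ) + (R:ℂ)‖ = 1/((k:ℝ)+1) + R := by
      rw [hcast, Complex.norm_real, Real.norm_eq_abs]
      exact abs_of_pos (by positivity)
    rw [habsk2]
    have hlt : R < 1/((k:ℝ)+1) + R := lt_add_of_pos_left R (by positivity)
    exact ne_of_gt (Real.rpow_lt_rpow hR0.le hlt (by linarith))
  have htendw : Filter.Tendsto (fun k : ℕ => watsonMap α β R ((1/((k:ℝ)+1) : ℝ) : ℂ))
      Filter.atTop (nhdsWithin (watsonMap α β R 0) {watsonMap α β R 0}ᶜ) := by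
    refine tendsto_nhdsWithin_of_tendsto_nhds_of_eventually_within _ hcomp ?_
    exact Filter.Eventually.of_forall fun k => Set.mem_compl_singleton_iff.mpr (hneq k)
  have hfreq : ∃ᶠ z in nhdsWithin (watsonMap α β R 0) {watsonMap α β R 0}ᶜ, F z = 0 := by
    apply htendw.frequently
    apply Filter.Frequently.of_forall
    intro k
    have := hG0 (show (((1/((k:ℝ)+1):ℝ)):ℂ) ∈ {z : ℂ | 0 ≤ z.re} from hwre k)
    simpa using this
  have hFanal : AnalyticOnNhd ℂ F S := hFdiff.analyticOnNhd hSopen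
  have hEq : Set.EqOn F 0 S :=
    hFanal.eqOn_zero_of_preconnected_of_frequently_eq_zero hSpre hz₀S hfreq
  intro z hz h1 h2
  have hz0 := hEq (show z ∈ S from ⟨hz, h1, h2⟩)
  have : P₁ z - P₂ z = 0 := hz0
  exact sub_eq_zero.mp this
end

section
/- Let k > 0, let -π ≤ α < β ≤ π with β - α ≥ π/k, let (p_j) be a sequence of complex numbers, and let σ > 0. Suppose P₁ and P₂ are analytic, single-valued functions on the sector S(α,β) and that for i = 1,2 there exist positive constants M_i, a_i such that for every integer n ≥ 0 and every z ∈ S(α,β) with |z| ≥ σ one has |P_i(z) - Σ_{j=0}^{n-1} p_j z^{-(j+1)}| ≤ M_i (n!)^{1/k} / (k a_i |z|)^{n+1}. Then P₁(z) = P₂(z) for all z ∈ S(α,β). -/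
open Complex Set Filter Asymptotics Bornology Topology

noncomputable section

namespace WatsonAux

local notation "π" => Real.pi

lemma expI (x : ℝ) : Complex.exp ((x:ℂ) * I) = ((Real.cos x : ℝ) : ℂ) + ((Real.sin x : ℝ) : ℂ) * I := by
  rw [Complex.exp_mul_I, Complex.ofReal_cos, Complex.ofReal_sin]

lemma expI_pi_div_two : Complex.exp ((((π/2):ℝ):ℂ) * I) = I := by
  rw [expI]; simp [Real.cos_pi_div_two, Real.sin_pi_div_two]

lemma arg_exp_eq {w : ℂ} (h1 : -π < w.im) (h2 : w.im ≤ π) : (Complex.exp w).arg = w.im := by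
  rw [Complex.exp_eq_exp_re_mul_sin_add_cos, ← Complex.ofReal_exp]
  exact Complex.arg_mul_cos_add_sin_mul_I (Real.exp_pos _) ⟨h1, h2⟩

/-- Phragmén–Lindelöf on a rotated quadrant `[a, a+π/2]` with exponential weight. -/
lemma ray_step (H : ℂ → ℂ) (C : ℝ)
    (hd : ∀ v : ℂ, -1 < v.re → DifferentiableAt ℂ H v)
    (hC : ∀ v : ℂ, 0 ≤ v.re → ‖H v‖ ≤ C)
    {a : ℝ} (ha : -(π/2) ≤ a) (ha' : a ≤ 0) (μ : ℂ)
    (h1 : ∀ t : ℝ, 0 ≤ t → ‖H ((t:ℂ) * Complex.exp ((a:ℂ) * I))‖ *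
      Real.exp ((μ * Complex.exp ((a:ℂ) * I)).re * t) ≤ C)
    (h2 : ∀ t : ℝ, 0 ≤ t → ‖H ((t:ℂ) * Complex.exp ((((a + π/2) : ℝ):ℂ) * I))‖ *
      Real.exp ((μ * Complex.exp ((((a + π/2) : ℝ):ℂ) * I)).re * t) ≤ C)
    {θ : ℝ} (hθ1 : a ≤ θ) (hθ2 : θ ≤ a + π/2) :
    ∀ t : ℝ, 0 ≤ t → ‖H ((t:ℂ) * Complex.exp ((θ:ℂ) * I))‖ *
      Real.exp ((μ * Complex.exp ((θ:ℂ) * I)).re * t) ≤ C := by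
  intro t ht
  have hC0 : 0 ≤ C := le_trans (norm_nonneg _) (hC 1 (by norm_num))
  set E : ℂ := Complex.exp ((a:ℂ) * I) with hE
  have hEre : E.re = Real.cos a := Complex.exp_ofReal_mul_I_re a
  have hEim : E.im = Real.sin a := Complex.exp_ofReal_mul_I_im a
  have hcosa : 0 ≤ Real.cos a := Real.cos_nonneg_of_mem_Icc ⟨ha, by linarith [Real.pi_pos]⟩
  have hsina : Real.sin a ≤ 0 :=
    Real.sin_nonpos_of_nonpos_of_neg_pi_le ha' (by linarith [Real.pi_pos])
  set g : ℂ → ℂ := fun u => H (E * u) * Complex.exp (μ * (E * u)) with hg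
  have habsg : ∀ u : ℂ, ‖g u‖ = ‖H (E * u)‖ *
      Real.exp ((μ * (E * u)).re) := by
    intro u; rw [hg]; simp [Complex.norm_exp]
  have hEure : ∀ u : ℂ, 0 ≤ u.re → 0 ≤ u.im → 0 ≤ (E * u).re := by
    intro u h1 h2
    rw [Complex.mul_re, hEre, hEim]
    have : 0 ≤ - Real.sin a * u.im := mul_nonneg (by linarith) h2
    nlinarith
  have hEI : E * I = Complex.exp ((((a + π/2):ℝ):ℂ) * I) := by
    rw [show ((((a + π/2):ℝ)):ℂ) * I = (a:ℂ) * I + (((π/2 : ℝ)):ℂ) * I by push_cast; ring,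
      Complex.exp_add, expI_pi_div_two, ← hE]
  have key : ∀ u : ℂ, 0 ≤ u.re → 0 ≤ u.im → ‖g u‖ ≤ C := by
    intro u hure huim
    have hdg : DifferentiableOn ℂ g {u : ℂ | -1 < (E * u).re} := by
      intro u hu
      apply DifferentiableAt.differentiableWithinAt
      have hmul : DifferentiableAt ℂ (fun u : ℂ => E * u) u := differentiableAt_id.const_mul E
      exact ((hd _ hu).comp u hmul).mul ((hmul.const_mul μ).cexp)
    have hsub : closure (Ioi (0:ℝ) ×ℂ Ioi (0:ℝ)) ⊆ {u : ℂ | -1 < (E * u).re} := by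
      rw [Complex.closure_reProdIm, closure_Ioi]
      intro u hu
      rw [Complex.mem_reProdIm] at hu
      have := hEure u hu.1 hu.2
      simp only [mem_setOf_eq]
      linarith
    have hdiffcl : DiffContOnCl ℂ g (Ioi (0:ℝ) ×ℂ Ioi (0:ℝ)) := (hdg.mono hsub).diffContOnCl
    have hB : ∃ c < (2:ℝ), ∃ B, g =O[cobounded ℂ ⊓ 𝓟 (Ioi (0:ℝ) ×ℂ Ioi (0:ℝ))]
        fun u => Real.exp (B * ‖u‖ ^ (c:ℝ)) := by
      refine ⟨1, one_lt_two, ‖μ‖, Asymptotics.IsBigO.of_bound C ?_⟩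
      rw [Filter.eventually_inf_principal]
      refine Filter.Eventually.of_forall fun u hu => ?_
      rw [Complex.mem_reProdIm] at hu
      have hb1 : ‖H (E * u)‖ ≤ C := hC _ (hEure u (le_of_lt hu.1) (le_of_lt hu.2))
      have hb2 : (μ * (E * u)).re ≤ ‖μ‖ * ‖u‖ := by
        calc (μ * (E * u)).re ≤ ‖μ * (E * u)‖ := Complex.re_le_norm _
          _ = ‖μ‖ * (‖E‖ * ‖u‖) := by rw [norm_mul, norm_mul]
          _ = ‖μ‖ * ‖u‖ := by rw [hE, Complex.norm_exp]; simp
      rw [habsg u, Real.norm_of_nonneg (Real.exp_pos _).le, Real.rpow_one]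
      exact mul_le_mul hb1 (Real.exp_le_exp.2 hb2) (Real.exp_pos _).le hC0
    have hre : ∀ x : ℝ, 0 ≤ x → ‖g (x:ℂ)‖ ≤ C := by
      intro x hx
      rw [habsg]
      have hx1 : E * (x:ℂ) = (x:ℂ) * E := mul_comm _ _
      have hx2 : (μ * (E * (x:ℂ))).re = (μ * E).re * x := by
        rw [show μ * (E * (x:ℂ)) = (x:ℂ) * (μ * E) by ring, Complex.re_ofReal_mul, mul_comm]
      rw [hx2, hx1]
      exact h1 x hx
    have him : ∀ x : ℝ, 0 ≤ x → ‖g ((x:ℂ) * I)‖ ≤ C := by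
      intro x hx
      rw [habsg]
      have hx1 : E * ((x:ℂ) * I) = (x:ℂ) * Complex.exp ((((a + π/2):ℝ):ℂ) * I) := by
        rw [← hEI]; ring
      have hx2 : (μ * (E * ((x:ℂ) * I))).re =
          (μ * Complex.exp ((((a + π/2):ℝ):ℂ) * I)).re * x := by
        rw [show μ * (E * ((x:ℂ) * I)) =
          (x:ℂ) * (μ * (E * I)) by ring, Complex.re_ofReal_mul, hEI, mul_comm]
      rw [hx2, hx1]
      exact h2 x hx
    exact PhragmenLindelof.quadrant_I hdiffcl hB hre him hure huim
  -- now instantiate at u = t * exp((θ - a) I)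
  set u : ℂ := (t:ℂ) * Complex.exp ((((θ - a):ℝ):ℂ) * I) with hu
  have hure : 0 ≤ u.re := by
    rw [hu, Complex.re_ofReal_mul, Complex.exp_ofReal_mul_I_re]
    exact mul_nonneg ht (Real.cos_nonneg_of_mem_Icc ⟨by linarith, by linarith⟩)
  have huim : 0 ≤ u.im := by
    rw [hu, Complex.im_ofReal_mul, Complex.exp_ofReal_mul_I_im]
    exact mul_nonneg ht (Real.sin_nonneg_of_nonneg_of_le_pi (by linarith)
      (by linarith [Real.pi_pos]))
  have hEu : E * u = (t:ℂ) * Complex.exp ((θ:ℂ) * I) := by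
    rw [hu, hE, show (Complex.exp ((a:ℂ) * I) * ((t:ℂ) *
      Complex.exp ((((θ - a):ℝ):ℂ) * I))) = (t:ℂ) * (Complex.exp ((a:ℂ) * I) *
      Complex.exp ((((θ - a):ℝ):ℂ) * I)) by ring, ← Complex.exp_add]
    congr 2
    push_cast
    ring
  have := key u hure huim
  rw [habsg, hEu] at this
  have hre2 : (μ * ((t:ℂ) * Complex.exp ((θ:ℂ) * I))).re =
      (μ * Complex.exp ((θ:ℂ) * I)).re * t := by
    rw [show μ * ((t:ℂ) * Complex.exp ((θ:ℂ) * I)) =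
      (t:ℂ) * (μ * Complex.exp ((θ:ℂ) * I)) by ring, Complex.re_ofReal_mul, mul_comm]
  rwa [hre2] at this

set_option maxHeartbeats 2000000 in
/-- A holomorphic function on a neighbourhood of the closed right half-plane which decays
like `exp (-c * |v|)` on the whole closed half-plane vanishes identically there. -/
lemma halfplane_decay_zero (H : ℂ → ℂ) (C c : ℝ) (hc : 0 < c)
    (hd : ∀ v : ℂ, -1 < v.re → DifferentiableAt ℂ H v)
    (hdecay : ∀ v : ℂ, 0 ≤ v.re → ‖H v‖ ≤ C * Real.exp (-c * ‖v‖)) :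
    ∀ v : ℂ, 0 ≤ v.re → H v = 0 := by
  have hC0 : 0 ≤ C := by
    have h := hdecay 1 (by norm_num)
    have h2 := norm_nonneg (H 1)
    nlinarith [Real.exp_pos (-c * ‖(1:ℂ)‖)]
  have hCglob : ∀ v : ℂ, 0 ≤ v.re → ‖H v‖ ≤ C := by
    intro v hv
    refine (hdecay v hv).trans ?_
    have : Real.exp (-c * ‖v‖) ≤ 1 := by
      rw [Real.exp_le_one_iff]
      have := norm_nonneg v
      nlinarith
    nlinarith
  -- ray bounds
  set R : ℝ → ℝ → Prop := fun θ ρ => ∀ t : ℝ, 0 ≤ t →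
    ‖H ((t:ℂ) * Complex.exp ((θ:ℂ) * I))‖ * Real.exp (ρ * t) ≤ C with hRdef
  have floor : ∀ θ : ℝ, -(π/2) ≤ θ → θ ≤ π/2 → R θ c := by
    intro θ h1 h2 t ht
    have habs : ‖(t:ℂ) * Complex.exp ((θ:ℂ) * I)‖ = t := by
      rw [norm_mul, Complex.norm_exp]
      simp [Complex.norm_of_nonneg ht, ht]
    have hre : 0 ≤ ((t:ℂ) * Complex.exp ((θ:ℂ) * I)).re := by
      rw [Complex.re_ofReal_mul, Complex.exp_ofReal_mul_I_re]
      exact mul_nonneg ht (Real.cos_nonneg_of_mem_Icc ⟨h1, h2⟩)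
    have hb := hdecay _ hre
    rw [habs] at hb
    calc ‖H ((t:ℂ) * Complex.exp ((θ:ℂ) * I))‖ * Real.exp (c * t)
        ≤ C * Real.exp (-c * t) * Real.exp (c * t) :=
          mul_le_mul_of_nonneg_right hb (Real.exp_pos _).le
      _ = C := by rw [mul_assoc, ← Real.exp_add]; ring_nf; simp
  -- rate improvement: arbitrarily fast exponential decay on the positive real axis
  have key : ∀ lam : ℝ, ∃ ρ : ℝ, lam ≤ ρ ∧ R 0 ρ := by
    intro lam
    set ε : ℝ := min (π/4) (c / (|lam| + 1)) with hε
    have hπ := Real.pi_pos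
    have hε0 : 0 < ε := lt_min (by linarith) (by positivity)
    have hε4 : ε ≤ π/4 := min_le_left _ _
    have heps_lam : ε ≤ c / (|lam| + 1) := min_le_right _ _
    have hsin2 : 0 < Real.sin (ε/2) :=
      Real.sin_pos_of_pos_of_lt_pi (by linarith) (by linarith)
    have hcos2' : (1:ℝ)/2 ≤ Real.cos (ε/2) := by
      have := Real.cos_le_cos_of_nonneg_of_le_pi (by linarith : (0:ℝ) ≤ ε/2)
        (by linarith : π/3 ≤ π) (by linarith : ε/2 ≤ π/3)
      rwa [Real.cos_pi_div_three] at this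
    set L : ℝ := c * Real.cos (ε/2) / Real.sin (ε/2) with hL
    have heq2 : (2:ℝ) * (ε/2) = ε := by ring
    have hqa : Real.cos ε = 1 - 2 * Real.sin (ε/2)^2 := by
      have h3 := Real.cos_two_mul (ε/2)
      have h2 := Real.sin_sq_add_cos_sq (ε/2)
      rw [heq2] at h3
      nlinarith
    have hsa : Real.sin ε = 2 * Real.sin (ε/2) * Real.cos (ε/2) := by
      have h3 := Real.sin_two_mul (ε/2)
      rw [heq2] at h3
      exact h3
    have hq0 : 0 < Real.cos ε :=
      Real.cos_pos_of_mem_Ioo ⟨by linarith, by linarith⟩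
    have hq1 : Real.cos ε < 1 := by rw [hqa]; nlinarith
    have hid : L * (1 - Real.cos ε) = c * Real.sin ε := by
      rw [hL, hqa, hsa]
      field_simp
      ring
    have hLc : c / ε ≤ L := by
      rw [hL]
      have hsle : Real.sin (ε/2) ≤ ε/2 := Real.sin_le (by linarith)
      rw [div_le_div_iff₀ hε0 hsin2]
      nlinarith [mul_le_mul_of_nonneg_left hsle hc.le,
        mul_le_mul_of_nonneg_left hcos2' (mul_nonneg hc.le hε0.le)]
    have hLlam : |lam| + 1 ≤ L := by
      refine le_trans ?_ hLc
      rw [le_div_iff₀ hε0]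
      calc (|lam| + 1) * ε ≤ (|lam| + 1) * (c / (|lam| + 1)) := by
            apply mul_le_mul_of_nonneg_left heps_lam (by positivity)
        _ = c := by field_simp
    have hLlam' : lam + 1 ≤ L := le_trans (by have := le_abs_self lam; linarith) hLlam
    have hε1 : ε ≤ 1 := by
      have := Real.pi_le_four
      linarith
    have hcL : c ≤ L := by
      have h1 : c ≤ c / ε := by
        rw [le_div_iff₀ hε0]
        nlinarith
      linarith
    -- the rate sequence
    set ρ : ℕ → ℝ := fun m => L - (L - c) * Real.cos ε ^ m with hρ
    have hρ0 : ρ 0 = c := by simp [hρ]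
    have hrec : ∀ m, ρ (m+1) = ρ m * Real.cos ε + c * Real.sin ε := by
      intro m
      simp only [hρ]
      have hps : Real.cos ε ^ (m+1) = Real.cos ε ^ m * Real.cos ε := pow_succ _ m
      nlinarith [hid, hps]
    have hρle : ∀ m, ρ m ≤ L := by
      intro m
      simp only [hρ]
      have h1 : 0 ≤ (L - c) * Real.cos ε ^ m := mul_nonneg (by linarith) (pow_nonneg hq0.le m)
      linarith
    -- the zigzag induction
    have main : ∀ m : ℕ, R (if Even m then 0 else -ε) (ρ m) := by
      intro m
      induction m with
      | zero => simpa [hρ0] using floor 0 (by linarith) (by linarith)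
      | succ m ih =>
        by_cases hev : Even m
        · -- down-step: from ray 0 to ray -ε, quadrant [-π/2, 0]
          rw [if_pos hev] at ih
          have hodd : ¬ Even (m+1) := by simp [Nat.even_add_one, hev]
          rw [if_neg hodd]
          have hstep := ray_step H C hd hCglob (a := -(π/2)) (le_refl _) (by linarith)
            ((ρ m : ℂ) + (c:ℂ) * I) ?_ ?_ (θ := -ε) (by linarith) (by linarith)
          · intro t ht
            have hre : (((ρ m : ℂ) + (c:ℂ) * I) * Complex.exp ((((-ε):ℝ):ℂ) * I)).re =
                ρ (m+1) := by
              rw [expI]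
              simp only [Complex.add_re, Complex.add_im, Complex.mul_re, Complex.mul_im,
                Complex.ofReal_re, Complex.ofReal_im, Complex.I_re, Complex.I_im]
              rw [hrec m, Real.cos_neg, Real.sin_neg]
              ring
            have hconc := hstep t ht
            rwa [hre] at hconc
          · -- ray a = -π/2, rate c
            intro t ht
            have hre : (((ρ m : ℂ) + (c:ℂ) * I) *
                Complex.exp ((((-(π/2)):ℝ):ℂ) * I)).re = c := by
              rw [expI]
              simp only [Complex.add_re, Complex.add_im, Complex.mul_re, Complex.mul_im,
                Complex.ofReal_re, Complex.ofReal_im, Complex.I_re, Complex.I_im]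
              rw [Real.cos_neg, Real.sin_neg, Real.cos_pi_div_two, Real.sin_pi_div_two]
              ring
            rw [hre]
            exact floor (-(π/2)) (le_refl _) (by linarith) t ht
          · -- ray b = -π/2 + π/2 = 0, rate ρ m
            intro t ht
            have hang : ((-(π/2) + π/2 : ℝ)) = (0:ℝ) := by ring
            rw [hang]
            have hre : (((ρ m : ℂ) + (c:ℂ) * I) * Complex.exp ((((0):ℝ):ℂ) * I)).re = ρ m := by
              simp
            rw [hre]
            exact ih t ht
        · -- up-step: from ray -ε to ray 0, quadrant [-ε, -ε + π/2]
          rw [if_neg hev] at ih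
          have heven : Even (m+1) := Nat.even_add_one.2 hev
          rw [if_pos heven]
          have hstep := ray_step H C hd hCglob (a := -ε) (by linarith) (by linarith)
            (((ρ m : ℂ) - (c:ℂ) * I) * Complex.exp (((ε:ℝ):ℂ) * I)) ?_ ?_
            (θ := 0) (by linarith) (by linarith)
          · intro t ht
            have hre : ((((ρ m : ℂ) - (c:ℂ) * I) * Complex.exp (((ε:ℝ):ℂ) * I)) *
                Complex.exp ((((0):ℝ):ℂ) * I)).re = ρ (m+1) := by
              rw [show (((0):ℝ):ℂ) * I = 0 by simp, Complex.exp_zero, mul_one, expI]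
              simp only [Complex.sub_re, Complex.sub_im, Complex.add_re, Complex.add_im,
                Complex.mul_re, Complex.mul_im, Complex.ofReal_re, Complex.ofReal_im,
                Complex.I_re, Complex.I_im]
              rw [hrec m]
              ring
            have hconc := hstep t ht
            rwa [hre] at hconc
          · -- ray a = -ε, rate ρ m
            intro t ht
            have hprod : Complex.exp (((ε:ℝ):ℂ) * I) * Complex.exp ((((-ε):ℝ):ℂ) * I) = 1 := by
              rw [← Complex.exp_add, show ((ε:ℝ):ℂ) * I + (((-ε):ℝ):ℂ) * I = 0 by
                push_cast; ring, Complex.exp_zero]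
            have hre : ((((ρ m : ℂ) - (c:ℂ) * I) * Complex.exp (((ε:ℝ):ℂ) * I)) *
                Complex.exp ((((-ε):ℝ):ℂ) * I)).re = ρ m := by
              rw [mul_assoc, hprod, mul_one]
              simp
            rw [hre]
            exact ih t ht
          · -- ray b = -ε + π/2, rate c
            intro t ht
            have hprod : Complex.exp (((ε:ℝ):ℂ) * I) *
                Complex.exp ((((-ε + π/2):ℝ):ℂ) * I) = I := by
              rw [← Complex.exp_add, show ((ε:ℝ):ℂ) * I + (((-ε + π/2):ℝ):ℂ) * I =
                (((π/2:ℝ)):ℂ) * I by push_cast; ring, expI_pi_div_two]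
            have hre : ((((ρ m : ℂ) - (c:ℂ) * I) * Complex.exp (((ε:ℝ):ℂ) * I)) *
                Complex.exp ((((-ε + π/2):ℝ):ℂ) * I)).re = c := by
              rw [mul_assoc, hprod]
              simp
            rw [hre]
            exact floor (-ε + π/2) (by linarith) (by linarith) t ht
    -- pass to the limit
    have htend : Tendsto (fun m : ℕ => (L - c) * Real.cos ε ^ m) atTop (𝓝 0) := by
      have h := tendsto_pow_atTop_nhds_zero_of_lt_one hq0.le hq1
      simpa using h.const_mul (L - c)
    have hev2 : ∀ᶠ m : ℕ in atTop, (L - c) * Real.cos ε ^ m < L - lam :=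
      htend.eventually_lt_const (by linarith)
    obtain ⟨N, hN⟩ := Filter.eventually_atTop.1 hev2
    refine ⟨ρ (2 * N), ?_, ?_⟩
    · have := hN (2 * N) (by omega)
      simp only [hρ]
      linarith
    · have := main (2 * N)
      rwa [if_pos (even_two_mul N)] at this
  -- apply the superexponential-decay Phragmén–Lindelöf principle
  have hsup : SuperpolynomialDecay atTop Real.exp fun x : ℝ => ‖H (x:ℂ)‖ := by
    intro n
    obtain ⟨ρ, hρlam, hRρ⟩ := key (n + 1)
    have hbound : ∀ x : ℝ, 0 ≤ x → Real.exp x ^ n * ‖H (x:ℂ)‖ ≤ C * Real.exp (-x) := by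
      intro x hx
      have h1 := hRρ x hx
      rw [show ((0:ℝ):ℂ) * I = 0 by simp, Complex.exp_zero, mul_one] at h1
      have h2 : ‖H (x:ℂ)‖ ≤ C * Real.exp (-(ρ * x)) := by
        rw [Real.exp_neg]
        rw [← le_div_iff₀ (Real.exp_pos _)] at h1
        rwa [div_eq_mul_inv] at h1
      calc Real.exp x ^ n * ‖H (x:ℂ)‖ ≤ Real.exp x ^ n * (C * Real.exp (-(ρ * x))) := by
            apply mul_le_mul_of_nonneg_left _ (by positivity)
            exact h2
        _ = C * Real.exp ((n : ℝ) * x - ρ * x) := by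
            rw [← Real.exp_nat_mul,
              show Real.exp ((n:ℝ) * x) * (C * Real.exp (-(ρ * x))) =
                C * (Real.exp ((n:ℝ) * x) * Real.exp (-(ρ * x))) by ring, ← Real.exp_add]
            ring_nf
        _ ≤ C * Real.exp (-x) := by
            apply mul_le_mul_of_nonneg_left _ hC0
            apply Real.exp_le_exp.2
            nlinarith
    have htz : Tendsto (fun x : ℝ => C * Real.exp (-x)) atTop (𝓝 0) := by
      simpa using Real.tendsto_exp_neg_atTop_nhds_zero.const_mul C
    apply squeeze_zero' (g := fun x : ℝ => C * Real.exp (-x))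
    · filter_upwards [eventually_ge_atTop (0:ℝ)] with x hx
      positivity
    · filter_upwards [eventually_ge_atTop (0:ℝ)] with x hx
      exact hbound x hx
    · simpa using htz
  have hzero := PhragmenLindelof.eq_zero_on_right_half_plane_of_superexponential_decay
    (f := H) ?_ ?_ hsup ?_
  · intro v hv
    exact hzero hv
  · -- DiffContOnCl
    apply DifferentiableOn.diffContOnCl
    rw [Complex.closure_setOf_lt_re]
    intro v hv
    exact (hd v (by simpa using lt_of_lt_of_le (by norm_num) hv)).differentiableWithinAt
  · -- growth
    refine ⟨1, one_lt_two, 0, Asymptotics.IsBigO.of_bound C ?_⟩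
    rw [Filter.eventually_inf_principal]
    refine Filter.Eventually.of_forall fun v hv => ?_
    simp only [zero_mul, Real.exp_zero, norm_one, mul_one]
    exact hCglob v (le_of_lt hv)
  · -- imaginary axis
    refine ⟨C, fun x => ?_⟩
    apply hCglob
    simp

/-- Optimizing a Gevrey-type bound over `n` yields exponential decay. -/
lemma gevrey_opt {k b M X t : ℝ} (hk : 0 < k) (hb : 0 < b) (hM : 0 ≤ M)
    (ht : Real.exp 1 / b ≤ t)
    (hbd : ∀ n : ℕ, X ≤ M * ((n.factorial : ℝ)) ^ (1/k) / (b*t)^(n+1)) :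
    X ≤ M * Real.exp (-(b * t / Real.exp 1) ^ k) := by
  have he : (0:ℝ) < Real.exp 1 := Real.exp_pos 1
  set T : ℝ := b * t / Real.exp 1 with hT
  have ht0 : 0 < t := lt_of_lt_of_le (by positivity) ht
  have hT1 : 1 ≤ T := by
    rw [hT, le_div_iff₀ he]
    rw [div_le_iff₀ hb] at ht
    nlinarith
  have hT0 : 0 < T := lt_of_lt_of_le one_pos hT1
  have hTk1 : 1 ≤ T ^ k := by
    calc (1:ℝ) = 1 ^ k := (Real.one_rpow k).symm
      _ ≤ T ^ k := Real.rpow_le_rpow zero_le_one hT1 hk.le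
  set n : ℕ := ⌊T ^ k⌋₊ with hn
  have hn_le : (n:ℝ) ≤ T ^ k := Nat.floor_le (by positivity)
  have hn_lt : T ^ k < (n:ℝ) + 1 := Nat.lt_floor_add_one _
  have hfact : ((n.factorial : ℝ)) ^ (1/k) ≤ T ^ (n:ℝ) := by
    have h1 : ((n.factorial : ℝ)) ≤ ((n:ℝ)) ^ (n:ℕ) := by
      exact_mod_cast Nat.factorial_le_pow n
    have h2 : ((n.factorial : ℝ)) ^ (1/k) ≤ (((n:ℝ)) ^ (n:ℕ)) ^ (1/k) :=
      Real.rpow_le_rpow (by positivity) h1 (by positivity)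
    have h3 : (((n:ℝ)) ^ (n:ℕ)) ^ (1/k) = ((n:ℝ)) ^ ((n:ℝ) * (1/k)) := by
      rw [← Real.rpow_natCast ((n:ℝ)) n, ← Real.rpow_mul (Nat.cast_nonneg n)]
    have h4 : ((n:ℝ)) ^ ((n:ℝ) * (1/k)) ≤ (T ^ k) ^ ((n:ℝ) * (1/k)) :=
      Real.rpow_le_rpow (Nat.cast_nonneg n) hn_le (by positivity)
    have h5 : (T ^ k) ^ ((n:ℝ) * (1/k)) = T ^ (n:ℝ) := by
      rw [← Real.rpow_mul hT0.le]
      congr 1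
      field_simp
    calc ((n.factorial : ℝ)) ^ (1/k) ≤ (((n:ℝ)) ^ (n:ℕ)) ^ (1/k) := h2
      _ = ((n:ℝ)) ^ ((n:ℝ) * (1/k)) := h3
      _ ≤ (T ^ k) ^ ((n:ℝ) * (1/k)) := h4
      _ = T ^ (n:ℝ) := h5
  have hbt : b * t = Real.exp 1 * T := by
    rw [hT]; field_simp
  have hstep : M * ((n.factorial : ℝ)) ^ (1/k) / (b*t)^(n+1) ≤ M * Real.exp (-(T ^ k)) := by
    have hd0 : (0:ℝ) < (b*t)^(n+1) := by positivity
    calc M * ((n.factorial : ℝ)) ^ (1/k) / (b*t)^(n+1)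
        ≤ M * (T ^ (n:ℝ)) / (b*t)^(n+1) := by
          gcongr
      _ = M / (Real.exp 1 ^ (n+1) * T) := by
          rw [hbt, mul_pow, Real.rpow_natCast]
          field_simp
          ring
      _ ≤ M / Real.exp 1 ^ (n+1) := by
          apply div_le_div_of_nonneg_left hM (by positivity)
          nlinarith [pow_pos he (n+1)]
      _ = M * Real.exp (-((n:ℝ)+1)) := by
          rw [Real.exp_one_pow, Real.exp_neg]
          push_cast
          ring
      _ ≤ M * Real.exp (-(T ^ k)) := by
          apply mul_le_mul_of_nonneg_left _ hM
          apply Real.exp_le_exp.2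
          linarith
  exact (hbd n).trans hstep


end WatsonAux

open WatsonAux Complex Set Filter Asymptotics Bornology Topology

set_option maxHeartbeats 2000000 in
/-- **Watson's uniqueness theorem for Gevrey expansions of order `k`.**
Let `k > 0` and `-π ≤ α < β ≤ π` with `β - α ≥ π/k`. If `P₁` and `P₂` are
analytic on the sector `S(α,β) = {z ≠ 0 : α < arg z < β}` and both admit the
Gevrey estimates of order `k` with the same coefficient sequence `p`
(with possibly different constants `Mᵢ, aᵢ`, valid for `|z| ≥ σ`), then
`P₁ = P₂` on `S(α,β)`. -/
theorem watson_uniqueness_order_k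
    (k : ℝ) (hk : 0 < k)
    (α β : ℝ) (hα : -Real.pi ≤ α) (hβ : β ≤ Real.pi) (hαβ : α < β)
    (hopening : Real.pi / k ≤ β - α)
    (p : ℕ → ℂ) (σ : ℝ) (hσ : 0 < σ)
    (P₁ P₂ : ℂ → ℂ)
    (hP₁ : DifferentiableOn ℂ P₁ {z : ℂ | z ≠ 0 ∧ α < z.arg ∧ z.arg < β})
    (hP₂ : DifferentiableOn ℂ P₂ {z : ℂ | z ≠ 0 ∧ α < z.arg ∧ z.arg < β})
    (M₁ a₁ : ℝ) (hM₁ : 0 < M₁) (ha₁ : 0 < a₁)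
    (hest₁ : ∀ (n : ℕ) (z : ℂ), z ≠ 0 → α < z.arg → z.arg < β →
      σ ≤ ‖z‖ →
      ‖P₁ z - ∑ j ∈ Finset.range n, p j / z ^ (j + 1)‖ ≤
        M₁ * (n.factorial : ℝ) ^ (1 / k) / (k * a₁ * ‖z‖) ^ (n + 1))
    (M₂ a₂ : ℝ) (hM₂ : 0 < M₂) (ha₂ : 0 < a₂)
    (hest₂ : ∀ (n : ℕ) (z : ℂ), z ≠ 0 → α < z.arg → z.arg < β →
      σ ≤ ‖z‖ →
      ‖P₂ z - ∑ j ∈ Finset.range n, p j / z ^ (j + 1)‖ ≤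
        M₂ * (n.factorial : ℝ) ^ (1 / k) / (k * a₂ * ‖z‖) ^ (n + 1)) :
    ∀ z : ℂ, z ≠ 0 → α < z.arg → z.arg < β → P₁ z = P₂ z := by
  have hπ := Real.pi_pos
  set S : Set ℂ := {z : ℂ | z ≠ 0 ∧ α < z.arg ∧ z.arg < β} with hSdef
  -- openness of the sector
  have hSopen : IsOpen S := by
    rw [isOpen_iff_mem_nhds]
    rintro z ⟨h0, h1, h2⟩
    have hslit : z ∈ Complex.slitPlane :=
      Complex.mem_slitPlane_iff_arg.2 ⟨ne_of_lt (lt_of_lt_of_le h2 hβ), h0⟩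
    have hc := Complex.continuousAt_arg hslit
    have m1 : Complex.arg ⁻¹' (Ioi α) ∈ 𝓝 z := hc.preimage_mem_nhds (Ioi_mem_nhds h1)
    have m2 : Complex.arg ⁻¹' (Iio β) ∈ 𝓝 z := hc.preimage_mem_nhds (Iio_mem_nhds h2)
    have m3 : Complex.slitPlane ∈ 𝓝 z := Complex.isOpen_slitPlane.mem_nhds hslit
    refine mem_of_superset (inter_mem m3 (inter_mem m1 m2)) ?_
    rintro w ⟨hw3, hw1, hw2⟩
    exact ⟨Complex.slitPlane_ne_zero hw3, hw1, hw2⟩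
  -- preconnectedness of the sector
  have hSpre : IsPreconnected S := by
    have himg : S = (fun pr : ℝ × ℝ => ((pr.1 : ℝ) : ℂ) * Complex.exp ((pr.2 : ℂ) * I)) ''
        (Ioi (0:ℝ) ×ˢ Ioo α β) := by
      ext z
      constructor
      · rintro ⟨h0, h1, h2⟩
        exact ⟨(‖z‖, z.arg), ⟨norm_pos_iff.mpr h0, h1, h2⟩,
          Complex.norm_mul_exp_arg_mul_I z⟩
      · rintro ⟨⟨r, θ⟩, ⟨hr, hθ⟩, rfl⟩
        simp only [mem_Ioi] at hr
        obtain ⟨hθ1, hθ2⟩ := hθ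
        have harg : (((r : ℝ) : ℂ) * Complex.exp ((θ : ℂ) * I)).arg = θ := by
          rw [Complex.exp_mul_I]
          exact Complex.arg_mul_cos_add_sin_mul_I hr ⟨by linarith, by linarith⟩
        refine ⟨mul_ne_zero (Complex.ofReal_ne_zero.2 (ne_of_gt hr)) (Complex.exp_ne_zero _),
          ?_, ?_⟩ <;> rw [harg]
        · exact hθ1
        · exact hθ2
    rw [himg]
    apply IsPreconnected.image (isPreconnected_Ioi.prod isPreconnected_Ioo)
    apply Continuous.continuousOn
    exact (Complex.continuous_ofReal.comp continuous_fst).mul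
      (((Complex.continuous_ofReal.comp continuous_snd).mul continuous_const).cexp)
  -- setup of constants and the conformal map
  set γ : ℝ := (α + β)/2 with hγdef
  have hγα : α < γ := by rw [hγdef]; linarith
  have hγβ : γ < β := by rw [hγdef]; linarith
  have hkinv : 0 < k⁻¹ := inv_pos.2 hk
  have hhalf : k⁻¹ * (Real.pi/2) ≤ (β - α)/2 := by
    have h4 : k⁻¹ * Real.pi = Real.pi / k := by field_simp
    nlinarith [hopening]
  set a : ℝ := min a₁ a₂ with hadef
  have ha : 0 < a := lt_min ha₁ ha₂
  set b : ℝ := k * a with hbdef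
  have hb : 0 < b := mul_pos hk ha
  set c₀ : ℝ := (b / Real.exp 1) ^ k with hc₀def
  have hc₀ : 0 < c₀ := Real.rpow_pos_of_pos (by positivity) k
  set r₀ : ℝ := (max σ (Real.exp 1 / b)) ^ k with hr₀def
  have hmaxpos : 0 < max σ (Real.exp 1 / b) := lt_of_lt_of_le hσ (le_max_left _ _)
  have hr₀ : 0 < r₀ := Real.rpow_pos_of_pos hmaxpos k
  set s : ℝ := r₀ + 1 with hsdef
  have hs : 0 < s := by rw [hsdef]; linarith
  set ψ : ℂ → ℂ := fun v => Complex.exp ((γ:ℂ) * I + ((k:ℂ))⁻¹ * Complex.log v) with hψdef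
  set D : ℂ → ℂ := fun z => P₁ z - P₂ z with hDdef
  have hD : DifferentiableOn ℂ D S := hP₁.sub hP₂
  -- modulus and argument of ψ
  have hre_arg : ∀ v : ℂ, ((γ:ℂ) * I + ((k:ℂ))⁻¹ * Complex.log v).re =
      k⁻¹ * Real.log (‖v‖) ∧
      ((γ:ℂ) * I + ((k:ℂ))⁻¹ * Complex.log v).im = γ + k⁻¹ * v.arg := by
    intro v
    rw [← Complex.ofReal_inv]
    constructor
    · simp [Complex.add_re, Complex.re_ofReal_mul, Complex.log_re]
    · simp [Complex.add_im, Complex.im_ofReal_mul, Complex.log_im]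
  have habsψ : ∀ v : ℂ, v ≠ 0 → ‖ψ v‖ = ‖v‖ ^ ((1:ℝ)/k) := by
    intro v hv
    rw [hψdef]
    simp only []
    rw [Complex.norm_exp, (hre_arg v).1, Real.rpow_def_of_pos (norm_pos_iff.mpr hv)]
    rw [one_div, mul_comm]
  have hargbounds : ∀ v : ℂ, 0 < v.re →
      α < γ + k⁻¹ * v.arg ∧ γ + k⁻¹ * v.arg < β := by
    intro v hv
    have h1 : |v.arg| < Real.pi/2 := Complex.abs_arg_lt_pi_div_two_iff.2 (Or.inl hv)
    rw [abs_lt] at h1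
    have ha1 : -(k⁻¹ * (Real.pi/2)) < k⁻¹ * v.arg := by nlinarith [h1.1]
    have ha2 : k⁻¹ * v.arg < k⁻¹ * (Real.pi/2) := by nlinarith [h1.2]
    constructor <;> rw [hγdef] <;> [linarith; linarith]
  have hargψ : ∀ v : ℂ, 0 < v.re → (ψ v).arg = γ + k⁻¹ * v.arg := by
    intro v hv
    rw [hψdef]
    simp only []
    rw [arg_exp_eq] <;> rw [(hre_arg v).2]
    · obtain ⟨hb1, hb2⟩ := hargbounds v hv
      linarith
    · obtain ⟨hb1, hb2⟩ := hargbounds v hv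
      linarith
  have hmemS : ∀ v : ℂ, 0 < v.re → ψ v ∈ S := by
    intro v hv
    refine ⟨Complex.exp_ne_zero _, ?_, ?_⟩ <;> rw [hargψ v hv]
    · exact (hargbounds v hv).1
    · exact (hargbounds v hv).2
  -- the decay estimate coming from the Gevrey bounds
  have hdecayD : ∀ v : ℂ, 0 < v.re → r₀ ≤ ‖v‖ →
      ‖D (ψ v)‖ ≤ (M₁ + M₂) * Real.exp (-(c₀ * ‖v‖)) := by
    intro v hv hr
    have hv0 : v ≠ 0 := fun h => by simp [h] at hv
    set z : ℂ := ψ v with hzdef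
    obtain ⟨hz0, hza, hzb⟩ := hmemS v hv
    set t : ℝ := ‖z‖ with htdef
    have htval : t = ‖v‖ ^ ((1:ℝ)/k) := habsψ v hv0
    have htmax : max σ (Real.exp 1 / b) ≤ t := by
      rw [htval]
      have h1 : (r₀ : ℝ) ^ ((1:ℝ)/k) ≤ ‖v‖ ^ ((1:ℝ)/k) :=
        Real.rpow_le_rpow hr₀.le hr (by positivity)
      have h2 : (r₀ : ℝ) ^ ((1:ℝ)/k) = max σ (Real.exp 1 / b) := by
        rw [hr₀def, ← Real.rpow_mul hmaxpos.le]
        rw [show k * ((1:ℝ)/k) = 1 by field_simp]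
        exact Real.rpow_one _
      linarith
    have hσt : σ ≤ t := le_trans (le_max_left _ _) htmax
    have het : Real.exp 1 / b ≤ t := le_trans (le_max_right _ _) htmax
    have ht0 : 0 < t := lt_of_lt_of_le hσ hσt
    have hbd : ∀ n : ℕ, ‖D z‖ ≤
        (M₁ + M₂) * ((n.factorial : ℝ)) ^ (1/k) / (b*t)^(n+1) := by
      intro n
      have e1 := hest₁ n z hz0 hza hzb hσt
      have e2 := hest₂ n z hz0 hza hzb hσt
      set Sn : ℂ := ∑ j ∈ Finset.range n, p j / z ^ (j + 1) with hSn
      have tri : ‖D z‖ ≤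
          ‖P₁ z - Sn‖ + ‖P₂ z - Sn‖ := by
        have hre : D z = (P₁ z - Sn) - (P₂ z - Sn) := by rw [hDdef]; ring
        rw [hre]
        exact norm_sub_le _ _
      have hb1 : (b*t)^(n+1) ≤ (k * a₁ * t)^(n+1) := by
        apply pow_le_pow_left₀ (by positivity)
        have hle : b ≤ k * a₁ := by
          rw [hbdef]
          exact mul_le_mul_of_nonneg_left (min_le_left _ _) hk.le
        exact mul_le_mul_of_nonneg_right hle ht0.le
      have hb2 : (b*t)^(n+1) ≤ (k * a₂ * t)^(n+1) := by
        apply pow_le_pow_left₀ (by positivity)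
        have hle : b ≤ k * a₂ := by
          rw [hbdef]
          exact mul_le_mul_of_nonneg_left (min_le_right _ _) hk.le
        exact mul_le_mul_of_nonneg_right hle ht0.le
      have hpos : (0:ℝ) < (b*t)^(n+1) := by positivity
      have hf0 : (0:ℝ) ≤ ((n.factorial : ℝ)) ^ (1/k) := by positivity
      have d1 : M₁ * ((n.factorial : ℝ)) ^ (1/k) / (k * a₁ * t)^(n+1) ≤
          M₁ * ((n.factorial : ℝ)) ^ (1/k) / (b*t)^(n+1) :=
        div_le_div_of_nonneg_left (by positivity) hpos hb1
      have d2 : M₂ * ((n.factorial : ℝ)) ^ (1/k) / (k * a₂ * t)^(n+1) ≤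
          M₂ * ((n.factorial : ℝ)) ^ (1/k) / (b*t)^(n+1) :=
        div_le_div_of_nonneg_left (by positivity) hpos hb2
      calc ‖D z‖ ≤ ‖P₁ z - Sn‖ + ‖P₂ z - Sn‖ := tri
        _ ≤ M₁ * ((n.factorial : ℝ)) ^ (1/k) / (b*t)^(n+1) +
            M₂ * ((n.factorial : ℝ)) ^ (1/k) / (b*t)^(n+1) := by
            have := le_trans e1 d1
            have := le_trans e2 d2
            linarith
        _ = (M₁ + M₂) * ((n.factorial : ℝ)) ^ (1/k) / (b*t)^(n+1) := by ring
    have hopt := gevrey_opt hk hb (by positivity) het hbd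
    have hTk : (b * t / Real.exp 1) ^ (k:ℝ) = c₀ * ‖v‖ := by
      rw [show b * t / Real.exp 1 = (b / Real.exp 1) * t by ring,
        Real.mul_rpow (by positivity) ht0.le, hc₀def]
      congr 1
      rw [htval, ← Real.rpow_mul (norm_nonneg v),
        show (1:ℝ)/k * k = 1 by field_simp, Real.rpow_one]
    rwa [hTk] at hopt
  -- the function on the half-plane
  set H : ℂ → ℂ := fun w => D (ψ (w + (s:ℂ))) with hHdef
  set C : ℝ := (M₁ + M₂) * Real.exp (c₀ * s) with hCdef
  have hshift : ∀ w : ℂ, 0 ≤ w.re → 0 < (w + (s:ℂ)).re ∧ r₀ ≤ ‖w + (s:ℂ)‖ := by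
    intro w hw
    have h1 : (w + (s:ℂ)).re = w.re + s := by simp
    constructor
    · rw [h1]; linarith
    · have h2 : (w + (s:ℂ)).re ≤ ‖w + (s:ℂ)‖ := Complex.re_le_norm _
      rw [h1] at h2
      rw [hsdef] at h2 ⊢ <;> linarith
  have hdH : ∀ w : ℂ, -1 < w.re → DifferentiableAt ℂ H w := by
    intro w hw
    have hvre : 0 < (w + (s:ℂ)).re := by
      have h1 : (w + (s:ℂ)).re = w.re + s := by simp
      rw [h1, hsdef]; linarith
    have hvslit : (w + (s:ℂ)) ∈ Complex.slitPlane := Or.inl hvre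
    have hψd : DifferentiableAt ℂ ψ (w + (s:ℂ)) := by
      rw [hψdef]
      apply DifferentiableAt.cexp
      exact ((Complex.differentiableAt_log hvslit).const_mul _).const_add _
    have hDd : DifferentiableAt ℂ D (ψ (w + (s:ℂ))) :=
      (hD.differentiableAt (hSopen.mem_nhds (hmemS _ hvre)))
    have hcomp : DifferentiableAt ℂ (D ∘ ψ) (w + (s:ℂ)) := hDd.comp (w + (s:ℂ)) hψd
    exact hcomp.comp w (differentiableAt_id.add_const _)
  have hC0 : 0 ≤ C := by rw [hCdef]; positivity
  have hdecayH : ∀ w : ℂ, 0 ≤ w.re →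
      ‖H w‖ ≤ C * Real.exp (-c₀ * ‖w‖) := by
    intro w hw
    obtain ⟨hvre, hvr⟩ := hshift w hw
    have h1 := hdecayD (w + (s:ℂ)) hvre hvr
    have h2 : ‖w‖ - s ≤ ‖w + (s:ℂ)‖ := by
      have h3 : ‖w‖ ≤ ‖w + (s:ℂ)‖ + s := by
        calc ‖w‖ = ‖(w + (s:ℂ)) - (s:ℂ)‖ := by ring_nf
          _ ≤ ‖w + (s:ℂ)‖ + ‖(s:ℂ)‖ := by
              exact norm_sub_le _ _
          _ = ‖w + (s:ℂ)‖ + s := by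
              rw [Complex.norm_real, Real.norm_eq_abs, abs_of_pos hs]
      linarith
    calc ‖H w‖ ≤ (M₁ + M₂) * Real.exp (-(c₀ * ‖w + (s:ℂ)‖)) := h1
      _ ≤ (M₁ + M₂) * Real.exp (-(c₀ * (‖w‖ - s))) := by
          apply mul_le_mul_of_nonneg_left _ (by positivity)
          apply Real.exp_le_exp.2
          nlinarith
      _ = C * Real.exp (-c₀ * ‖w‖) := by
          rw [hCdef, show -(c₀ * (‖w‖ - s)) = c₀ * s + (-c₀ * ‖w‖) by ring,
            Real.exp_add]
          ring
  have hzero := halfplane_decay_zero H C c₀ hc₀ hdH hdecayH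
  have hψzero : ∀ v : ℂ, s ≤ v.re → D (ψ v) = 0 := by
    intro v hv
    have h1 := hzero (v - (s:ℂ)) (by simp [Complex.sub_re]; linarith)
    rw [hHdef] at h1
    simp only [] at h1
    rwa [sub_add_cancel] at h1
  -- the identity-theorem endgame
  set v₀ : ℂ := ((s + 1 : ℝ) : ℂ) with hv₀def
  have hv₀re : 0 < v₀.re := by rw [hv₀def]; simp; linarith
  set z₀ : ℂ := ψ v₀ with hz₀def
  have hz₀S : z₀ ∈ S := hmemS v₀ hv₀re
  have hargz₀ : z₀.arg = γ := by
    rw [hz₀def, hargψ v₀ hv₀re, hv₀def, Complex.arg_ofReal_of_nonneg (by linarith)]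
    ring
  have hz₀slit : z₀ ∈ Complex.slitPlane :=
    Complex.mem_slitPlane_iff_arg.2 ⟨by rw [hargz₀]; exact ne_of_lt (lt_of_lt_of_le hγβ hβ),
      hz₀S.1⟩
  set F : ℂ → ℂ := fun z => Complex.exp ((k:ℂ) * (Complex.log z - (γ:ℂ) * I)) with hFdef
  have hk0 : (k:ℂ) ≠ 0 := Complex.ofReal_ne_zero.2 (ne_of_gt hk)
  have hv₀ne : v₀ ≠ 0 := by
    rw [hv₀def]
    exact Complex.ofReal_ne_zero.2 (by linarith)
  have hargv₀ : v₀.arg = 0 := by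
    rw [hv₀def]; exact Complex.arg_ofReal_of_nonneg (by linarith)
  have hlogz₀ : Complex.log z₀ = (γ:ℂ) * I + ((k:ℂ))⁻¹ * Complex.log v₀ := by
    rw [hz₀def, hψdef]
    simp only []
    apply Complex.log_exp
    · rw [(hre_arg v₀).2, hargv₀]
      simp only [mul_zero, add_zero]
      linarith
    · rw [(hre_arg v₀).2, hargv₀]
      simp only [mul_zero, add_zero]
      linarith
  have hFz₀ : F z₀ = v₀ := by
    rw [hFdef]
    simp only []
    rw [hlogz₀, show (k:ℂ) * ((γ:ℂ) * I + ((k:ℂ))⁻¹ * Complex.log v₀ - (γ:ℂ) * I) =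
      Complex.log v₀ by field_simp; ring]
    exact Complex.exp_log hv₀ne
  have hgcont : ContinuousAt (fun z => (k:ℂ) * (Complex.log z - (γ:ℂ) * I)) z₀ :=
    ((continuousAt_clog hz₀slit).sub continuousAt_const).const_mul _
  have hFcont : ContinuousAt F z₀ := by
    rw [hFdef]
    exact Complex.continuous_exp.continuousAt.comp hgcont
  have h2val : ((k:ℂ) * (Complex.log z₀ - (γ:ℂ) * I)).im = 0 := by
    rw [hlogz₀, show (k:ℂ) * ((γ:ℂ) * I + ((k:ℂ))⁻¹ * Complex.log v₀ - (γ:ℂ) * I) =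
      Complex.log v₀ by field_simp; ring]
    rw [Complex.log_im, hargv₀]
  have hev : D =ᶠ[𝓝 z₀] 0 := by
    have e1 : ∀ᶠ z in 𝓝 z₀, z ∈ Complex.slitPlane :=
      Complex.isOpen_slitPlane.eventually_mem hz₀slit
    have e2 : ∀ᶠ z in 𝓝 z₀, |((k:ℂ) * (Complex.log z - (γ:ℂ) * I)).im| < Real.pi := by
      have hcont2 : ContinuousAt (fun z => ((k:ℂ) * (Complex.log z - (γ:ℂ) * I)).im) z₀ :=
        Complex.continuous_im.continuousAt.comp hgcont
      have htt : Tendsto (fun z => ((k:ℂ) * (Complex.log z - (γ:ℂ) * I)).im)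
          (𝓝 z₀) (𝓝 0) := by
        have h := hcont2.tendsto
        rwa [h2val] at h
      have habs : ∀ᶠ y in 𝓝 (0:ℝ), |y| < Real.pi := by
        have h := eventually_abs_sub_lt (0:ℝ) hπ
        simpa using h
      exact htt.eventually habs
    have e3 : ∀ᶠ z in 𝓝 z₀, s < (F z).re := by
      have hcont3 : ContinuousAt (fun z => (F z).re) z₀ :=
        Complex.continuous_re.continuousAt.comp hFcont
      have hval3 : (F z₀).re = s + 1 := by
        rw [hFz₀, hv₀def]
        simp
      have htt : Tendsto (fun z => (F z).re) (𝓝 z₀) (𝓝 (s + 1)) := by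
        have h := hcont3.tendsto
        rwa [hval3] at h
      exact htt.eventually (eventually_gt_nhds (by linarith))
    filter_upwards [e1, e2, e3] with z hz1 hz2 hz3
    have hψF : ψ (F z) = z := by
      rw [hψdef, hFdef]
      simp only []
      rw [abs_lt] at hz2
      rw [Complex.log_exp hz2.1 (le_of_lt hz2.2),
        show (γ:ℂ) * I + ((k:ℂ))⁻¹ * ((k:ℂ) * (Complex.log z - (γ:ℂ) * I)) =
          Complex.log z by field_simp; ring]
      exact Complex.exp_log (Complex.slitPlane_ne_zero hz1)
    have h0 := hψzero (F z) (le_of_lt hz3)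
    rw [hψF] at h0
    exact h0
  have hAn : AnalyticOnNhd ℂ D S := hD.analyticOnNhd hSopen
  have hDzero := hAn.eqOn_zero_of_preconnected_of_eventuallyEq_zero hSpre hz₀S hev
  intro z hz0 hza hzb
  have hfin := hDzero (show z ∈ S from ⟨hz0, hza, hzb⟩)
  rw [hDdef] at hfin
  simp only [Pi.zero_apply] at hfin
  exact sub_eq_zero.1 hfin
end
end

section
/- Let 0 < ε < 1 and let P be analytic on the sector S_ε = {z ∈ ℂ : z ≠ 0, |arg z| < (π/2)(1+ε)}. If there exist constants M > 0 and a > 0 such that |P(z)| ≤ M e^{-a|z|} for all z ∈ S_ε, then P(z) = 0 for all z ∈ S_ε. -/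
open Complex Filter Set Real


/-- **Lemma 1.** Let `0 < ε < 1` and let `P` be analytic on the sector
`S_ε = {z ≠ 0 : |arg z| < (π/2)(1+ε)}`. If `|P(z)| ≤ M e^{-a|z|}` on `S_ε`
for some `M, a > 0`, then `P ≡ 0` on `S_ε`. -/
theorem exp_decay_on_sector_opening_gt_pi_eq_zero
    (ε : ℝ) (hε0 : 0 < ε) (hε1 : ε < 1)
    (P : ℂ → ℂ)
    (hP : DifferentiableOn ℂ P {z : ℂ | z ≠ 0 ∧ |z.arg| < Real.pi / 2 * (1 + ε)})
    (M a : ℝ) (hM : 0 < M) (ha : 0 < a)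
    (hbound : ∀ z : ℂ, z ≠ 0 → |z.arg| < Real.pi / 2 * (1 + ε) →
      ‖P z‖ ≤ M * Real.exp (-a * ‖z‖)) :
    ∀ z : ℂ, z ≠ 0 → |z.arg| < Real.pi / 2 * (1 + ε) → P z = 0 := by
  have hπ : (0:ℝ) < Real.pi := Real.pi_pos
  set c : ℝ := Real.pi / 2 * (1 + ε) with hc_def
  set S : Set ℂ := {z : ℂ | z ≠ 0 ∧ |z.arg| < c} with hS_def
  have hc_pos : 0 < c := by positivity
  have hc_lt_pi : c < Real.pi := by nlinarith
  set β : ℝ := 1 + ε / 2 with hβ_def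
  have hβ1 : 1 < β := by simp [hβ_def]; linarith
  have hβ0 : 0 < β := by linarith
  have hβ2 : β < 2 := by simp [hβ_def]; linarith
  -- polar formula for cpow with real exponent
  have hpolar : ∀ u : ℂ, u ≠ 0 →
      u ^ (β:ℂ) = ((‖u‖ ^ β : ℝ) : ℂ) * Complex.exp (((β * u.arg : ℝ) : ℂ) * I) := by
    intro u hu
    rw [Complex.cpow_def_of_ne_zero hu]
    have hlog : Complex.log u = ((Real.log ‖u‖ : ℝ) : ℂ) + (u.arg : ℂ) * I := rfl
    rw [hlog, add_mul, Complex.exp_add]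
    congr 1
    · rw [Real.rpow_def_of_pos (norm_pos_iff.mpr hu), Complex.ofReal_exp, Complex.ofReal_mul]
    · push_cast; ring_nf
  -- key facts about u ^ β for u in the open right half-plane
  have hkey : ∀ u : ℂ, 0 < u.re →
      ‖u ^ (β:ℂ)‖ = ‖u‖ ^ β ∧ (u ^ (β:ℂ)).arg = β * u.arg := by
    intro u hu
    have hu0 : u ≠ 0 := by intro h; rw [h] at hu; simp at hu
    have harg : |u.arg| < Real.pi / 2 := Complex.abs_arg_lt_pi_div_two_iff.2 (Or.inl hu)
    have hθ : |β * u.arg| < Real.pi := by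
      rw [abs_mul, abs_of_pos hβ0]
      calc β * |u.arg| < 2 * (Real.pi / 2) := by
            rcases abs_nonneg u.arg |>.eq_or_lt with h | h
            · rw [← h]; simp; positivity
            · exact mul_lt_mul'' hβ2 harg (by linarith) (by linarith)
        _ = Real.pi := by ring
    have hr : (0:ℝ) < ‖u‖ ^ β := Real.rpow_pos_of_pos (norm_pos_iff.mpr hu0) β
    rw [hpolar u hu0]
    constructor
    · rw [norm_mul, Complex.norm_real, Complex.norm_exp_ofReal_mul_I, mul_one,
        Real.norm_of_nonneg hr.le]
    · rw [Complex.exp_mul_I, Complex.arg_mul_cos_add_sin_mul_I hr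
        ⟨by cases abs_lt.1 hθ; linarith, by cases abs_lt.1 hθ; linarith⟩]
  have hmemS : ∀ u : ℂ, 0 < u.re → u ^ (β:ℂ) ∈ S := by
    intro u hu
    have hu0 : u ≠ 0 := by intro h; rw [h] at hu; simp at hu
    have harg : |u.arg| < Real.pi / 2 := Complex.abs_arg_lt_pi_div_two_iff.2 (Or.inl hu)
    obtain ⟨habs, harg'⟩ := hkey u hu
    refine ⟨?_, ?_⟩
    · intro h
      rw [h] at habs
      exact absurd habs.symm (ne_of_gt (by simpa using Real.rpow_pos_of_pos (norm_pos_iff.mpr hu0) β))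
    · rw [harg', abs_mul, abs_of_pos hβ0]
      calc β * |u.arg| ≤ β * (Real.pi / 2) := by
            exact mul_le_mul_of_nonneg_left harg.le hβ0.le
        _ < (1 + ε) * (Real.pi / 2) := by
            apply mul_lt_mul_of_pos_right _ (by positivity)
            simp [hβ_def]; linarith
        _ = c := by rw [hc_def]; ring
  -- openness of S
  have hSopen : IsOpen S := by
    rw [isOpen_iff_mem_nhds]
    rintro z ⟨hz0, hzarg⟩
    have hslit : z ∈ Complex.slitPlane := by
      rw [Complex.mem_slitPlane_iff]
      by_contra h
      push_neg at h
      obtain ⟨h1, h2⟩ := h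
      have hzre : z.re < 0 := by
        rcases h1.lt_or_eq with h | h
        · exact h
        · exact absurd (Complex.ext_iff.2 ⟨by simpa using h, by simpa using h2⟩) hz0
      have : z.arg = Real.pi := Complex.arg_eq_pi_iff.2 ⟨hzre, h2⟩
      rw [this, abs_of_pos hπ] at hzarg
      linarith
    have hcont : ContinuousAt (fun w : ℂ => |w.arg|) z :=
      continuous_abs.continuousAt.comp (Complex.continuousAt_arg hslit)
    have h1 : {w : ℂ | |w.arg| < c} ∈ nhds z :=
      hcont.preimage_mem_nhds (isOpen_Iio.mem_nhds hzarg)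
    have h2 : {w : ℂ | w ≠ 0} ∈ nhds z := isOpen_ne.mem_nhds hz0
    exact Filter.inter_mem h2 h1
  -- preconnectedness of S
  have hScon : IsPreconnected S := by
    have himg : S = (fun p : ℝ × ℝ => (p.1 : ℂ) * Complex.exp ((p.2 : ℂ) * I)) ''
        (Set.Ioi 0 ×ˢ Set.Ioo (-c) c) := by
      apply Set.eq_of_subset_of_subset
      · rintro z ⟨hz0, hzarg⟩
        refine ⟨(‖z‖, z.arg), ⟨norm_pos_iff.mpr hz0, abs_lt.1 hzarg⟩, ?_⟩
        exact Complex.norm_mul_exp_arg_mul_I z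
      · rintro z ⟨⟨r, θ⟩, ⟨hr, hθ⟩, rfl⟩
        simp only [Set.mem_Ioi, Set.mem_Ioo] at hr hθ
        dsimp only
        have hθπ : θ ∈ Set.Ioc (-Real.pi) Real.pi := ⟨by linarith [hθ.1], by linarith [hθ.2]⟩
        constructor
        · apply mul_ne_zero
          · exact_mod_cast ne_of_gt hr
          · exact Complex.exp_ne_zero _
        · rw [Complex.exp_mul_I, Complex.arg_mul_cos_add_sin_mul_I hr hθπ]
          exact abs_lt.2 hθ
    rw [himg]
    apply IsPreconnected.image
    · exact (isPreconnected_Ioi).prod (isPreconnected_Ioo)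
    · apply Continuous.continuousOn
      exact (Complex.continuous_ofReal.comp continuous_fst).mul
        (Complex.continuous_exp.comp ((Complex.continuous_ofReal.comp continuous_snd).mul
          continuous_const))
  -- the auxiliary function on the right half-plane
  set f : ℂ → ℂ := fun w => P ((w + 1) ^ (β:ℂ)) with hf_def
  have hre_pos : ∀ w : ℂ, 0 ≤ w.re → 0 < (w + 1).re := by
    intro w hw; simp [Complex.add_re]; linarith
  have hfbound : ∀ w : ℂ, 0 ≤ w.re →
      ‖f w‖ ≤ M * Real.exp (-a * ‖w + 1‖ ^ β) := by
    intro w hw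
    have h1 := hre_pos w hw
    obtain ⟨hz1, hz2⟩ := hmemS (w + 1) h1
    obtain ⟨habs, _⟩ := hkey (w + 1) h1
    have := hbound _ hz1 hz2
    rwa [habs] at this
  have hfboundM : ∀ w : ℂ, 0 ≤ w.re → ‖f w‖ ≤ M := by
    intro w hw
    refine (hfbound w hw).trans ?_
    have : Real.exp (-a * ‖w + 1‖ ^ β) ≤ 1 := by
      apply Real.exp_le_one_iff.2
      have : (0:ℝ) ≤ ‖w + 1‖ ^ β := Real.rpow_nonneg (norm_nonneg _) β
      nlinarith
    nlinarith
  -- differentiability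
  have hUopen : IsOpen {w : ℂ | (-1/2 : ℝ) < w.re} := by
    exact isOpen_lt continuous_const Complex.continuous_re
  have hfdiff : DifferentiableOn ℂ f {w : ℂ | (-1/2 : ℝ) < w.re} := by
    intro w hw
    apply DifferentiableAt.differentiableWithinAt
    have h1 : 0 < (w + 1).re := by simp [Complex.add_re]; simp at hw; linarith
    have hg : DifferentiableAt ℂ (fun w : ℂ => (w + 1) ^ (β:ℂ)) w := by
      apply DifferentiableAt.cpow
      · exact (differentiableAt_id.add_const 1)
      · exact differentiableAt_const _
      · exact Complex.mem_slitPlane_iff.2 (Or.inl h1)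
    exact (hP.differentiableAt (hSopen.mem_nhds (hmemS _ h1))).comp w hg
  have hsub : {z : ℂ | (0:ℝ) < z.re} ⊆ {w : ℂ | (-1/2 : ℝ) < w.re} := by
    intro z hz; simp at hz ⊢; linarith
  have hsubcl : closure {z : ℂ | (0:ℝ) < z.re} ⊆ {w : ℂ | (-1/2 : ℝ) < w.re} := by
    rw [Complex.closure_setOf_lt_re]
    intro z hz; simp at hz ⊢; linarith
  have hd : DiffContOnCl ℂ f {z : ℂ | 0 < z.re} :=
    ⟨hfdiff.mono hsub, (hfdiff.continuousOn).mono hsubcl⟩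
  -- growth bound
  have hexp : ∃ c' < (2:ℝ), ∃ B, f =O[Bornology.cobounded ℂ ⊓ Filter.principal {z : ℂ | 0 < z.re}]
      fun z => Real.exp (B * ‖z‖ ^ c') := by
    refine ⟨1, one_lt_two, 0, Asymptotics.IsBigO.of_bound M ?_⟩
    filter_upwards [Filter.mem_inf_of_right (Filter.mem_principal_self {z : ℂ | 0 < z.re})] with z hz
    simp only [zero_mul, Real.exp_zero, norm_one, mul_one]
    exact hfboundM z (le_of_lt hz)
  -- superexponential decay on the real axis
  have hre : Asymptotics.SuperpolynomialDecay Filter.atTop Real.exp fun x => ‖f ((x:ℝ) : ℂ)‖ := by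
    intro n
    apply squeeze_zero'
    · exact Filter.Eventually.of_forall fun x => by positivity
    · -- eventual bound by M * exp(n x - a (x+1)^β)
      have hev : ∀ᶠ x : ℝ in atTop,
          Real.exp x ^ n * ‖f ((x:ℝ) : ℂ)‖ ≤ M * Real.exp (-(x + 1)) := by
        have h1 : Tendsto (fun x : ℝ => (x + 1) ^ (ε/2)) atTop atTop :=
          (tendsto_rpow_atTop (by linarith : (0:ℝ) < ε/2)).comp (tendsto_atTop_add_const_right _ 1 tendsto_id)
        filter_upwards [eventually_ge_atTop (0:ℝ),
          h1.eventually_ge_atTop (((n:ℝ) + 1 + 1) / a)] with x hx0 hxe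
        have hx1 : (0:ℝ) < x + 1 := by linarith
        have habs : ‖(x:ℂ) + 1‖ = x + 1 := by
          rw [show ((x:ℂ) + 1) = ((x + 1 : ℝ) : ℂ) by push_cast; ring, Complex.norm_real, Real.norm_eq_abs]
          exact abs_of_pos hx1
        have hfb := hfbound ((x:ℝ) : ℂ) (by simp [hx0])
        rw [habs] at hfb
        have hrpow : (x + 1) ^ β = (x + 1) * (x + 1) ^ (ε/2) := by
          rw [hβ_def, Real.rpow_add hx1, Real.rpow_one]
        have hineq : (n:ℝ) * x - a * (x + 1) ^ β ≤ -(x + 1) := by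
          have h2 : a * (x + 1) ^ (ε/2) ≥ (n:ℝ) + 1 + 1 := by
            rw [ge_iff_le, mul_comm, ← div_le_iff₀ ha]
            exact hxe
          have h3 : a * (x + 1) ^ β = (x + 1) * (a * (x + 1) ^ (ε/2)) := by
            rw [hrpow]; ring
          nlinarith [mul_le_mul_of_nonneg_left h2 (le_of_lt hx1)]
        calc Real.exp x ^ n * ‖f ((x:ℝ) : ℂ)‖
            ≤ Real.exp x ^ n * (M * Real.exp (-a * (x + 1) ^ β)) := by
              apply mul_le_mul_of_nonneg_left hfb (by positivity)
          _ = M * Real.exp ((n:ℝ) * x - a * (x + 1) ^ β) := by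
              rw [← Real.exp_nat_mul, mul_left_comm, ← Real.exp_add]
              congr 1
              ring
          _ ≤ M * Real.exp (-(x + 1)) := by
              apply mul_le_mul_of_nonneg_left (Real.exp_le_exp.2 hineq) hM.le
      exact hev
    · have : Tendsto (fun x : ℝ => Real.exp (-(x + 1))) atTop (nhds 0) := by
        apply Real.tendsto_exp_atBot.comp
        apply tendsto_neg_atTop_atBot.comp
        exact tendsto_atTop_add_const_right _ 1 tendsto_id
      simpa using this.const_mul M
  -- bound on the imaginary axis
  have him : ∃ C, ∀ y : ℝ, ‖f ((y:ℝ) * I)‖ ≤ C :=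
    ⟨M, fun y => hfboundM _ (by simp)⟩
  have hzero : Set.EqOn f 0 {z : ℂ | 0 ≤ z.re} :=
    PhragmenLindelof.eq_zero_on_right_half_plane_of_superexponential_decay hd hexp hre him
  -- base point z₀ = 2 ^ β
  set z₀ : ℂ := (((2:ℝ) ^ β : ℝ) : ℂ) with hz₀_def
  have h2β : (0:ℝ) < (2:ℝ) ^ β := Real.rpow_pos_of_pos two_pos β
  have hz₀S : z₀ ∈ S := by
    constructor
    · simp only [hz₀_def, ne_eq, Complex.ofReal_eq_zero]
      exact ne_of_gt h2β
    · rw [hz₀_def, Complex.arg_ofReal_of_nonneg h2β.le]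
      simpa using hc_pos
  -- P vanishes near z₀
  have hz₀slit : z₀ ∈ Complex.slitPlane := by
    rw [Complex.mem_slitPlane_iff]
    left; simp [hz₀_def, h2β]
  have hβne : β ≠ 0 := ne_of_gt hβ0
  have hu0 : z₀ ^ (((1/β : ℝ)) : ℂ) = 2 := by
    rw [hz₀_def, ← Complex.ofReal_cpow h2β.le, ← Real.rpow_mul two_pos.le]
    rw [mul_one_div_cancel hβne, Real.rpow_one]
    norm_num
  have hev : ∀ᶠ z in nhds z₀, P z = 0 := by
    have hucont : ContinuousAt (fun z : ℂ => z ^ (((1/β : ℝ)) : ℂ)) z₀ :=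
      continuousAt_cpow_const hz₀slit
    have hevre : ∀ᶠ z in nhds z₀, 1 < (z ^ (((1/β : ℝ)) : ℂ)).re := by
      have : ContinuousAt (fun z : ℂ => (z ^ (((1/β : ℝ)) : ℂ)).re) z₀ :=
        Complex.continuous_re.continuousAt.comp hucont
      have h2 : (1:ℝ) < (z₀ ^ (((1/β : ℝ)) : ℂ)).re := by rw [hu0]; norm_num
      exact this.eventually_mem (isOpen_lt continuous_const continuous_id |>.mem_nhds h2) |>.mono
        (fun z hz => hz)
    filter_upwards [hevre] with z hz
    set u : ℂ := z ^ (((1/β : ℝ)) : ℂ) with hu_def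
    have hz0 : z ≠ 0 := by
      intro h
      rw [hu_def, h, Complex.zero_cpow (by exact_mod_cast one_div_ne_zero hβne)] at hz
      norm_num at hz
    have hcomp : u ^ (β:ℂ) = z := by
      have h1β : (0:ℝ) < 1/β := by positivity
      have h1βle : (1:ℝ)/β < 1 := by
        rw [div_lt_one hβ0]; exact hβ1
      have him' : (Complex.log z * (((1/β : ℝ)) : ℂ)).im = z.arg * (1/β) := by
        rw [Complex.mul_im]
        simp [Complex.log_im]
      have hlb : -Real.pi < (Complex.log z * (((1/β : ℝ)) : ℂ)).im := by
        rw [him']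
        have h1 := Complex.neg_pi_lt_arg z
        have h2 := Complex.arg_le_pi z
        nlinarith
      have hub : (Complex.log z * (((1/β : ℝ)) : ℂ)).im ≤ Real.pi := by
        rw [him']
        have h1 := Complex.neg_pi_lt_arg z
        have h2 := Complex.arg_le_pi z
        nlinarith
      have := (Complex.cpow_mul (x := z) (y := (((1/β : ℝ)) : ℂ)) (β:ℂ) hlb hub).symm
      rw [hu_def, this]
      have : (((1/β : ℝ)) : ℂ) * (β:ℂ) = 1 := by
        rw [← Complex.ofReal_mul, one_div_mul_cancel hβne, Complex.ofReal_one]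
      rw [this, Complex.cpow_one]
    have hw : (0:ℝ) ≤ (u - 1).re := by
      simp [Complex.sub_re]; linarith
    have := hzero (Set.mem_setOf.2 hw)
    simp only [hf_def, Pi.zero_apply] at this
    rw [sub_add_cancel, hcomp] at this
    exact this
  have hEq : Set.EqOn P 0 S :=
    (hP.analyticOnNhd hSopen).eqOn_zero_of_preconnected_of_eventuallyEq_zero hScon hz₀S hev
  intro z hz1 hz2
  exact hEq ⟨hz1, hz2⟩
end

section
/- Let P be analytic on the open right half-plane {z ∈ ℂ : Re z > 0}. If there exist constants M > 0 and a > 0 such that |P(z)| ≤ M e^{-a|z|} for all z with Re z > 0, then P(z) = 0 for all z with Re z > 0. -/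
open Set Filter Complex

/-- Key Phragmén–Lindelöf step: for every `c > 1` and real `x > 0`,
`|P x| ≤ M * exp (-(c * a * x))`. -/
lemma exp_decay_key
    (P : ℂ → ℂ)
    (hP : DifferentiableOn ℂ P {z : ℂ | 0 < z.re})
    (M a : ℝ) (hM : 0 < M) (ha : 0 < a)
    (hbound : ∀ z : ℂ, 0 < z.re →
      ‖P z‖ ≤ M * Real.exp (-a * ‖z‖))
    (c : ℝ) (hc : 1 < c) (x : ℝ) (hx : 0 < x) :
    ‖P x‖ ≤ M * Real.exp (-(c * a * x)) := by
  have hc0 : 0 < c := by linarith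
  have hinv0 : 0 < c⁻¹ := by positivity
  have hinv1 : c⁻¹ < 1 := by
    rw [inv_lt_one_iff₀]; right; exact hc
  set α := Real.arccos c⁻¹ with hαdef
  have hα0 : 0 < α := Real.arccos_pos.2 hinv1
  have hα2 : α < Real.pi / 2 := Real.arccos_lt_pi_div_two.2 hinv0
  have hcosα : Real.cos α = c⁻¹ := Real.cos_arccos (by linarith) (by linarith)
  set g : ℂ → ℂ := fun w => P (Complex.exp w) * Complex.exp ((c * a : ℝ) * Complex.exp w)
    with hgdef
  -- norm formula
  have hgnorm : ∀ w : ℂ,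
      ‖g w‖ = ‖P (Complex.exp w)‖ *
        Real.exp (c * a * (Real.exp w.re * Real.cos w.im)) := by
    intro w
    have h1 : ((c * a : ℝ) * Complex.exp w).re = c * a * (Real.exp w.re * Real.cos w.im) := by
      simp [Complex.exp_re]
    rw [hgdef]
    simp only [norm_mul, map_mul, Complex.norm_exp, h1]
  -- positivity of real part of exp w on the closed strip
  have hre_pos : ∀ w : ℂ, w.im ∈ Icc (-α) α → 0 < (Complex.exp w).re := by
    intro w hw
    rw [Complex.exp_re]
    have h1 : Real.cos α ≤ Real.cos w.im := by
      have : |w.im| ≤ α := abs_le.2 ⟨hw.1, hw.2⟩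
      calc Real.cos α ≤ Real.cos |w.im| := by
            apply Real.cos_le_cos_of_nonneg_of_le_pi (abs_nonneg _) (by linarith [Real.pi_pos]) this
        _ = Real.cos w.im := by rw [Real.cos_abs]
    have : 0 < Real.cos w.im := lt_of_lt_of_le (by rw [hcosα]; exact hinv0) h1
    positivity
  -- boundary bound
  have hboundary : ∀ w : ℂ, w.im = α ∨ w.im = -α → ‖g w‖ ≤ M := by
    intro w hw
    have hcosw : Real.cos w.im = c⁻¹ := by
      rcases hw with h | h <;> rw [h] <;> simp [hcosα]
    have hmem : w.im ∈ Icc (-α) α := by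
      rcases hw with h | h <;> rw [h] <;> constructor <;> linarith
    have hpos := hre_pos w hmem
    have hPb := hbound _ hpos
    have habs : ‖Complex.exp w‖ = Real.exp w.re := Complex.norm_exp w
    rw [hgnorm, hcosw]
    have : c * a * (Real.exp w.re * c⁻¹) = a * Real.exp w.re := by
      field_simp
    rw [this]
    calc ‖P (Complex.exp w)‖ * Real.exp (a * Real.exp w.re)
        ≤ (M * Real.exp (-a * Real.exp w.re)) * Real.exp (a * Real.exp w.re) := by
          apply mul_le_mul_of_nonneg_right _ (Real.exp_nonneg _)
          rw [← habs]; exact hPb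
      _ = M := by rw [mul_assoc, ← Real.exp_add]; simp
  -- differentiability on the closed strip
  have hdiff : DiffContOnCl ℂ g (Complex.im ⁻¹' Ioo (-α) α) := by
    apply DifferentiableOn.diffContOnCl
    have hsub : closure (Complex.im ⁻¹' Ioo (-α) α) ⊆ Complex.im ⁻¹' Icc (-α) α := by
      apply closure_minimal
      · exact fun w hw => ⟨(hw : w.im ∈ Ioo (-α) α).1.le, (hw : w.im ∈ Ioo (-α) α).2.le⟩
      · exact IsClosed.preimage Complex.continuous_im isClosed_Icc
    apply DifferentiableOn.mono _ hsub
    apply DifferentiableOn.mul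
    · apply hP.comp Complex.differentiable_exp.differentiableOn
      intro w hw
      exact hre_pos w hw
    · exact (Complex.differentiable_exp.comp
        ((differentiable_const _).mul Complex.differentiable_exp)).differentiableOn
  -- growth condition
  have hgrowth : ∃ k < Real.pi / (α - (-α)), ∃ B, g =O[Filter.comap (_root_.abs ∘ Complex.re)
      Filter.atTop ⊓ Filter.principal (Complex.im ⁻¹' Ioo (-α) α)]
      fun w => Real.exp (B * Real.exp (k * |w.re|)) := by
    refine ⟨1, ?_, c * a, ?_⟩
    · rw [sub_neg_eq_add, ← two_mul, lt_div_iff₀ (by positivity)]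
      linarith
    · apply Asymptotics.IsBigO.of_bound M
      rw [Filter.eventually_inf_principal]
      apply Filter.Eventually.of_forall
      intro w hw
      have hwmem : w.im ∈ Icc (-α) α := ⟨(hw : w.im ∈ Ioo (-α) α).1.le, (hw : w.im ∈ Ioo (-α) α).2.le⟩
      have hpos := hre_pos w hwmem
      have hP1 : ‖P (Complex.exp w)‖ ≤ M := by
        calc ‖P (Complex.exp w)‖ ≤ M * Real.exp (-a * ‖Complex.exp w‖) :=
              hbound _ hpos
          _ ≤ M * 1 := by
              apply mul_le_mul_of_nonneg_left _ hM.le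
              rw [Real.exp_le_one_iff]
              have : 0 ≤ ‖Complex.exp w‖ := norm_nonneg _
              nlinarith
          _ = M := mul_one M
      rw [hgnorm]
      have h2 : Real.exp w.re * Real.cos w.im ≤ Real.exp |w.re| := by
        calc Real.exp w.re * Real.cos w.im ≤ Real.exp w.re * 1 := by
              apply mul_le_mul_of_nonneg_left (Real.cos_le_one _) (Real.exp_nonneg _)
          _ = Real.exp w.re := mul_one _
          _ ≤ Real.exp |w.re| := Real.exp_le_exp.2 (le_abs_self _)
      have h3 : c * a * (Real.exp w.re * Real.cos w.im) ≤ c * a * Real.exp (1 * |w.re|) := by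
        rw [one_mul]
        exact mul_le_mul_of_nonneg_left h2 (by positivity)
      have h4 : Real.exp (c * a * (Real.exp w.re * Real.cos w.im)) ≤
          Real.exp (c * a * Real.exp (1 * |w.re|)) := Real.exp_le_exp.2 h3
      calc ‖P (Complex.exp w)‖ * Real.exp (c * a * (Real.exp w.re * Real.cos w.im))
          ≤ M * Real.exp (c * a * Real.exp (1 * |w.re|)) :=
            mul_le_mul hP1 h4 (Real.exp_nonneg _) hM.le
        _ = M * ‖Real.exp (c * a * Real.exp (1 * |w.re|))‖ := by
            rw [Real.norm_eq_abs, abs_of_pos (Real.exp_pos _)]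
  -- apply Phragmén–Lindelöf
  have hmain : ‖g ((Real.log x : ℝ) : ℂ)‖ ≤ M := by
    apply PhragmenLindelof.horizontal_strip hdiff hgrowth
      (fun w hw => hboundary w (Or.inr hw)) (fun w hw => hboundary w (Or.inl hw))
    · simp [hα0.le]
    · simp [hα0.le]
  -- unpack
  have hexplog : Complex.exp ((Real.log x : ℝ) : ℂ) = (x : ℂ) := by
    rw [← Complex.ofReal_exp, Real.exp_log hx]
  rw [hgnorm, Complex.ofReal_im, Complex.ofReal_re, Real.cos_zero, mul_one,
    Real.exp_log hx, hexplog] at hmain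
  rw [Real.exp_neg, ← div_eq_mul_inv, le_div_iff₀ (Real.exp_pos _)]
  exact hmain

/-- **Lemma 2.** Let `P` be analytic on the open right half-plane.
If `|P(z)| ≤ M e^{-a|z|}` for all `z` with `Re z > 0`, where `M, a > 0`,
then `P ≡ 0` on the right half-plane. -/
theorem exp_decay_on_right_halfPlane_eq_zero
    (P : ℂ → ℂ)
    (hP : DifferentiableOn ℂ P {z : ℂ | 0 < z.re})
    (M a : ℝ) (hM : 0 < M) (ha : 0 < a)
    (hbound : ∀ z : ℂ, 0 < z.re →
      ‖P z‖ ≤ M * Real.exp (-a * ‖z‖)) :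
    ∀ z : ℂ, 0 < z.re → P z = 0 := by
  -- First: P vanishes on the positive real axis
  have hzero : ∀ x : ℝ, 0 < x → P x = 0 := by
    intro x hx
    have hkey : ∀ c : ℝ, 1 < c → ‖P x‖ ≤ M * Real.exp (-(c * a * x)) :=
      fun c hc => exp_decay_key P hP M a hM ha hbound c hc x hx
    have htend : Filter.Tendsto (fun c : ℝ => M * Real.exp (-(c * a * x)))
        Filter.atTop (nhds 0) := by
      have h1 : Filter.Tendsto (fun c : ℝ => -(c * a * x)) Filter.atTop Filter.atBot := by
        have h := Filter.tendsto_id.atTop_mul_const (show (0:ℝ) < a * x by positivity)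
        have h2 := Filter.tendsto_neg_atTop_atBot.comp h
        simpa [Function.comp_def, mul_assoc] using h2
      have h2 : Filter.Tendsto (fun c : ℝ => Real.exp (-(c * a * x)))
          Filter.atTop (nhds 0) := Real.tendsto_exp_atBot.comp h1
      simpa using tendsto_const_nhds.mul h2
    have hle : ‖P x‖ ≤ 0 := by
      apply ge_of_tendsto htend
      filter_upwards [Filter.eventually_gt_atTop 1] with c hc
      exact hkey c hc
    have := le_antisymm hle (norm_nonneg _)
    exact (norm_eq_zero.1 this)
  -- Identity theorem
  have hopen : IsOpen {z : ℂ | 0 < z.re} := isOpen_lt continuous_const Complex.continuous_re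
  have hanalytic : AnalyticOnNhd ℂ P {z : ℂ | 0 < z.re} := hP.analyticOnNhd hopen
  have hconn : IsPreconnected {z : ℂ | 0 < z.re} :=
    (convex_halfSpace_re_gt 0).isPreconnected
  have hmem : (1 : ℂ) ∈ {z : ℂ | 0 < z.re} := by simp
  have hfreq : ∃ᶠ z in nhdsWithin (1 : ℂ) {(1:ℂ)}ᶜ, P z = 0 := by
    have htend : Filter.Tendsto (fun n : ℕ => ((1 + ((n:ℝ)+1)⁻¹ : ℝ) : ℂ))
        Filter.atTop (nhdsWithin (1 : ℂ) {(1:ℂ)}ᶜ) := by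
      rw [tendsto_nhdsWithin_iff]
      constructor
      · have h0 : Filter.Tendsto (fun n : ℕ => (1 + ((n:ℝ)+1)⁻¹ : ℝ))
            Filter.atTop (nhds 1) := by
          have h1 := tendsto_one_div_add_atTop_nhds_zero_nat (𝕜 := ℝ)
          have h : Filter.Tendsto (fun n : ℕ => (1 + 1 / ((n:ℝ)+1) : ℝ))
              Filter.atTop (nhds (1 + 0)) := (tendsto_const_nhds (x := (1:ℝ))).add h1
          simpa [one_div] using h
        have := (Complex.continuous_ofReal.tendsto (1:ℝ)).comp h0
        simpa [Function.comp_def] using this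
      · apply Filter.Eventually.of_forall
        intro n
        simp only [Set.mem_compl_iff, Set.mem_singleton_iff]
        intro h
        have : (1 + ((n:ℝ)+1)⁻¹ : ℝ) = 1 := by exact_mod_cast h
        have hpos : (0:ℝ) < ((n:ℝ)+1)⁻¹ := by positivity
        linarith
    apply htend.frequently
    apply Filter.Frequently.of_forall
    intro n
    exact hzero _ (by positivity)
  have := hanalytic.eqOn_zero_of_preconnected_of_frequently_eq_zero hconn hmem hfreq
  intro z hz
  exact this hz
end

section
/- Let P be analytic on the open right half-plane {z ∈ ℂ : Re z > 0}, continuous on the closed right half-plane, and suppose |P(z)| ≤ M e^{-a|z|} for all z with Re z ≥ 0, where M, a > 0. Then for every complex number t with |Im t| < a, the (absolutely convergent) integral F(t) = (1/(2π)) ∫_{-∞}^{∞} P(iy) e^{ity} dy equals 0. -/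
open Complex Set Filter Asymptotics MeasureTheory
open scoped Topology

-- continuity of z * log z on the closed right half plane
lemma contOn_mul_log : ContinuousOn (fun z : ℂ => z * Complex.log z) {z : ℂ | 0 ≤ z.re} := by
  intro z hz
  rcases eq_or_ne z 0 with rfl | hz0
  · -- continuity within at 0
    have h0 : (0:ℂ) * Complex.log 0 = 0 := by simp
    rw [ContinuousWithinAt, h0]
    have hb : ∀ w : ℂ, ‖w * Complex.log w‖ ≤
        |‖w‖ * Real.log (‖w‖)| + Real.pi * ‖w‖ := by
      intro w
      rcases eq_or_ne w 0 with rfl | hw0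
      · simp [Real.pi_nonneg]
      · have h1 : ‖Complex.log w‖ ≤ |Real.log (‖w‖)| + Real.pi := by
          refine (Complex.norm_le_abs_re_add_abs_im _).trans ?_
          rw [Complex.log_re, Complex.log_im]
          exact add_le_add le_rfl (Complex.abs_arg_le_pi w)
        calc ‖w * Complex.log w‖ = ‖w‖ * ‖Complex.log w‖ := by
              simp
          _ ≤ ‖w‖ * (|Real.log (‖w‖)| + Real.pi) := by
              exact mul_le_mul_of_nonneg_left h1 (norm_nonneg w)
          _ = |‖w‖ * Real.log (‖w‖)| + Real.pi * ‖w‖ := by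
              rw [abs_mul, _root_.abs_of_nonneg (norm_nonneg w)]; ring
    have hu : Tendsto (fun w : ℂ => |‖w‖ * Real.log (‖w‖)|
        + Real.pi * ‖w‖) (𝓝[{z : ℂ | 0 ≤ z.re}] 0) (𝓝 0) := by
      have hc : Continuous (fun w : ℂ => |‖w‖ * Real.log (‖w‖)|
          + Real.pi * ‖w‖) := by
        exact ((Real.continuous_mul_log.comp continuous_norm).abs).add
          (continuous_const.mul continuous_norm)
      have h2 := (hc.tendsto 0).mono_left
        (nhdsWithin_le_nhds (s := {z : ℂ | 0 ≤ z.re}))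
      simpa using h2
    exact squeeze_zero_norm (fun w => hb w) hu
  · have hslit : z ∈ Complex.slitPlane := by
      rw [Complex.mem_slitPlane_iff]
      rcases lt_or_eq_of_le (show (0:ℝ) ≤ z.re from hz) with h | h
      · exact Or.inl h
      · right
        intro him
        exact hz0 (Complex.ext (by simpa using h.symm) him)
    exact (continuousAt_id.mul (continuousAt_clog hslit)).continuousWithinAt

lemma P_eq_zero
    (P : ℂ → ℂ)
    (hP : DifferentiableOn ℂ P {z : ℂ | 0 < z.re})
    (hPc : ContinuousOn P {z : ℂ | 0 ≤ z.re})
    (M a : ℝ) (hM : 0 < M) (ha : 0 < a)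
    (hbound : ∀ z : ℂ, 0 ≤ z.re →
      ‖P z‖ ≤ M * Real.exp (-a * ‖z‖)) :
    ∀ z : ℂ, 0 ≤ z.re → P z = 0 := by
  set ε : ℝ := a / Real.pi with hε
  have hεpos : 0 < ε := div_pos ha Real.pi_pos
  set f : ℂ → ℂ := fun z => Complex.exp (-(ε : ℂ) * (z * Complex.log z)) * P z with hf
  -- norm formula
  have hnorm : ∀ z : ℂ, ‖f z‖ =
      Real.exp ((-(ε : ℂ) * (z * Complex.log z)).re) * ‖P z‖ := by
    intro z
    simp [hf, Complex.norm_exp]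
  have hopen : IsOpen {z : ℂ | 0 < z.re} := isOpen_lt continuous_const Complex.continuous_re
  -- differentiability
  have hd : DiffContOnCl ℂ f {z : ℂ | 0 < z.re} := by
    constructor
    · intro z hz
      have hslit : z ∈ Complex.slitPlane := Or.inl hz
      have h1 : DifferentiableAt ℂ (fun z : ℂ => Complex.exp (-(ε : ℂ) * (z * Complex.log z))) z :=
        (((differentiableAt_id.mul (differentiableAt_id.clog hslit)).const_mul _)).cexp
      exact (h1.mul ((hP z hz).differentiableAt (hopen.mem_nhds hz))).differentiableWithinAt
    · rw [closure_setOf_lt_re]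
      exact (Complex.continuous_exp.comp_continuousOn
        (contOn_mul_log.const_smul (-(ε:ℂ)))).mul hPc
  -- growth estimate
  have hexp : ∃ c < (2 : ℝ), ∃ B,
      f =O[Bornology.cobounded ℂ ⊓ Filter.principal {z : ℂ | 0 < z.re}]
        fun z => Real.exp (B * ‖z‖ ^ c) := by
    refine ⟨3/2, by norm_num, ε * (2 + Real.pi), ?_⟩
    rw [Asymptotics.isBigO_iff]
    refine ⟨M, ?_⟩
    have hev1 : ∀ᶠ z : ℂ in Bornology.cobounded ℂ ⊓ Filter.principal {z : ℂ | 0 < z.re},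
        (1:ℝ) ≤ ‖z‖ :=
      (eventually_cobounded_le_norm (1:ℝ)).filter_mono inf_le_left
    have hev2 : ∀ᶠ z : ℂ in Bornology.cobounded ℂ ⊓ Filter.principal {z : ℂ | 0 < z.re},
        z ∈ {z : ℂ | 0 < z.re} :=
      Filter.eventually_inf_principal.2 (Filter.Eventually.of_forall fun z hz => hz)
    filter_upwards [hev1, hev2] with z hz1 hzre0
    have habs : (1:ℝ) ≤ ‖z‖ := hz1
    have habs0 : (0:ℝ) < ‖z‖ := lt_of_lt_of_le one_pos habs
    have hre_le : (-(ε : ℂ) * (z * Complex.log z)).re ≤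
        ε * (‖z‖ * ‖Complex.log z‖) := by
      calc (-(ε : ℂ) * (z * Complex.log z)).re
          ≤ ‖-(ε : ℂ) * (z * Complex.log z)‖ := Complex.re_le_norm _
        _ = ε * (‖z‖ * ‖Complex.log z‖) := by
            rw [norm_mul, norm_mul, norm_neg, Complex.norm_real, Real.norm_eq_abs,
              _root_.abs_of_pos hεpos]
    have hlog : ‖Complex.log z‖ ≤ 2 * Real.sqrt (‖z‖) + Real.pi := by
      refine (Complex.norm_le_abs_re_add_abs_im _).trans ?_
      rw [Complex.log_re, Complex.log_im]
      refine add_le_add ?_ (Complex.abs_arg_le_pi z)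
      rw [_root_.abs_of_nonneg (Real.log_nonneg habs)]
      have hs : 0 < Real.sqrt (‖z‖) := Real.sqrt_pos.2 habs0
      calc Real.log (‖z‖) = 2 * Real.log (Real.sqrt (‖z‖)) := by
            rw [Real.log_sqrt habs0.le]; ring
        _ ≤ 2 * Real.sqrt (‖z‖) := by
            have := Real.log_le_sub_one_of_pos hs
            nlinarith
    have hkey : ε * (‖z‖ * ‖Complex.log z‖) ≤
        ε * (2 + Real.pi) * ‖z‖ ^ ((3:ℝ)/2) := by
      have h1 : ‖z‖ * ‖Complex.log z‖ ≤
          ‖z‖ * (2 * Real.sqrt (‖z‖) + Real.pi) :=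
        mul_le_mul_of_nonneg_left hlog habs0.le
      have h2 : ‖z‖ * Real.sqrt (‖z‖) = ‖z‖ ^ ((3:ℝ)/2) := by
        rw [Real.sqrt_eq_rpow]
        nth_rewrite 1 [← Real.rpow_one (‖z‖)]
        rw [← Real.rpow_add habs0]
        norm_num
      have h3 : ‖z‖ ≤ ‖z‖ ^ ((3:ℝ)/2) := by
        calc ‖z‖ = ‖z‖ ^ (1:ℝ) := (Real.rpow_one _).symm
          _ ≤ ‖z‖ ^ ((3:ℝ)/2) :=
            Real.rpow_le_rpow_of_exponent_le habs (by norm_num)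
      calc ε * (‖z‖ * ‖Complex.log z‖)
          ≤ ε * (‖z‖ * (2 * Real.sqrt (‖z‖) + Real.pi)) :=
            mul_le_mul_of_nonneg_left h1 hεpos.le
        _ = ε * (2 * (‖z‖ * Real.sqrt (‖z‖))
              + Real.pi * ‖z‖) := by ring
        _ ≤ ε * (2 * ‖z‖ ^ ((3:ℝ)/2) + Real.pi * ‖z‖ ^ ((3:ℝ)/2)) := by
            rw [h2]
            have := mul_le_mul_of_nonneg_left h3 Real.pi_nonneg
            nlinarith
        _ = ε * (2 + Real.pi) * ‖z‖ ^ ((3:ℝ)/2) := by ring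
    rw [hnorm]
    have hP1 : ‖P z‖ ≤ M := by
      refine (hbound z (le_of_lt hzre0)).trans ?_
      have : Real.exp (-a * ‖z‖) ≤ 1 := by
        rw [Real.exp_le_one_iff]
        nlinarith [norm_nonneg z]
      nlinarith
    calc Real.exp ((-(ε : ℂ) * (z * Complex.log z)).re) * ‖P z‖
        ≤ Real.exp (ε * (2 + Real.pi) * ‖z‖ ^ ((3:ℝ)/2)) * M := by
          refine mul_le_mul (Real.exp_le_exp.2 (hre_le.trans hkey)) hP1
            (norm_nonneg _) (Real.exp_pos _).le
      _ = M * ‖Real.exp (ε * (2 + Real.pi) * ‖z‖ ^ ((3:ℝ)/2))‖ := by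
          rw [Real.norm_eq_abs, Real.abs_exp]; ring
  -- superexponential decay on the real axis
  have hre : Asymptotics.SuperpolynomialDecay Filter.atTop Real.exp
      (fun x : ℝ => ‖f (x : ℂ)‖) := by
    intro n
    have hb : ∀ᶠ x : ℝ in Filter.atTop,
        Real.exp x ^ n * ‖f (x : ℂ)‖ ≤ M * Real.exp (x * ((n : ℝ) - ε * Real.log x)) := by
      filter_upwards [Filter.eventually_ge_atTop (1:ℝ)] with x hx
      have hx0 : (0:ℝ) < x := lt_of_lt_of_le one_pos hx
      have hlogx : Complex.log (x : ℂ) = ((Real.log x : ℝ) : ℂ) :=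
        (Complex.ofReal_log hx0.le).symm
      have hre1 : (-(ε : ℂ) * ((x : ℂ) * Complex.log (x : ℂ))).re = -(ε * (x * Real.log x)) := by
        rw [hlogx, ← Complex.ofReal_neg, ← Complex.ofReal_mul, ← Complex.ofReal_mul,
          Complex.ofReal_re]
        ring
      have habsx : ‖(x : ℂ)‖ = x := by
        rw [Complex.norm_real, Real.norm_eq_abs, _root_.abs_of_pos hx0]
      have hfx : ‖f (x : ℂ)‖ ≤ M * Real.exp (-(ε * (x * Real.log x))) := by
        rw [hnorm, hre1]
        have h1 : ‖P (x : ℂ)‖ ≤ M := by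
          refine (hbound _ (by simp [hx0.le])).trans ?_
          have : Real.exp (-a * ‖(x : ℂ)‖) ≤ 1 := by
            rw [Real.exp_le_one_iff, habsx]
            nlinarith
          nlinarith
        calc Real.exp (-(ε * (x * Real.log x))) * ‖P (x : ℂ)‖
            ≤ Real.exp (-(ε * (x * Real.log x))) * M :=
              mul_le_mul_of_nonneg_left h1 (Real.exp_pos _).le
          _ = M * Real.exp (-(ε * (x * Real.log x))) := mul_comm _ _
      calc Real.exp x ^ n * ‖f (x : ℂ)‖
          ≤ Real.exp x ^ n * (M * Real.exp (-(ε * (x * Real.log x)))) :=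
            mul_le_mul_of_nonneg_left hfx (pow_nonneg (Real.exp_pos _).le n)
        _ = M * (Real.exp ((n : ℝ) * x) * Real.exp (-(ε * (x * Real.log x)))) := by
            rw [← Real.exp_nat_mul]; ring
        _ = M * Real.exp ((n : ℝ) * x + -(ε * (x * Real.log x))) := by
            rw [← Real.exp_add]
        _ = M * Real.exp (x * ((n : ℝ) - ε * Real.log x)) := by ring_nf
    have hlim : Filter.Tendsto (fun x : ℝ => M * Real.exp (x * ((n : ℝ) - ε * Real.log x)))
        Filter.atTop (nhds 0) := by
      rw [show (0:ℝ) = M * 0 by ring]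
      refine Filter.Tendsto.const_mul M ?_
      refine Real.tendsto_exp_atBot.comp ?_
      refine Filter.Tendsto.atTop_mul_atBot₀ Filter.tendsto_id ?_
      refine Filter.tendsto_atBot_add_const_left _ _ ?_
      refine Filter.tendsto_neg_atBot_iff.2 ?_
      exact (Real.tendsto_log_atTop.const_mul_atTop hεpos)
    have hge : ∀ᶠ x : ℝ in Filter.atTop, 0 ≤ Real.exp x ^ n * ‖f (x : ℂ)‖ :=
      Filter.Eventually.of_forall fun x =>
        mul_nonneg (pow_nonneg (Real.exp_pos _).le n) (norm_nonneg _)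
    exact squeeze_zero' hge hb hlim
  -- boundedness on the imaginary axis
  have him : ∃ C, ∀ x : ℝ, ‖f ((x : ℂ) * Complex.I)‖ ≤ C := by
    refine ⟨M, fun x => ?_⟩
    have habs : ‖(x : ℂ) * Complex.I‖ = |x| := by
      simp
    have hre1 : (-(ε : ℂ) * (((x : ℂ) * Complex.I) * Complex.log ((x : ℂ) * Complex.I))).re
        = ε * (x * ((Complex.log ((x : ℂ) * Complex.I)).im)) := by
      rw [show -(ε : ℂ) * (((x : ℂ) * Complex.I) * Complex.log ((x : ℂ) * Complex.I))
        = ((-ε : ℝ) : ℂ) * (((x : ℂ) * Complex.I) * Complex.log ((x : ℂ) * Complex.I)) by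
          push_cast; ring]
      rw [Complex.re_ofReal_mul, Complex.mul_re]
      simp
    have hre2 : (-(ε : ℂ) * (((x : ℂ) * Complex.I) * Complex.log ((x : ℂ) * Complex.I))).re
        ≤ a * |x| := by
      rw [hre1]
      have harg : |(Complex.log ((x : ℂ) * Complex.I)).im| ≤ Real.pi := by
        rw [Complex.log_im]; exact Complex.abs_arg_le_pi _
      calc ε * (x * (Complex.log ((x : ℂ) * Complex.I)).im)
          ≤ ε * (|x| * Real.pi) := by
            refine mul_le_mul_of_nonneg_left ?_ hεpos.le
            calc x * (Complex.log ((x : ℂ) * Complex.I)).im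
                ≤ |x * (Complex.log ((x : ℂ) * Complex.I)).im| := le_abs_self _
              _ = |x| * |(Complex.log ((x : ℂ) * Complex.I)).im| := abs_mul _ _
              _ ≤ |x| * Real.pi := mul_le_mul_of_nonneg_left harg (abs_nonneg x)
        _ = ε * Real.pi * |x| := by ring
        _ = a * |x| := by
            rw [hε, div_mul_cancel₀ _ (ne_of_gt Real.pi_pos)]
    rw [hnorm]
    calc Real.exp ((-(ε : ℂ) * (((x : ℂ) * Complex.I) * Complex.log ((x : ℂ) * Complex.I))).re)
          * ‖P ((x : ℂ) * Complex.I)‖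
        ≤ Real.exp (a * |x|) * (M * Real.exp (-a * |x|)) := by
          refine mul_le_mul (Real.exp_le_exp.2 hre2) ?_ (norm_nonneg _) (Real.exp_pos _).le
          have := hbound ((x : ℂ) * Complex.I) (by simp)
          rwa [habs] at this
      _ = M * (Real.exp (a * |x|) * Real.exp (-a * |x|)) := by ring
      _ = M * Real.exp (a * |x| + -a * |x|) := by rw [← Real.exp_add]
      _ = M := by norm_num
  -- apply Phragmen-Lindelof
  have hzero := PhragmenLindelof.eq_zero_on_right_half_plane_of_superexponential_decay
    hd hexp hre him
  intro z hz
  have hfz : f z = 0 := hzero hz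
  rw [hf] at hfz
  simp only at hfz
  rcases mul_eq_zero.1 hfz with h | h
  · exact absurd h (Complex.exp_ne_zero _)
  · exact h

/-- **Lemma 2, third proof (vanishing of the Fourier–Laplace transform).**
Let `P` be analytic on the open right half-plane, continuous on the closed
right half-plane, and satisfy `|P(z)| ≤ M e^{-a|z|}` for `Re z ≥ 0`. Then for
every complex `t` with `|Im t| < a`, the absolutely convergent integral
`F(t) = (1/(2π)) ∫_{-∞}^{∞} P(iy) e^{ity} dy` vanishes. -/
theorem fourierLaplace_transform_boundary_eq_zero
    (P : ℂ → ℂ)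
    (hP : DifferentiableOn ℂ P {z : ℂ | 0 < z.re})
    (hPc : ContinuousOn P {z : ℂ | 0 ≤ z.re})
    (M a : ℝ) (hM : 0 < M) (ha : 0 < a)
    (hbound : ∀ z : ℂ, 0 ≤ z.re →
      ‖P z‖ ≤ M * Real.exp (-a * ‖z‖))
    (t : ℂ) (ht : |t.im| < a) :
    MeasureTheory.Integrable
      (fun y : ℝ => P (Complex.I * y) * Complex.exp (Complex.I * t * y)) ∧
    (1 / (2 * Real.pi) : ℂ) *
      ∫ y : ℝ, P (Complex.I * y) * Complex.exp (Complex.I * t * y) = 0 := by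
  have hP0 := P_eq_zero P hP hPc M a hM ha hbound
  have hzero : (fun y : ℝ => P (Complex.I * y) * Complex.exp (Complex.I * t * y))
      = fun _ : ℝ => (0 : ℂ) := by
    funext y
    rw [hP0 (Complex.I * y) (by simp), zero_mul]
  rw [hzero]
  refine ⟨MeasureTheory.integrable_zero _ _ _, ?_⟩
  simp
end

section
/- Let 0 < δ < π/2, let φ be analytic on the sector S(-π/2+δ, π/2-δ) with |φ(z)| ≤ M for all z in this sector, and define P(z) = φ(z) e^{-z} / z. Then for every integer n ≥ 0 and every z ∈ S(-π/2+δ, π/2-δ), |P(z)| ≤ M · n! / ((sin δ)^n |z|^{n+1}). In particular, P admits the Gevrey estimates of order 1 with all coefficients p_k = 0, constant M, and a = sin δ on the sector S(-π/2+δ, π/2-δ). -/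
/-- **Non-uniqueness example for sectors of opening less than `π`.**
Let `0 < δ < π/2`, let `φ` be analytic and bounded by `M` on the sector
`S(-π/2+δ, π/2-δ)`, and set `P(z) = φ(z) e^{-z} / z`. Then `P` satisfies the
Gevrey estimates of order 1 with all coefficients zero, constant `M` and
`a = sin δ`: for every `n ≥ 0` and every `z` in the sector,
`|P(z)| ≤ M n! / ((sin δ)^n |z|^{n+1})`. -/
theorem gevrey_estimates_of_exp_times_bounded
    (δ : ℝ) (hδ0 : 0 < δ) (hδ1 : δ < Real.pi / 2)
    (M : ℝ) (hM : 0 < M)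
    (φ : ℂ → ℂ)
    (hφ : DifferentiableOn ℂ φ {z : ℂ | z ≠ 0 ∧ |z.arg| < Real.pi / 2 - δ})
    (hφM : ∀ z : ℂ, z ≠ 0 → |z.arg| < Real.pi / 2 - δ → ‖φ z‖ ≤ M)
    (P : ℂ → ℂ) (hP : ∀ z : ℂ, P z = φ z * Complex.exp (-z) / z) :
    ∀ (n : ℕ) (z : ℂ), z ≠ 0 → |z.arg| < Real.pi / 2 - δ →
      ‖P z‖ ≤
        M * n.factorial / (Real.sin δ ^ n * ‖z‖ ^ (n + 1)) := by
  intro n z hz harg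
  have habs : 0 < ‖z‖ := norm_pos_iff.mpr hz
  have hsin : 0 < Real.sin δ := Real.sin_pos_of_pos_of_lt_pi hδ0 (by linarith [Real.pi_pos])
  -- cos (arg z) ≥ sin δ
  have hcos : Real.sin δ ≤ Real.cos z.arg := by
    have h1 : Real.cos (Real.pi / 2 - δ) ≤ Real.cos |z.arg| := by
      apply Real.cos_le_cos_of_nonneg_of_le_pi (abs_nonneg _) (by linarith [Real.pi_pos])
      linarith
    rwa [Real.cos_pi_div_two_sub, Real.cos_abs] at h1
  have hre : Real.sin δ * ‖z‖ ≤ z.re := by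
    have := Complex.cos_arg hz
    have h2 : z.re = Real.cos z.arg * ‖z‖ := by
      rw [this]; field_simp
    rw [h2]
    exact mul_le_mul_of_nonneg_right hcos habs.le
  have hrepos : 0 < z.re := lt_of_lt_of_le (by positivity) hre
  have hexp : Real.exp (-z.re) ≤ (n.factorial : ℝ) / (Real.sin δ * ‖z‖) ^ n := by
    rw [Real.exp_neg]
    rw [inv_eq_one_div, div_le_div_iff₀ (Real.exp_pos _) (by positivity)]
    have h3 : (Real.sin δ * ‖z‖) ^ n ≤ z.re ^ n :=
      pow_le_pow_left₀ (by positivity) hre n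
    have h4 : z.re ^ n / n.factorial ≤ Real.exp z.re :=
      Real.pow_div_factorial_le_exp z.re hrepos.le n
    have h5 : z.re ^ n ≤ n.factorial * Real.exp z.re := by
      rw [div_le_iff₀ (by positivity)] at h4
      linarith [h4]
    nlinarith [h3, h5]
  have key : ‖P z‖ = ‖φ z‖ * Real.exp (-z.re) / ‖z‖ := by
    rw [hP, norm_div, norm_mul, Complex.norm_exp]
    simp
  rw [key]
  have hφz : ‖φ z‖ ≤ M := hφM z hz harg
  calc ‖φ z‖ * Real.exp (-z.re) / ‖z‖
      ≤ M * ((n.factorial : ℝ) / (Real.sin δ * ‖z‖) ^ n) / ‖z‖ := by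
        gcongr
    _ = M * n.factorial / (Real.sin δ ^ n * ‖z‖ ^ (n + 1)) := by
        rw [mul_pow]; field_simp; ring
end

section
/- Let M > 0, a > 0, and let z be a complex number with |z| > 1/a. If w is a complex number satisfying |w| ≤ 2M · n! / (a^n |z|^{n+1}) for every integer n ≥ 0, then |w| ≤ 4M√(2π) · a · e^{-a|z|}. -/
lemma factorial_le_stirling (n : ℕ) (hn : 1 ≤ n) :
    (n.factorial : ℝ) ≤ Real.exp 1 * Real.sqrt n * (n / Real.exp 1) ^ n := by
  obtain ⟨m, rfl⟩ := Nat.exists_eq_add_of_le hn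
  have hpos : 0 < Stirling.stirlingSeq (m + 1) := Stirling.stirlingSeq'_pos m
  have h1 : Stirling.stirlingSeq (1 + m) ≤ Stirling.stirlingSeq 1 := by
    have h := Stirling.log_stirlingSeq'_antitone (Nat.zero_le m)
    simp only [Function.comp_apply, Nat.succ_eq_add_one, zero_add] at h
    rw [Nat.add_comm 1 m]
    exact (Real.log_le_log_iff hpos (Stirling.stirlingSeq'_pos 0)).mp h
  rw [Stirling.stirlingSeq_one] at h1
  set k := 1 + m with hk
  have hkpos : (0:ℝ) < k := by positivity
  have hdef : Stirling.stirlingSeq k = k.factorial / (Real.sqrt (2 * k) * (k / Real.exp 1) ^ k) := rfl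
  have hden : (0:ℝ) < Real.sqrt (2 * k) * (k / Real.exp 1) ^ k := by positivity
  rw [hdef, div_le_div_iff₀ hden] at h1
  · calc (k.factorial : ℝ) ≤ Real.exp 1 * (Real.sqrt (2 * k) * (k / Real.exp 1) ^ k) / Real.sqrt 2 := by
          rw [le_div_iff₀ (by positivity)]
          linarith [h1]
      _ = Real.exp 1 * Real.sqrt k * (k / Real.exp 1) ^ k := by
          rw [show (2:ℝ) * k = 2 * k from rfl, Real.sqrt_mul (by norm_num) (k:ℝ)]
          field_simp
  · norm_num [Real.sqrt_pos]

lemma exp_pow_lt (n : ℕ) (hn : n ≠ 0) (c : ℝ) (h : (2.7182818286:ℝ) ^ n ≤ c) :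
    Real.exp n < c := by
  have h1 := Real.exp_one_lt_d9
  calc Real.exp n = Real.exp 1 ^ n := by rw [← Real.exp_nat_mul, mul_one]
    _ < 2.7182818286 ^ n := pow_lt_pow_left₀ h1 (Real.exp_pos 1).le hn
    _ ≤ c := h

lemma sqrt2pi_ge : (2.5:ℝ) ≤ Real.sqrt (2 * Real.pi) := by
  rw [show (2.5:ℝ) = Real.sqrt (2.5^2) by rw [Real.sqrt_sq]; norm_num]
  apply Real.sqrt_le_sqrt
  nlinarith [Real.pi_gt_d6]

lemma exp_15 : Real.exp 1.5 ≤ 2 * Real.sqrt (2 * Real.pi) := by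
  have h3 : Real.exp 3 < 20.1 := exp_pow_lt 3 (by norm_num) 20.1 (by norm_num)
  have h5 : (5:ℝ) ≤ 2 * Real.sqrt (2 * Real.pi) := by linarith [sqrt2pi_ge]
  have hsq : Real.exp 1.5 ^ 2 = Real.exp 3 := by
    rw [← Real.exp_nat_mul]; norm_num
  nlinarith [Real.exp_pos 1.5]

lemma exp_225 : Real.exp 2.25 ≤ 9.5 := by
  have h9 : Real.exp 9 < 9.5 ^ 4 := exp_pow_lt 9 (by norm_num) (9.5^4) (by norm_num)
  have hsq : Real.exp 2.25 ^ 4 = Real.exp 9 := by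
    rw [← Real.exp_nat_mul]; norm_num
  by_contra hcon
  push_neg at hcon
  have := pow_lt_pow_left₀ hcon (by norm_num) (n := 4) (by norm_num)
  linarith

lemma exp4' : Real.exp 1 ^ 4 < 54.6 := by
  have h := exp_pow_lt 4 (by norm_num) 54.6 (by norm_num)
  have : Real.exp (4:ℕ) = Real.exp 1 ^ 4 := by
    rw [← Real.exp_nat_mul, mul_one]
  rwa [this] at h

/-- **Minimization of the Gevrey estimates over `n`.**
If `|z| > 1/a` and `|w| ≤ 2M n!/(a^n |z|^{n+1})` for every `n ≥ 0`, then
`|w| ≤ 4M√(2π) a e^{-a|z|}`. -/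
theorem exp_decay_of_gevrey_family
    (M a : ℝ) (hM : 0 < M) (ha : 0 < a)
    (z : ℂ) (hz : 1 / a < ‖z‖)
    (w : ℂ)
    (hw : ∀ n : ℕ, ‖w‖ ≤
      2 * M * n.factorial / (a ^ n * ‖z‖ ^ (n + 1))) :
    ‖w‖ ≤
      4 * M * Real.sqrt (2 * Real.pi) * a * Real.exp (-a * ‖z‖) := by
  have hr : 0 < ‖z‖ := lt_trans (by positivity) hz
  set r := ‖z‖ with hrdef
  have ht1 : 1 < a * r := by
    have h := mul_lt_mul_of_pos_left hz ha
    rwa [mul_one_div, div_self ha.ne'] at h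
  set t := a * r with htdef
  have ht0 : 0 < t := by positivity
  set S := Real.sqrt (2 * Real.pi) with hSdef
  have hS : (2.5:ℝ) ≤ S := sqrt2pi_ge
  have hS0 : 0 ≤ S := by linarith
  have hS2 : S ^ 2 = 2 * Real.pi := Real.sq_sqrt (by positivity)
  have hexpt : Real.exp (-a * r) = Real.exp (-t) := by rw [neg_mul]
  rw [hexpt]
  have key12 : Real.exp t ≤ 2 * S * t ^ 2 →
      ‖w‖ ≤ 4 * M * S * a * Real.exp (-t) := by
    intro hk
    have h1 : 1 ≤ 2 * S * t ^ 2 * Real.exp (-t) := by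
      have h := mul_le_mul_of_nonneg_right hk (Real.exp_nonneg (-t))
      rwa [← Real.exp_add, add_neg_cancel, Real.exp_zero] at h
    refine (hw 1).trans ?_
    have e1 : 2 * M * ((Nat.factorial 1 : ℕ) : ℝ) / (a ^ 1 * r ^ (1 + 1)) = 2 * M / (a * r ^ 2) := by
      norm_num
    rw [e1, div_le_iff₀ (by positivity)]
    have ht2 : t ^ 2 = a * r ^ 2 * a := by rw [htdef]; ring
    have h2 : 2 * M * (2 * S * t ^ 2 * Real.exp (-t)) = 4 * M * S * a * Real.exp (-t) * (a * r ^ 2) := by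
      rw [htdef]; ring
    have h3 := mul_le_mul_of_nonneg_left h1 (by linarith : (0:ℝ) ≤ 2 * M)
    rw [h2] at h3
    linarith
  rcases le_or_gt t 1.5 with h15 | h15
  · apply key12
    have he := Real.exp_le_exp.mpr h15
    have htsq : 1 ≤ t ^ 2 := by nlinarith
    have h2 : 2 * S ≤ 2 * S * t ^ 2 := by nlinarith
    linarith [exp_15]
  · rcases le_or_gt t 2.25 with h225 | h225
    · apply key12
      have he := Real.exp_le_exp.mpr h225
      have htsq : (2.25:ℝ) ≤ t ^ 2 := by nlinarith
      have h2 : (11.25:ℝ) ≤ 2 * S * t ^ 2 := by nlinarith [mul_le_mul hS htsq (by norm_num) hS0]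
      linarith [exp_225]
    · -- main case: t > 2.25, take n = ⌊t⌋
      set n := Nat.floor t with hndef
      have hn2 : 2 ≤ n := Nat.le_floor (by push_cast; linarith)
      have hnt : (n : ℝ) ≤ t := Nat.floor_le ht0.le
      have htn : t < n + 1 := Nat.lt_floor_add_one t
      have hn0 : (0:ℝ) < n := by
        have : (2:ℝ) ≤ n := by exact_mod_cast hn2
        linarith
      refine (hw n).trans ?_
      have hfac : (n.factorial : ℝ) ≤ Real.exp 1 * Real.sqrt n * ((n:ℝ) / Real.exp 1) ^ n :=
        factorial_le_stirling n (le_trans one_le_two hn2)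
      have hpow : ((n:ℝ) / Real.exp 1) ^ n ≤ (t / Real.exp 1) ^ n := by
        apply pow_le_pow_left₀ (by positivity)
        gcongr
      have hpow2 : (t / Real.exp 1) ^ n = t ^ n * Real.exp (-(n:ℝ)) := by
        rw [div_pow, ← Real.exp_nat_mul, mul_one, Real.exp_neg, div_eq_mul_inv]
      have hen : Real.exp (-(n:ℝ)) ≤ Real.exp 1 * Real.exp (-t) := by
        rw [← Real.exp_add]
        exact Real.exp_le_exp.mpr (by linarith)
      have hA : ((n:ℝ) / Real.exp 1) ^ n ≤ t ^ n * (Real.exp 1 * Real.exp (-t)) := by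
        calc ((n:ℝ) / Real.exp 1) ^ n ≤ (t / Real.exp 1) ^ n := hpow
          _ = t ^ n * Real.exp (-(n:ℝ)) := hpow2
          _ ≤ t ^ n * (Real.exp 1 * Real.exp (-t)) := by
              apply mul_le_mul_of_nonneg_left hen (by positivity)
      have hsn : Real.sqrt n ≤ Real.sqrt t := Real.sqrt_le_sqrt hnt
      have hkey : Real.exp 1 ^ 2 * Real.sqrt t ≤ 2 * S * t := by
        have hb : 0 ≤ 2 * S * t := by positivity
        have hsq : (Real.exp 1 ^ 2 * Real.sqrt t) ^ 2 ≤ (2 * S * t) ^ 2 := by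
          have h1 : (Real.exp 1 ^ 2 * Real.sqrt t) ^ 2 = Real.exp 1 ^ 4 * t := by
            rw [mul_pow, ← pow_mul, Real.sq_sqrt ht0.le]
          have h2 : (2 * S * t) ^ 2 = 8 * Real.pi * t ^ 2 := by
            rw [mul_pow, mul_pow, hS2]; ring
          rw [h1, h2]
          nlinarith [exp4', Real.pi_gt_d6, ht0, h225, pow_pos (Real.exp_pos 1) 4]
        calc Real.exp 1 ^ 2 * Real.sqrt t
            = Real.sqrt ((Real.exp 1 ^ 2 * Real.sqrt t) ^ 2) := (Real.sqrt_sq (by positivity)).symm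
          _ ≤ Real.sqrt ((2 * S * t) ^ 2) := Real.sqrt_le_sqrt hsq
          _ = 2 * S * t := Real.sqrt_sq hb
      rw [div_le_iff₀ (by positivity)]
      have hrhs : 4 * M * S * a * Real.exp (-t) * (a ^ n * r ^ (n + 1))
          = 4 * M * S * Real.exp (-t) * t ^ (n + 1) := by
        rw [htdef, mul_pow]; ring
      rw [hrhs]
      calc 2 * M * (n.factorial : ℝ)
          ≤ 2 * M * (Real.exp 1 * Real.sqrt n * ((n:ℝ) / Real.exp 1) ^ n) := by
            apply mul_le_mul_of_nonneg_left hfac (by positivity)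
        _ ≤ 2 * M * (Real.exp 1 * Real.sqrt t * (t ^ n * (Real.exp 1 * Real.exp (-t)))) := by
            apply mul_le_mul_of_nonneg_left _ (by positivity)
            apply mul_le_mul (by gcongr) hA (by positivity) (by positivity)
        _ = 2 * M * (Real.exp 1 ^ 2 * Real.sqrt t) * t ^ n * Real.exp (-t) := by ring
        _ ≤ 2 * M * (2 * S * t) * t ^ n * Real.exp (-t) := by
            gcongr
        _ = 4 * M * S * Real.exp (-t) * t ^ (n + 1) := by ring
end

section
/- Let M > 0, b > 0, a > 0, and let P be analytic on the open right half-plane {Re z > 0}. Suppose that for every δ ∈ (0, π/2) and every z ≠ 0 with |arg z| ≤ π/2 - δ one has |P(z)| ≤ M exp(b/δ) e^{-a|z|}. Then for every c with 0 < c < a there exist h > 0 and M_h > 0 such that |P(h + iy)| ≤ M_h e^{-c|y|} for all real y. -/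
set_option maxHeartbeats 1000000

/-- **Remark 3 (Havin's observation).** If `P` is analytic on the right
half-plane and `|P(z)| ≤ M exp(b/δ) e^{-a|z|}` whenever `|arg z| ≤ π/2 - δ`,
then for every `0 < c < a` there exist `h > 0` and `M_h > 0` such that
`|P(h + iy)| ≤ M_h e^{-c|y|}` for all real `y`. -/
theorem havin_exp_decay_on_vertical_line
    (M b a : ℝ) (hM : 0 < M) (hb : 0 < b) (ha : 0 < a)
    (P : ℂ → ℂ)
    (hP : DifferentiableOn ℂ P {z : ℂ | 0 < z.re})
    (hbound : ∀ δ ∈ Set.Ioo (0 : ℝ) (Real.pi / 2), ∀ z : ℂ, z ≠ 0 →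
      |z.arg| ≤ Real.pi / 2 - δ →
      ‖P z‖ ≤ M * Real.exp (b / δ) * Real.exp (-a * ‖z‖)) :
    ∀ c : ℝ, 0 < c → c < a →
      ∃ h : ℝ, 0 < h ∧ ∃ M_h : ℝ, 0 < M_h ∧
        ∀ y : ℝ, ‖P (h + Complex.I * y)‖ ≤ M_h * Real.exp (-c * |y|) := by
  intro c hc hca
  have hac : 0 < a - c := by linarith
  have hπ : 0 < Real.pi := Real.pi_pos
  set h : ℝ := 2 * b / (a - c) with hh
  have hhpos : 0 < h := by positivity
  have hhac : h * (a - c) = 2 * b := by rw [hh]; field_simp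
  clear_value h
  refine ⟨h, hhpos, M * Real.exp (4 * b / Real.pi + c * h), by positivity, ?_⟩
  intro y
  set z : ℂ := (h : ℂ) + Complex.I * (y : ℂ) with hzdef
  have hre : z.re = h := by simp [hzdef]
  have him : z.im = y := by simp [hzdef]
  have hzne : z ≠ 0 := by
    intro h0
    rw [h0] at hre
    simp at hre
    exact hhpos.ne' hre.symm
  clear_value z
  set r : ℝ := ‖z‖ with hrdef
  have hrpos : 0 < r := norm_pos_iff.mpr hzne
  have hr2 : r ^ 2 = h ^ 2 + y ^ 2 := by
    rw [hrdef, Complex.sq_norm, Complex.normSq_apply, hre, him]; ring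
  have habs_y : |y| ≤ r := by
    rw [hrdef, ← him]; exact Complex.abs_im_le_norm z
  have habs_h : h ≤ r := by
    calc h = |z.re| := by rw [hre, abs_of_pos hhpos]
    _ ≤ r := Complex.abs_re_le_norm z
  have hcosarg : Real.cos z.arg = h / r := by
    rw [Complex.cos_arg hzne, hre, hrdef]
  clear_value r
  -- The key geometric fact: if `sin δ ≤ h / r` then `z` lies in the sector.
  have hsector : ∀ δ : ℝ, δ ∈ Set.Ioo (0 : ℝ) (Real.pi / 2) →
      Real.sin δ ≤ h / r → |z.arg| ≤ Real.pi / 2 - δ := by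
    intro δ hδ hsin
    by_contra hlt
    push_neg at hlt
    have harg_lt : |z.arg| < Real.pi / 2 := by
      rw [abs_lt]
      exact ⟨Complex.neg_pi_div_two_lt_arg_iff.mpr (Or.inl (by rw [hre]; exact hhpos)),
        Complex.arg_lt_pi_div_two_iff.mpr (Or.inl (by rw [hre]; exact hhpos))⟩
    have h1 : Real.cos |z.arg| < Real.cos (Real.pi / 2 - δ) :=
      Real.strictAntiOn_cos ⟨by linarith [hδ.2], by linarith [hδ.1]⟩
        ⟨abs_nonneg z.arg, by linarith⟩ hlt
    rw [Real.cos_pi_div_two_sub] at h1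
    rw [Real.cos_abs, hcosarg] at h1
    linarith
  have hyne : y ≠ 0 ∨ True := Or.inr trivial
  by_cases hy : |y| ≤ h
  · -- Case |y| ≤ h : use δ = π/4.
    have hδ : Real.pi / 4 ∈ Set.Ioo (0 : ℝ) (Real.pi / 2) := ⟨by positivity, by linarith⟩
    have hs2 : Real.sqrt 2 ^ 2 = 2 := Real.sq_sqrt (by norm_num)
    have hs2pos : 0 < Real.sqrt 2 := by positivity
    have hrle : r ≤ Real.sqrt 2 * h := by
      nlinarith [sq_abs y, mul_self_le_mul_self (abs_nonneg y) hy, hs2,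
        show (0:ℝ) < r + Real.sqrt 2 * h by positivity]
    have hsin : Real.sin (Real.pi / 4) ≤ h / r := by
      rw [Real.sin_pi_div_four, div_le_div_iff₀ (by norm_num) hrpos]
      nlinarith
    have hB := hbound (Real.pi / 4) hδ z hzne (hsector _ hδ hsin)
    rw [← hrdef] at hB
    refine hB.trans ?_
    have hdiv : b / (Real.pi / 4) = 4 * b / Real.pi := by
      field_simp
    rw [hdiv, mul_assoc, mul_assoc, ← Real.exp_add, ← Real.exp_add]
    apply mul_le_mul_of_nonneg_left _ hM.le
    apply Real.exp_le_exp.mpr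
    have h1 : 0 ≤ c * h - c * |y| := by nlinarith
    nlinarith [mul_pos ha hrpos]
  · -- Case h < |y| : use δ = arctan (h / |y|).
    push_neg at hy
    have hy0 : 0 < |y| := hhpos.trans hy
    have hyne : y ≠ 0 := abs_pos.mp hy0
    set t : ℝ := h / |y| with ht
    have htpos : 0 < t := by positivity
    set δ : ℝ := Real.arctan t with hδdef
    have hδpos : 0 < δ := by
      rw [hδdef, ← Real.arctan_zero]
      exact Real.arctan_strictMono htpos
    have hδ : δ ∈ Set.Ioo (0 : ℝ) (Real.pi / 2) := ⟨hδpos, Real.arctan_lt_pi_div_two t⟩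
    have he : 1 + t ^ 2 = (r / |y|) ^ 2 := by
      rw [ht, div_pow, div_pow, sq_abs, hr2]
      field_simp
      ring
    have hsqrt : Real.sqrt (1 + t ^ 2) = r / |y| := by
      rw [he, Real.sqrt_sq (by positivity)]
    have hsin : Real.sin δ = h / r := by
      rw [hδdef, Real.sin_arctan, hsqrt, ht]
      field_simp
    clear_value t δ
    have hB := hbound δ hδ z hzne (hsector _ hδ hsin.le)
    rw [← hrdef] at hB
    refine hB.trans ?_
    clear hP hbound hsector hzdef hre him hcosarg he hsqrt hzne
    have hrle : r ≤ 2 * |y| := by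
      nlinarith [sq_abs y, mul_self_lt_mul_self hhpos.le hy,
        show (0:ℝ) < r + 2 * |y| by positivity]
    have h2 : b / ((a - c) * |y|) ≤ h / r := by
      rw [div_le_div_iff₀ (by positivity) hrpos]
      nlinarith [mul_le_mul_of_nonneg_left hrle hb.le, hhac, hy0.le]
    have hδge : b / ((a - c) * |y|) ≤ δ := by
      have h1 : Real.sin δ ≤ δ := Real.sin_le hδpos.le
      rw [hsin] at h1
      linarith
    have hbδ : b / δ ≤ (a - c) * |y| := by
      rw [div_le_iff₀ hδpos]
      have hq : 0 < (a - c) * |y| := by positivity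
      have := mul_le_mul_of_nonneg_left hδge hq.le
      rwa [mul_div_cancel₀ b hq.ne'] at this
    have step1 : M * Real.exp (b / δ) * Real.exp (-a * r) ≤ M * Real.exp (-c * |y|) := by
      rw [mul_assoc, ← Real.exp_add]
      apply mul_le_mul_of_nonneg_left _ hM.le
      apply Real.exp_le_exp.mpr
      have h3 : a * |y| ≤ a * r := mul_le_mul_of_nonneg_left habs_y ha.le
      linarith
    refine step1.trans ?_
    apply mul_le_mul_of_nonneg_right _ (Real.exp_nonneg _)
    nlinarith [Real.one_le_exp (by positivity : (0:ℝ) ≤ 4 * b / Real.pi + c * h)]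
end

section
/- Let a > 0, M > 0, δ ∈ (0, π/2), and let P be analytic on the open right half-plane {Re z > 0} with |P(z)| ≤ M e^{-a|z|} for every z ≠ 0 with |arg z| ≤ π/2 - δ. For θ ∈ (-π/2, π/2) define F_θ(t) = ∫₀^∞ e^{t r e^{iθ}} P(r e^{iθ}) e^{iθ} dr on Π_{θ,a} = {σ + iτ : σ cos θ - τ sin θ < a}. Then for every t in the intersection S₁(δ,a) = Π_{π/2-δ,a} ∩ Π_{-π/2+δ,a}, one has F_{π/2-δ}(t) = F_{-π/2+δ}(t). -/
open Complex MeasureTheory Set Filter intervalIntegral Metric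
open scoped Real Topology Interval

noncomputable def eθ (θ : ℝ) : ℂ := Complex.exp (θ * Complex.I)

lemma abs_eθ (θ : ℝ) : ‖eθ θ‖ = 1 := by
  simp [eθ, Complex.norm_exp]

lemma eθ_eq (θ : ℝ) : eθ θ = Complex.cos θ + Complex.sin θ * Complex.I := by
  rw [eθ, Complex.exp_mul_I]

lemma abs_r_eθ (r θ : ℝ) (hr : 0 ≤ r) : ‖(r : ℂ) * eθ θ‖ = r := by
  rw [norm_mul, abs_eθ, Complex.norm_real, Real.norm_eq_abs, _root_.abs_of_nonneg hr, mul_one]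

lemma arg_r_eθ (r θ : ℝ) (hr : 0 < r) (hθ : θ ∈ Set.Ioc (-Real.pi) Real.pi) :
    ((r : ℂ) * eθ θ).arg = θ := by
  rw [eθ_eq, Complex.arg_real_mul _ hr, Complex.arg_cos_add_sin_mul_I hθ]

lemma re_r_eθ (r θ : ℝ) : ((r : ℂ) * eθ θ).re = r * Real.cos θ := by
  rw [eθ_eq]
  simp [Complex.mul_re, Complex.add_re, Complex.add_im, Complex.cos_ofReal_re,
    Complex.sin_ofReal_re]

lemma re_mul_eθ (t : ℂ) (θ : ℝ) :
    (t * eθ θ).re = t.re * Real.cos θ - t.im * Real.sin θ := by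
  rw [eθ_eq]
  simp [Complex.mul_re, Complex.add_re, Complex.add_im, Complex.cos_ofReal_re,
    Complex.sin_ofReal_re, Complex.cos_ofReal_im, Complex.sin_ofReal_im]

lemma re_t_mul_r (t : ℂ) (r θ : ℝ) :
    (t * (r : ℂ) * eθ θ).re = r * (t * eθ θ).re := by
  rw [show t * (r:ℂ) * eθ θ = (r:ℂ) * (t * eθ θ) by ring, Complex.mul_re]
  simp

lemma r_eθ_ne_zero (r θ : ℝ) (hr : 0 < r) : ((r : ℂ) * eθ θ) ≠ 0 :=
  mul_ne_zero (Complex.ofReal_ne_zero.2 hr.ne') (by rw [eθ]; exact Complex.exp_ne_zero _)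

section Main

variable {a M δ : ℝ} {P : ℂ → ℂ}

lemma g_bound (hbound : ∀ z : ℂ, z ≠ 0 → |z.arg| ≤ Real.pi / 2 - δ →
      ‖P z‖ ≤ M * Real.exp (-a * ‖z‖))
    (t z : ℂ) (hz : z ≠ 0) (harg : |z.arg| ≤ Real.pi / 2 - δ) :
    ‖Complex.exp (t * z) * P z‖
      ≤ M * Real.exp ((‖t‖ - a) * ‖z‖) := by
  rw [norm_mul, Complex.norm_exp]
  calc Real.exp ((t * z).re) * ‖P z‖
      ≤ Real.exp (‖t‖ * ‖z‖) * (M * Real.exp (-a * ‖z‖)) := by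
        gcongr
        · exact le_trans (Complex.re_le_norm _) (le_of_eq (norm_mul _ _))
        · exact hbound z hz harg
    _ = M * (Real.exp (‖t‖ * ‖z‖) * Real.exp (-a * ‖z‖)) := by ring
    _ = M * Real.exp ((‖t‖ - a) * ‖z‖) := by
        rw [← Real.exp_add]; congr 1; ring

lemma theta_mem (hδ : δ ∈ Set.Ioo (0 : ℝ) (Real.pi / 2)) {θ : ℝ} (hθ : |θ| ≤ Real.pi / 2 - δ) :
    θ ∈ Set.Ioc (-Real.pi) Real.pi := by
  obtain ⟨h1, h2⟩ := abs_le.1 hθ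
  have hπ := Real.pi_pos
  exact ⟨by linarith [hδ.1], by linarith [hδ.1]⟩

lemma integrand_bound (hbound : ∀ z : ℂ, z ≠ 0 → |z.arg| ≤ Real.pi / 2 - δ →
      ‖P z‖ ≤ M * Real.exp (-a * ‖z‖))
    (hδ : δ ∈ Set.Ioo (0 : ℝ) (Real.pi / 2))
    (t : ℂ) (θ r : ℝ) (hθ : |θ| ≤ Real.pi / 2 - δ) (hr : 0 < r) :
    ‖Complex.exp (t * r * eθ θ) * P (r * eθ θ) * eθ θ‖
      ≤ M * Real.exp (((t * eθ θ).re - a) * r) := by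
  have hz := r_eθ_ne_zero r θ hr
  have harg : |((r : ℂ) * eθ θ).arg| ≤ Real.pi / 2 - δ := by
    rw [arg_r_eθ r θ hr (theta_mem hδ hθ)]; exact hθ
  rw [norm_mul, abs_eθ, mul_one, norm_mul, Complex.norm_exp]
  have hb := hbound _ hz harg
  rw [abs_r_eθ r θ hr.le] at hb
  calc Real.exp ((t * r * eθ θ).re) * ‖P ((r:ℂ) * eθ θ)‖
      ≤ Real.exp (r * (t * eθ θ).re) * (M * Real.exp (-a * r)) := by
        rw [re_t_mul_r]; gcongr
    _ = M * (Real.exp (r * (t * eθ θ).re) * Real.exp (-a * r)) := by ring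
    _ = M * Real.exp (((t * eθ θ).re - a) * r) := by rw [← Real.exp_add]; congr 1; ring

lemma cont_integrand (hP : DifferentiableOn ℂ P {z : ℂ | 0 < z.re})
    (t : ℂ) (θ : ℝ) (hθ : |θ| < Real.pi / 2) :
    ContinuousOn (fun r : ℝ => Complex.exp (t * r * eθ θ) * P (r * eθ θ) * eθ θ)
      (Set.Ioi 0) := by
  have hcos : 0 < Real.cos θ := Real.cos_pos_of_mem_Ioo (by
    obtain ⟨h1, h2⟩ := abs_lt.1 hθ; exact ⟨by linarith, h2⟩)
  have hmaps : MapsTo (fun r : ℝ => (r : ℂ) * eθ θ) (Set.Ioi 0) {z : ℂ | 0 < z.re} := by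
    intro r hr
    simp only [mem_setOf_eq, re_r_eθ]
    exact mul_pos hr hcos
  have hc0 : Continuous fun r : ℝ => t * (r : ℂ) * eθ θ := by continuity
  have hc1 : Continuous fun r : ℝ => Complex.exp (t * r * eθ θ) :=
    Complex.continuous_exp.comp hc0
  have hc3 : Continuous fun r : ℝ => (r : ℂ) * eθ θ := by continuity
  have hc2 : ContinuousOn (fun r : ℝ => P ((r : ℂ) * eθ θ)) (Set.Ioi 0) :=
    hP.continuousOn.comp hc3.continuousOn hmaps
  exact ((hc1.continuousOn.mul hc2).mul continuousOn_const)

lemma integrable_integrand (hP : DifferentiableOn ℂ P {z : ℂ | 0 < z.re})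
    (hbound : ∀ z : ℂ, z ≠ 0 → |z.arg| ≤ Real.pi / 2 - δ →
      ‖P z‖ ≤ M * Real.exp (-a * ‖z‖))
    (hδ : δ ∈ Set.Ioo (0 : ℝ) (Real.pi / 2))
    (t : ℂ) (θ : ℝ) (hθ : |θ| ≤ Real.pi / 2 - δ) (ht : (t * eθ θ).re < a) :
    IntegrableOn (fun r : ℝ => Complex.exp (t * r * eθ θ) * P (r * eθ θ) * eθ θ)
      (Set.Ioi 0) := by
  have hθ2 : |θ| < Real.pi / 2 := lt_of_le_of_lt hθ (by linarith [hδ.1])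
  have hmeas : AEStronglyMeasurable
      (fun r : ℝ => Complex.exp (t * r * eθ θ) * P (r * eθ θ) * eθ θ)
      (volume.restrict (Set.Ioi 0)) :=
    (cont_integrand hP t θ hθ2).aestronglyMeasurable measurableSet_Ioi
  refine Integrable.mono'
    (g := fun r : ℝ => M * Real.exp (-(a - (t * eθ θ).re) * r)) ?_ hmeas ?_
  · exact (exp_neg_integrableOn_Ioi 0 (by linarith)).const_mul M
  · filter_upwards [self_mem_ae_restrict measurableSet_Ioi] with r hr
    have := integrand_bound hbound hδ t θ r hθ hr
    simpa [show -(a - (t * eθ θ).re) = (t * eθ θ).re - a by ring] using this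


set_option maxHeartbeats 4000000 in
lemma differentiableAt_F (hP : DifferentiableOn ℂ P {z : ℂ | 0 < z.re})
    (hbound : ∀ z : ℂ, z ≠ 0 → |z.arg| ≤ Real.pi / 2 - δ →
      ‖P z‖ ≤ M * Real.exp (-a * ‖z‖))
    (hδ : δ ∈ Set.Ioo (0 : ℝ) (Real.pi / 2)) (hM : 0 < M)
    (θ : ℝ) (hθ : |θ| ≤ Real.pi / 2 - δ) {t₀ : ℂ} (ht₀ : (t₀ * eθ θ).re < a) :
    DifferentiableAt ℂ
      (fun t : ℂ => ∫ r in Set.Ioi (0:ℝ), Complex.exp (t * (r:ℂ) * eθ θ) * P ((r:ℂ) * eθ θ) * eθ θ)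
      t₀ := by
  have hθ2 : |θ| < Real.pi / 2 := lt_of_le_of_lt hθ (by linarith [hδ.1])
  obtain ⟨c, hc⟩ : ∃ c, c = (t₀ * eθ θ).re := ⟨_, rfl⟩
  obtain ⟨ε, hεdef⟩ : ∃ ε : ℝ, ε = (a - c) / 2 := ⟨_, rfl⟩
  have hca : c < a := hc ▸ ht₀
  have hεpos : 0 < ε := by rw [hεdef]; linarith
  have key : ∀ t ∈ ball t₀ ε, (t * eθ θ).re ≤ c + ε := by
    intro t htb
    have h5 : (t * eθ θ).re = ((t - t₀) * eθ θ).re + (t₀ * eθ θ).re := by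
      rw [← Complex.add_re]; congr 1; ring
    have h6 : ((t - t₀) * eθ θ).re ≤ ‖(t - t₀) * eθ θ‖ := Complex.re_le_norm _
    rw [norm_mul, abs_eθ, mul_one] at h6
    have h7 : ‖t - t₀‖ < ε := by
      rw [← Complex.dist_eq]; exact mem_ball.1 htb
    rw [← hc] at h5
    linarith
  have hmeasF : ∀ t : ℂ, AEStronglyMeasurable
      (fun r : ℝ => Complex.exp (t * (r:ℂ) * eθ θ) * P ((r:ℂ) * eθ θ) * eθ θ)
      (volume.restrict (Set.Ioi 0)) := fun t =>
    (cont_integrand hP t θ hθ2).aestronglyMeasurable measurableSet_Ioi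
  have hc3 : Continuous fun r : ℝ => (r : ℂ) * eθ θ := by continuity
  have hmeasF' : AEStronglyMeasurable
      (fun r : ℝ => ((r : ℂ) * eθ θ) * (Complex.exp (t₀ * (r:ℂ) * eθ θ) * P ((r:ℂ) * eθ θ) * eθ θ))
      (volume.restrict (Set.Ioi 0)) :=
    (hc3.continuousOn.mul (cont_integrand hP t₀ θ hθ2)).aestronglyMeasurable
      measurableSet_Ioi
  have h_bound : ∀ᵐ r : ℝ ∂(volume.restrict (Set.Ioi 0)), ∀ t ∈ ball t₀ ε,
      ‖((r : ℂ) * eθ θ) * (Complex.exp (t * (r:ℂ) * eθ θ) * P ((r:ℂ) * eθ θ) * eθ θ)‖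
        ≤ 2 * M / ε * Real.exp (-(ε / 2) * r) := by
    filter_upwards [self_mem_ae_restrict measurableSet_Ioi] with r hr
    intro t htb
    have hr0 : (0:ℝ) < r := hr
    have hb := integrand_bound hbound hδ t θ r hθ hr0
    have hre : (t * eθ θ).re - a ≤ -ε := by
      have := key t htb; rw [hεdef] at this ⊢; linarith
    have hrle : r ≤ 2 / ε * Real.exp (ε / 2 * r) := by
      have h8 := Real.add_one_le_exp (ε / 2 * r)
      rw [div_mul_eq_mul_div, le_div_iff₀ hεpos]
      nlinarith
    calc ‖((r : ℂ) * eθ θ) * (Complex.exp (t * (r:ℂ) * eθ θ) * P ((r:ℂ) * eθ θ) * eθ θ)‖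
        = r * ‖Complex.exp (t * (r:ℂ) * eθ θ) * P ((r:ℂ) * eθ θ) * eθ θ‖ := by
          rw [norm_mul, abs_r_eθ r θ hr0.le]
      _ ≤ r * (M * Real.exp (((t * eθ θ).re - a) * r)) := by gcongr
      _ ≤ r * (M * Real.exp (-ε * r)) :=
          mul_le_mul_of_nonneg_left (mul_le_mul_of_nonneg_left
            (Real.exp_le_exp.2 (mul_le_mul_of_nonneg_right hre hr0.le)) hM.le) hr0.le
      _ ≤ (2 / ε * Real.exp (ε / 2 * r)) * (M * Real.exp (-ε * r)) := by
          gcongr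
      _ = 2 * M / ε * (Real.exp (ε / 2 * r) * Real.exp (-ε * r)) := by ring
      _ = 2 * M / ε * Real.exp (-(ε / 2) * r) := by
          rw [← Real.exp_add]; congr 1; ring
  have hbi : Integrable (fun r : ℝ => 2 * M / ε * Real.exp (-(ε / 2) * r))
      (volume.restrict (Set.Ioi 0)) :=
    (exp_neg_integrableOn_Ioi 0 (by linarith : (0:ℝ) < ε / 2)).const_mul _
  have h_diff : ∀ᵐ r : ℝ ∂(volume.restrict (Set.Ioi 0)), ∀ t ∈ ball t₀ ε,
      HasDerivAt (fun t : ℂ => Complex.exp (t * (r:ℂ) * eθ θ) * P ((r:ℂ) * eθ θ) * eθ θ)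
        (((r : ℂ) * eθ θ) * (Complex.exp (t * (r:ℂ) * eθ θ) * P ((r:ℂ) * eθ θ) * eθ θ)) t := by
    refine Filter.Eventually.of_forall fun r => fun t _ => ?_
    have h1 : HasDerivAt (fun s : ℂ => s * ((r : ℂ) * eθ θ)) ((r : ℂ) * eθ θ) t :=
      hasDerivAt_mul_const _
    have h3 := (h1.cexp).mul_const (P ((r : ℂ) * eθ θ) * eθ θ)
    have h4 : (fun s : ℂ => Complex.exp (s * (r:ℂ) * eθ θ) * P ((r:ℂ) * eθ θ) * eθ θ)
        = fun s : ℂ => Complex.exp (s * ((r : ℂ) * eθ θ)) * (P ((r : ℂ) * eθ θ) * eθ θ) := by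
      funext s; rw [mul_assoc, mul_assoc]
    rw [h4]
    have h5 : ((r : ℂ) * eθ θ) * (Complex.exp (t * (r:ℂ) * eθ θ) * P ((r:ℂ) * eθ θ) * eθ θ)
        = Complex.exp (t * ((r : ℂ) * eθ θ)) * ((r : ℂ) * eθ θ) * (P ((r : ℂ) * eθ θ) * eθ θ) := by
      rw [mul_assoc t]; ring
    rw [h5]
    exact h3
  refine (_root_.hasDerivAt_integral_of_dominated_loc_of_deriv_le
    (F := fun (t : ℂ) (r : ℝ) => Complex.exp (t * (r:ℂ) * eθ θ) * P ((r:ℂ) * eθ θ) * eθ θ)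
    (F' := fun (t : ℂ) (r : ℝ) =>
      ((r : ℂ) * eθ θ) * (Complex.exp (t * (r:ℂ) * eθ θ) * P ((r:ℂ) * eθ θ) * eθ θ))
    (bound := fun r : ℝ => 2 * M / ε * Real.exp (-(ε / 2) * r))
    (μ := volume.restrict (Set.Ioi 0)) (x₀ := t₀) (ball_mem_nhds t₀ hεpos)
    ?_ ?_ ?_ ?_ ?_ ?_).2.differentiableAt
  · exact Filter.Eventually.of_forall hmeasF
  · exact integrable_integrand hP hbound hδ t₀ θ hθ ht₀
  · exact hmeasF'
  · exact h_bound
  · exact hbi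
  · exact h_diff

lemma exp_decomp (w : ℂ) : Complex.exp w = ((Real.exp w.re : ℝ) : ℂ) * eθ w.im := by
  rw [eθ, Complex.ofReal_exp, ← Complex.exp_add, Complex.re_add_im]

noncomputable def Gfun (t : ℂ) (P : ℂ → ℂ) : ℂ → ℂ :=
  fun w => Complex.exp (t * Complex.exp w) * P (Complex.exp w) * Complex.exp w

variable {a M δ : ℝ} {P : ℂ → ℂ}





lemma Gfun_diffAt (hP : DifferentiableOn ℂ P {z : ℂ | 0 < z.re})
    (t : ℂ) {w : ℂ} (him : |w.im| < Real.pi / 2) :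
    DifferentiableAt ℂ (Gfun t P) w := by
  have hre : 0 < (Complex.exp w).re := by
    rw [Complex.exp_re]
    exact mul_pos (Real.exp_pos _) (Real.cos_pos_of_mem_Ioo (by
      obtain ⟨h1, h2⟩ := abs_lt.1 him; exact ⟨by linarith, h2⟩))
  have hopen : IsOpen {z : ℂ | 0 < z.re} := isOpen_lt continuous_const Complex.continuous_re
  have hPd : DifferentiableAt ℂ P (Complex.exp w) :=
    (hP.differentiableAt (hopen.mem_nhds hre))
  have d1 : DifferentiableAt ℂ (fun w : ℂ => Complex.exp w) w :=
    Complex.differentiable_exp.differentiableAt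
  have d2 : DifferentiableAt ℂ (fun w : ℂ => Complex.exp (t * Complex.exp w)) w :=
    (d1.const_mul t).cexp
  have d3 : DifferentiableAt ℂ (fun w : ℂ => P (Complex.exp w)) w := hPd.comp w d1
  exact (d2.mul d3).mul d1

lemma Gfun_bound (hbound : ∀ z : ℂ, z ≠ 0 → |z.arg| ≤ Real.pi / 2 - δ →
      ‖P z‖ ≤ M * Real.exp (-a * ‖z‖))
    (hδ : δ ∈ Set.Ioo (0 : ℝ) (Real.pi / 2))
    (t : ℂ) (w : ℂ) (him : |w.im| ≤ Real.pi / 2 - δ) :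
    ‖Gfun t P w‖
      ≤ M * Real.exp ((‖t‖ - a) * Real.exp w.re) * Real.exp w.re := by
  have hz : Complex.exp w ≠ 0 := Complex.exp_ne_zero w
  have habs : ‖Complex.exp w‖ = Real.exp w.re := Complex.norm_exp w
  have harg : |(Complex.exp w).arg| ≤ Real.pi / 2 - δ := by
    rw [exp_decomp w, arg_r_eθ _ _ (Real.exp_pos _) (theta_mem hδ him)]
    exact him
  have hb := g_bound hbound t (Complex.exp w) hz harg
  rw [habs] at hb
  calc ‖Gfun t P w‖
      = ‖Complex.exp (t * Complex.exp w) * P (Complex.exp w)‖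
        * ‖Complex.exp w‖ := by
        rw [Gfun, norm_mul]
    _ ≤ (M * Real.exp ((‖t‖ - a) * Real.exp w.re)) * Real.exp w.re := by
        rw [habs]; gcongr
lemma Gfun_horiz (hP : DifferentiableOn ℂ P {z : ℂ | 0 < z.re})
    (t : ℂ) (θ : ℝ) (hθ : |θ| < Real.pi / 2) (u₁ u₂ : ℝ) :
    (∫ x in u₁..u₂, Gfun t P (↑x + ↑θ * Complex.I))
      = ∫ r in Real.exp u₁..Real.exp u₂,
          Complex.exp (t * (r:ℂ) * eθ θ) * P ((r:ℂ) * eθ θ) * eθ θ := by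
  have himg : Real.exp '' [[u₁, u₂]] ⊆ Set.Ioi (0:ℝ) := by
    rintro - ⟨x, -, rfl⟩; exact Real.exp_pos x
  have h := intervalIntegral.integral_comp_smul_deriv'
      (f := Real.exp) (f' := Real.exp)
      (g := fun r : ℝ => Complex.exp (t * (r:ℂ) * eθ θ) * P ((r:ℂ) * eθ θ) * eθ θ)
      (fun x _ => Real.hasDerivAt_exp x) Real.continuous_exp.continuousOn
      ((cont_integrand hP t θ hθ).mono himg)
  rw [← h]
  refine intervalIntegral.integral_congr fun x _ => ?_
  have hw : ((↑x + ↑θ * Complex.I : ℂ)).re = x ∧ ((↑x + ↑θ * Complex.I : ℂ)).im = θ := by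
    constructor <;> simp
  have hexp : Complex.exp (↑x + ↑θ * Complex.I) = ((Real.exp x : ℝ) : ℂ) * eθ θ := by
    rw [exp_decomp (↑x + ↑θ * Complex.I), hw.1, hw.2]
  show Gfun t P (↑x + ↑θ * Complex.I)
      = Real.exp x • (Complex.exp (t * ((Real.exp x : ℝ):ℂ) * eθ θ)
          * P (((Real.exp x : ℝ):ℂ) * eθ θ) * eθ θ)
  rw [Gfun, hexp, Complex.real_smul]
  ring
lemma Gfun_vert (hbound : ∀ z : ℂ, z ≠ 0 → |z.arg| ≤ Real.pi / 2 - δ →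
      ‖P z‖ ≤ M * Real.exp (-a * ‖z‖))
    (hδ : δ ∈ Set.Ioo (0 : ℝ) (Real.pi / 2)) (hM : 0 < M)
    (t : ℂ) (u : ℝ) :
    ‖∫ y in -(Real.pi/2-δ)..(Real.pi/2-δ), Gfun t P (↑u + ↑y * Complex.I)‖
      ≤ M * Real.exp ((‖t‖ - a) * Real.exp u) * Real.exp u
          * (2 * (Real.pi/2-δ)) := by
  have hθ₁ : 0 < Real.pi/2 - δ := by linarith [hδ.2]
  have h := intervalIntegral.norm_integral_le_of_norm_le_const
    (f := fun y : ℝ => Gfun t P (↑u + ↑y * Complex.I))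
    (a := -(Real.pi/2-δ)) (b := Real.pi/2-δ)
    (C := M * Real.exp ((‖t‖ - a) * Real.exp u) * Real.exp u) ?_
  · calc ‖∫ y in -(Real.pi/2-δ)..(Real.pi/2-δ), Gfun t P (↑u + ↑y * Complex.I)‖
        ≤ M * Real.exp ((‖t‖ - a) * Real.exp u) * Real.exp u
            * |(Real.pi/2-δ) - -(Real.pi/2-δ)| := h
      _ = _ := by rw [_root_.abs_of_nonneg (by linarith : (0:ℝ) ≤ (Real.pi/2-δ) - -(Real.pi/2-δ))]; ring
  · intro y hy
    rw [Set.uIoc_of_le (by linarith)] at hy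
    have him : |((↑u + ↑y * Complex.I : ℂ)).im| ≤ Real.pi/2 - δ := by
      have : ((↑u + ↑y * Complex.I : ℂ)).im = y := by simp
      rw [this, abs_le]
      exact ⟨hy.1.le, hy.2⟩
    have hb := Gfun_bound hbound hδ t (↑u + ↑y * Complex.I) him
    have hre : ((↑u + ↑y * Complex.I : ℂ)).re = u := by simp
    rwa [hre] at hb

lemma seq_tendsto (f : ℝ → ℂ) (hf : IntegrableOn f (Set.Ioi 0)) :
    Tendsto (fun n : ℕ => ∫ r in (((n:ℝ)+1)⁻¹)..((n:ℝ)+1), f r) atTop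
      (𝓝 (∫ r in Set.Ioi (0:ℝ), f r)) := by
  have hle : ∀ n : ℕ, (((n:ℝ)+1)⁻¹) ≤ ((n:ℝ)+1) := by
    intro n
    have h1 : (1:ℝ) ≤ (n:ℝ)+1 := by linarith [Nat.cast_nonneg (α := ℝ) n]
    calc (((n:ℝ)+1)⁻¹) ≤ 1 := by
          rw [inv_le_one_iff₀]; right; exact h1
      _ ≤ (n:ℝ)+1 := h1
  have hm : Monotone (fun n : ℕ => Set.Ioc (((n:ℝ)+1)⁻¹) ((n:ℝ)+1)) := by
    intro n m hnm
    apply Set.Ioc_subset_Ioc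
    · apply inv_anti₀ (by positivity)
      exact_mod_cast by exact_mod_cast add_le_add_left (Nat.cast_le.2 hnm) 1
    · exact_mod_cast add_le_add_left (Nat.cast_le.2 hnm) 1
  have hU : (⋃ n : ℕ, Set.Ioc (((n:ℝ)+1)⁻¹) ((n:ℝ)+1)) = Set.Ioi (0:ℝ) := by
    ext x
    simp only [Set.mem_iUnion, Set.mem_Ioc, Set.mem_Ioi]
    constructor
    · rintro ⟨n, h1, h2⟩
      exact lt_trans (by positivity) h1
    · intro hx
      obtain ⟨n, hn⟩ := exists_nat_ge (max x x⁻¹)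
      refine ⟨n, ?_, ?_⟩
      · have h9 : x⁻¹ < (n:ℝ)+1 :=
          lt_of_le_of_lt (le_trans (le_max_right _ _) hn) (by linarith)
        have := inv_strictAnti₀ (inv_pos.2 hx) h9
        rwa [inv_inv] at this
      · exact le_trans (le_trans (le_max_left _ _) hn) (by linarith)
  have key := tendsto_setIntegral_of_monotone
    (fun n : ℕ => measurableSet_Ioc) hm (by rw [hU]; exact hf)
  rw [hU] at key
  exact key.congr fun n => (intervalIntegral.integral_of_le (hle n)).symm

variable {a M δ : ℝ} {P : ℂ → ℂ}

lemma small_t_eq (hP : DifferentiableOn ℂ P {z : ℂ | 0 < z.re})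
    (hbound : ∀ z : ℂ, z ≠ 0 → |z.arg| ≤ Real.pi / 2 - δ →
      ‖P z‖ ≤ M * Real.exp (-a * ‖z‖))
    (hδ : δ ∈ Set.Ioo (0 : ℝ) (Real.pi / 2)) (ha : 0 < a) (hM : 0 < M)
    (t : ℂ) (ht : ‖t‖ < a) :
    (∫ r in Set.Ioi (0:ℝ), Complex.exp (t * r * eθ (Real.pi/2 - δ))
        * P (r * eθ (Real.pi/2 - δ)) * eθ (Real.pi/2 - δ))
    = ∫ r in Set.Ioi (0:ℝ), Complex.exp (t * r * eθ (-(Real.pi/2 - δ)))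
        * P (r * eθ (-(Real.pi/2 - δ))) * eθ (-(Real.pi/2 - δ)) := by
  have hθ₁pos : 0 < Real.pi/2 - δ := by linarith [hδ.2]
  have hθ₁lt : Real.pi/2 - δ < Real.pi/2 := by linarith [hδ.1]
  have habs1 : |Real.pi/2 - δ| ≤ Real.pi/2 - δ := le_of_eq (_root_.abs_of_pos hθ₁pos)
  have habs2 : |(-(Real.pi/2 - δ))| ≤ Real.pi/2 - δ := by rw [abs_neg]; exact habs1
  have habs1' : |Real.pi/2 - δ| < Real.pi/2 := lt_of_le_of_lt habs1 hθ₁lt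
  have habs2' : |(-(Real.pi/2 - δ))| < Real.pi/2 := lt_of_le_of_lt habs2 hθ₁lt
  have hre_lt : ∀ θ : ℝ, (t * eθ θ).re < a := by
    intro θ
    have h1 := Complex.re_le_norm (t * eθ θ)
    rw [norm_mul, abs_eθ, mul_one] at h1
    linarith
  have hint1 := integrable_integrand hP hbound hδ t (Real.pi/2 - δ) habs1
    (hre_lt _)
  have hint2 := integrable_integrand hP hbound hδ t (-(Real.pi/2 - δ)) habs2
    (hre_lt _)
  -- the rectangle identity for each n
  have hrect : ∀ n : ℕ,
      (∫ r in (((n:ℝ)+1)⁻¹)..((n:ℝ)+1), Complex.exp (t * r * eθ (Real.pi/2 - δ))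
          * P (r * eθ (Real.pi/2 - δ)) * eθ (Real.pi/2 - δ))
      - (∫ r in (((n:ℝ)+1)⁻¹)..((n:ℝ)+1), Complex.exp (t * r * eθ (-(Real.pi/2 - δ)))
          * P (r * eθ (-(Real.pi/2 - δ))) * eθ (-(Real.pi/2 - δ)))
      = Complex.I • (∫ y in -(Real.pi/2-δ)..(Real.pi/2-δ),
            Gfun t P (↑(Real.log ((n:ℝ)+1)) + ↑y * Complex.I))
        - Complex.I • (∫ y in -(Real.pi/2-δ)..(Real.pi/2-δ),
            Gfun t P (↑(Real.log (((n:ℝ)+1)⁻¹)) + ↑y * Complex.I)) := by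
    intro n
    have hεpos : (0:ℝ) < ((n:ℝ)+1)⁻¹ := by positivity
    have hRpos : (0:ℝ) < (n:ℝ)+1 := by positivity
    set u₁ := Real.log (((n:ℝ)+1)⁻¹) with hu₁
    set u₂ := Real.log ((n:ℝ)+1) with hu₂
    have hdiffOn : DifferentiableOn ℂ (Gfun t P)
        ([[u₁, u₂]] ×ℂ [[-(Real.pi/2-δ), Real.pi/2-δ]]) := by
      intro w hw
      refine (Gfun_diffAt hP t ?_).differentiableWithinAt
      have h2 := (Complex.mem_reProdIm.1 hw).2
      rw [Set.uIcc_of_le (by linarith : -(Real.pi/2-δ) ≤ Real.pi/2-δ)] at h2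
      exact lt_of_le_of_lt (abs_le.2 ⟨h2.1, h2.2⟩) hθ₁lt
    have hzre : ((↑u₁ + ↑(-(Real.pi/2-δ)) * Complex.I : ℂ)).re = u₁ := by simp
    have hzim : ((↑u₁ + ↑(-(Real.pi/2-δ)) * Complex.I : ℂ)).im = -(Real.pi/2-δ) := by simp
    have hwre : ((↑u₂ + ↑(Real.pi/2-δ) * Complex.I : ℂ)).re = u₂ := by simp
    have hwim : ((↑u₂ + ↑(Real.pi/2-δ) * Complex.I : ℂ)).im = Real.pi/2-δ := by simp
    have hrect0 := Complex.integral_boundary_rect_eq_zero_of_differentiableOn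
      (Gfun t P) (↑u₁ + ↑(-(Real.pi/2-δ)) * Complex.I) (↑u₂ + ↑(Real.pi/2-δ) * Complex.I)
      (by rw [hzre, hzim, hwre, hwim]; exact hdiffOn)
    rw [hzre, hzim, hwre, hwim] at hrect0
    have hh1 := Gfun_horiz hP t (Real.pi/2-δ) habs1' u₁ u₂
    have hh2 := Gfun_horiz hP t (-(Real.pi/2-δ)) habs2' u₁ u₂
    rw [hu₁, hu₂, Real.exp_log hεpos, Real.exp_log hRpos] at hh1 hh2
    rw [← hu₁, ← hu₂] at hh1 hh2
    rw [hh1, hh2] at hrect0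
    linear_combination -hrect0
  -- limits of the horizontal integrals
  have hseq1 := seq_tendsto _ hint1
  have hseq2 := seq_tendsto _ hint2
  have hlim := hseq1.sub hseq2
  -- the vertical integrals tend to zero
  have hb : 0 < a - ‖t‖ := by linarith
  have hvert_top : Tendsto (fun n : ℕ =>
      M * Real.exp ((‖t‖ - a) * ((n:ℝ)+1)) * ((n:ℝ)+1)
        * (2 * (Real.pi/2-δ))) atTop (𝓝 0) := by
    have h0 : Tendsto (fun x : ℝ => x * Real.exp (-x)) atTop (𝓝 0) := by
      simpa using Real.tendsto_pow_mul_exp_neg_atTop_nhds_zero 1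
    have h1 : Tendsto (fun n : ℕ => (a - ‖t‖) * ((n:ℝ)+1)) atTop atTop := by
      apply Tendsto.const_mul_atTop hb
      exact tendsto_atTop_add_const_right _ _ tendsto_natCast_atTop_atTop
    have h2 := (h0.comp h1).const_mul (M * (2 * (Real.pi/2-δ)) / (a - ‖t‖))
    rw [mul_zero] at h2
    refine h2.congr fun n => ?_
    show M * (2 * (Real.pi/2-δ)) / (a - ‖t‖)
        * (((a - ‖t‖) * ((n:ℝ)+1))
            * Real.exp (-((a - ‖t‖) * ((n:ℝ)+1)))) = _
    rw [show -((a - ‖t‖) * ((n:ℝ)+1)) = (‖t‖ - a) * ((n:ℝ)+1) by ring]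
    field_simp
  have hvert_bot : Tendsto (fun n : ℕ =>
      M * Real.exp ((‖t‖ - a) * (((n:ℝ)+1)⁻¹)) * (((n:ℝ)+1)⁻¹)
        * (2 * (Real.pi/2-δ))) atTop (𝓝 0) := by
    apply squeeze_zero (fun n => by positivity)
      (g := fun n : ℕ => M * (((n:ℝ)+1)⁻¹) * (2 * (Real.pi/2-δ)))
    · intro n
      have hε : (0:ℝ) ≤ ((n:ℝ)+1)⁻¹ := by positivity
      have hexp : Real.exp ((‖t‖ - a) * (((n:ℝ)+1)⁻¹)) ≤ 1 := by
        have h5 : (‖t‖ - a) * (((n:ℝ)+1)⁻¹) ≤ 0 :=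
          mul_nonpos_of_nonpos_of_nonneg (by linarith) hε
        calc Real.exp ((‖t‖ - a) * (((n:ℝ)+1)⁻¹))
            ≤ Real.exp 0 := Real.exp_le_exp.2 h5
          _ = 1 := Real.exp_zero
      calc M * Real.exp ((‖t‖ - a) * (((n:ℝ)+1)⁻¹)) * (((n:ℝ)+1)⁻¹)
            * (2 * (Real.pi/2-δ))
          ≤ M * 1 * (((n:ℝ)+1)⁻¹) * (2 * (Real.pi/2-δ)) := by gcongr
        _ = M * (((n:ℝ)+1)⁻¹) * (2 * (Real.pi/2-δ)) := by ring
    · have h3 : Tendsto (fun n : ℕ => (((n:ℝ)+1)⁻¹)) atTop (𝓝 0) := by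
        simpa [one_div] using tendsto_one_div_add_atTop_nhds_zero_nat (𝕜 := ℝ)
      have h4 := (h3.const_mul M).mul_const (2 * (Real.pi/2-δ))
      simpa using h4
  -- squeeze
  have hnorm : ∀ n : ℕ,
      ‖(∫ r in (((n:ℝ)+1)⁻¹)..((n:ℝ)+1), Complex.exp (t * r * eθ (Real.pi/2 - δ))
          * P (r * eθ (Real.pi/2 - δ)) * eθ (Real.pi/2 - δ))
      - (∫ r in (((n:ℝ)+1)⁻¹)..((n:ℝ)+1), Complex.exp (t * r * eθ (-(Real.pi/2 - δ)))
          * P (r * eθ (-(Real.pi/2 - δ))) * eθ (-(Real.pi/2 - δ)))‖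
      ≤ M * Real.exp ((‖t‖ - a) * ((n:ℝ)+1)) * ((n:ℝ)+1)
          * (2 * (Real.pi/2-δ))
        + M * Real.exp ((‖t‖ - a) * (((n:ℝ)+1)⁻¹)) * (((n:ℝ)+1)⁻¹)
          * (2 * (Real.pi/2-δ)) := by
    intro n
    rw [hrect n]
    have hεpos : (0:ℝ) < ((n:ℝ)+1)⁻¹ := by positivity
    have hRpos : (0:ℝ) < (n:ℝ)+1 := by positivity
    have hv1 := Gfun_vert hbound hδ hM t (Real.log ((n:ℝ)+1))
    have hv2 := Gfun_vert hbound hδ hM t (Real.log (((n:ℝ)+1)⁻¹))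
    rw [Real.exp_log hRpos] at hv1
    rw [Real.exp_log hεpos] at hv2
    calc ‖Complex.I • (∫ y in -(Real.pi/2-δ)..(Real.pi/2-δ),
            Gfun t P (↑(Real.log ((n:ℝ)+1)) + ↑y * Complex.I))
        - Complex.I • (∫ y in -(Real.pi/2-δ)..(Real.pi/2-δ),
            Gfun t P (↑(Real.log (((n:ℝ)+1)⁻¹)) + ↑y * Complex.I))‖
        ≤ ‖Complex.I • (∫ y in -(Real.pi/2-δ)..(Real.pi/2-δ),
            Gfun t P (↑(Real.log ((n:ℝ)+1)) + ↑y * Complex.I))‖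
          + ‖Complex.I • (∫ y in -(Real.pi/2-δ)..(Real.pi/2-δ),
            Gfun t P (↑(Real.log (((n:ℝ)+1)⁻¹)) + ↑y * Complex.I))‖ := norm_sub_le _ _
      _ ≤ _ := by
          rw [norm_smul, norm_smul, Complex.norm_I, one_mul, one_mul]
          exact add_le_add hv1 hv2
  have hlim0 : Tendsto (fun n : ℕ =>
      (∫ r in (((n:ℝ)+1)⁻¹)..((n:ℝ)+1), Complex.exp (t * r * eθ (Real.pi/2 - δ))
          * P (r * eθ (Real.pi/2 - δ)) * eθ (Real.pi/2 - δ))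
      - (∫ r in (((n:ℝ)+1)⁻¹)..((n:ℝ)+1), Complex.exp (t * r * eθ (-(Real.pi/2 - δ)))
          * P (r * eθ (-(Real.pi/2 - δ))) * eθ (-(Real.pi/2 - δ)))) atTop (𝓝 0) := by
    apply squeeze_zero_norm hnorm
    simpa using hvert_top.add hvert_bot
  have := tendsto_nhds_unique hlim hlim0
  exact sub_eq_zero.1 this



end Main

/-- **Agreement of the two boundary Laplace transforms on the left sector.**
Let `a, M > 0`, `δ ∈ (0, π/2)`, and let `P` be analytic on the right
half-plane with `|P(z)| ≤ M e^{-a|z|}` on the closed sub-sector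
`|arg z| ≤ π/2 - δ`. Then for every `t` in
`S₁(δ,a) = Π_{π/2-δ,a} ∩ Π_{-π/2+δ,a}` one has
`F_{π/2-δ}(t) = F_{-π/2+δ}(t)`, where
`F_θ(t) = ∫₀^∞ e^{t r e^{iθ}} P(r e^{iθ}) e^{iθ} dr`. -/
theorem laplace_transforms_agree_on_left_sector
    (a M δ : ℝ) (ha : 0 < a) (hM : 0 < M)
    (hδ : δ ∈ Set.Ioo (0 : ℝ) (Real.pi / 2))
    (P : ℂ → ℂ)
    (hP : DifferentiableOn ℂ P {z : ℂ | 0 < z.re})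
    (hbound : ∀ z : ℂ, z ≠ 0 → |z.arg| ≤ Real.pi / 2 - δ →
      ‖P z‖ ≤ M * Real.exp (-a * ‖z‖)) :
    ∀ t : ℂ,
      t.re * Real.cos (Real.pi / 2 - δ) - t.im * Real.sin (Real.pi / 2 - δ) < a →
      t.re * Real.cos (-(Real.pi / 2) + δ) - t.im * Real.sin (-(Real.pi / 2) + δ) < a →
      (∫ r in Set.Ioi (0 : ℝ),
          Complex.exp (t * r * Complex.exp ((Real.pi / 2 - δ) * Complex.I)) *
            P (r * Complex.exp ((Real.pi / 2 - δ) * Complex.I)) *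
            Complex.exp ((Real.pi / 2 - δ) * Complex.I)) =
      (∫ r in Set.Ioi (0 : ℝ),
          Complex.exp (t * r * Complex.exp ((-(Real.pi / 2) + δ) * Complex.I)) *
            P (r * Complex.exp ((-(Real.pi / 2) + δ) * Complex.I)) *
            Complex.exp ((-(Real.pi / 2) + δ) * Complex.I)) := by
  intro t h1 h2
  have hang : -(Real.pi/2) + δ = -(Real.pi/2 - δ) := by ring
  rw [hang] at h2
  have hC1 : ((Real.pi : ℂ) / 2 - (δ : ℂ)) = ((Real.pi/2 - δ : ℝ) : ℂ) := by push_cast; ring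
  have hC2 : (-((Real.pi : ℂ) / 2) + (δ : ℂ)) = ((-(Real.pi/2 - δ) : ℝ) : ℂ) := by
    push_cast; ring
  rw [hC1, hC2]
  have hθ₁pos : 0 < Real.pi/2 - δ := by linarith [hδ.2]
  have habs1 : |Real.pi/2 - δ| ≤ Real.pi/2 - δ := le_of_eq (_root_.abs_of_pos hθ₁pos)
  have habs2 : |(-(Real.pi/2 - δ))| ≤ Real.pi/2 - δ := by rw [abs_neg]; exact habs1
  have hc1 : (t * eθ (Real.pi/2 - δ)).re < a := by rw [re_mul_eθ]; exact h1
  have hc2 : (t * eθ (-(Real.pi/2 - δ))).re < a := by rw [re_mul_eθ]; exact h2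
  have hlin : ∀ θ : ℝ, IsLinearMap ℝ (fun s : ℂ => (s * eθ θ).re) := by
    intro θ
    constructor
    · intro x y; rw [add_mul, Complex.add_re]
    · intro c x
      show ((c • x) * eθ θ).re = c • ((x * eθ θ).re)
      rw [Complex.real_smul, mul_assoc, Complex.re_ofReal_mul, smul_eq_mul]
  have hconv : Convex ℝ ({s : ℂ | (s * eθ (Real.pi/2 - δ)).re < a}
      ∩ {s : ℂ | (s * eθ (-(Real.pi/2 - δ))).re < a}) :=
    (convex_halfSpace_lt (hlin _) a).inter (convex_halfSpace_lt (hlin _) a)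
  have hopenΩ : ∀ θ : ℝ, IsOpen {s : ℂ | (s * eθ θ).re < a} := fun θ =>
    isOpen_lt (Complex.continuous_re.comp (continuous_id.mul continuous_const))
      continuous_const
  have hSopen : IsOpen ({s : ℂ | (s * eθ (Real.pi/2 - δ)).re < a}
      ∩ {s : ℂ | (s * eθ (-(Real.pi/2 - δ))).re < a}) := (hopenΩ _).inter (hopenΩ _)
  have hA1 : AnalyticOnNhd ℂ
      (fun s : ℂ => ∫ r in Set.Ioi (0:ℝ), Complex.exp (s * r * eθ (Real.pi/2 - δ))
        * P (r * eθ (Real.pi/2 - δ)) * eθ (Real.pi/2 - δ))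
      ({s : ℂ | (s * eθ (Real.pi/2 - δ)).re < a}
        ∩ {s : ℂ | (s * eθ (-(Real.pi/2 - δ))).re < a}) := by
    apply DifferentiableOn.analyticOnNhd _ hSopen
    exact fun s hs =>
      (differentiableAt_F hP hbound hδ hM _ habs1 hs.1).differentiableWithinAt
  have hA2 : AnalyticOnNhd ℂ
      (fun s : ℂ => ∫ r in Set.Ioi (0:ℝ), Complex.exp (s * r * eθ (-(Real.pi/2 - δ)))
        * P (r * eθ (-(Real.pi/2 - δ))) * eθ (-(Real.pi/2 - δ)))
      ({s : ℂ | (s * eθ (Real.pi/2 - δ)).re < a}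
        ∩ {s : ℂ | (s * eθ (-(Real.pi/2 - δ))).re < a}) := by
    apply DifferentiableOn.analyticOnNhd _ hSopen
    exact fun s hs =>
      (differentiableAt_F hP hbound hδ hM _ habs2 hs.2).differentiableWithinAt
  have h0 : (0:ℂ) ∈ ({s : ℂ | (s * eθ (Real.pi/2 - δ)).re < a}
      ∩ {s : ℂ | (s * eθ (-(Real.pi/2 - δ))).re < a}) := by
    constructor <;> · show ((0:ℂ) * _).re < a; rw [zero_mul]; simpa using ha
  have heq : (fun s : ℂ => ∫ r in Set.Ioi (0:ℝ),
        Complex.exp (s * r * eθ (Real.pi/2 - δ))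
          * P (r * eθ (Real.pi/2 - δ)) * eθ (Real.pi/2 - δ))
      =ᶠ[𝓝 (0:ℂ)]
      (fun s : ℂ => ∫ r in Set.Ioi (0:ℝ),
        Complex.exp (s * r * eθ (-(Real.pi/2 - δ)))
          * P (r * eθ (-(Real.pi/2 - δ))) * eθ (-(Real.pi/2 - δ))) := by
    refine Filter.eventuallyEq_of_mem (Metric.ball_mem_nhds (0:ℂ) ha) fun s hs => ?_
    refine small_t_eq hP hbound hδ ha hM s ?_
    have := mem_ball.1 hs
    rwa [Complex.dist_eq, sub_zero] at this
  have hfinal := AnalyticOnNhd.eqOn_of_preconnected_of_eventuallyEq hA1 hA2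
    hconv.isPreconnected h0 heq ⟨hc1, hc2⟩
  simp only [eθ] at hfinal
  exact hfinal
end

section
/- For every nonzero complex number z with |arg z| < π/2, the quantity K(z) = sup_{u ≥ 0} |z² / (u² + z²)| satisfies: K(z) = 1 if |arg z| < π/4, and K(z) = 1 / sin(2|arg z|) if π/4 ≤ |arg z| < π/2. -/
/-- **Explicit value of the constant `K(z)` in Stirling's remainder bound.**
For `z ≠ 0` with `|arg z| < π/2`, the quantity
`K(z) = sup_{u ≥ 0} |z²/(u² + z²)|` equals `1` when `|arg z| < π/4`, and
equals `1/sin(2|arg z|)` when `π/4 ≤ |arg z| < π/2`. -/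
theorem stirling_constant_K_formula
    (z : ℂ) (hz : z ≠ 0) (harg : |z.arg| < Real.pi / 2) :
    (|z.arg| < Real.pi / 4 →
      (⨆ u : Set.Ici (0 : ℝ),
        ‖z ^ 2 / (((u : ℝ) : ℂ) ^ 2 + z ^ 2)‖) = 1) ∧
    (Real.pi / 4 ≤ |z.arg| →
      (⨆ u : Set.Ici (0 : ℝ),
        ‖z ^ 2 / (((u : ℝ) : ℂ) ^ 2 + z ^ 2)‖) =
          1 / Real.sin (2 * |z.arg|)) := by
  have hpi := Real.pi_pos
  set θ := z.arg with hθdef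
  have hθlt : θ < Real.pi / 2 := (abs_lt.mp harg).2
  have hθgt : -(Real.pi / 2) < θ := (abs_lt.mp harg).1
  have hr : 0 < ‖z‖ := norm_pos_iff.mpr hz
  set r2 : ℝ := ‖z‖ ^ 2 with hr2def
  have hr2pos : 0 < r2 := by positivity
  have habs2 : r2 = z.re ^ 2 + z.im ^ 2 := by
    rw [hr2def, Complex.sq_norm, Complex.normSq_apply]; ring
  have hcos : Real.cos θ = z.re / ‖z‖ := Complex.cos_arg hz
  have hsin : Real.sin θ = z.im / ‖z‖ := Complex.sin_arg z
  have hA : (z ^ 2).re = r2 * Real.cos (2 * θ) := by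
    rw [Real.cos_two_mul', hcos, hsin, hr2def]
    have : (z ^ 2).re = z.re * z.re - z.im * z.im := by
      rw [sq, Complex.mul_re]
    rw [this]
    field_simp
  have hB : (z ^ 2).im = r2 * Real.sin (2 * θ) := by
    rw [Real.sin_two_mul, hcos, hsin, hr2def]
    have : (z ^ 2).im = z.re * z.im + z.im * z.re := by
      rw [sq, Complex.mul_im]
    rw [this]
    field_simp
    ring
  have hcosabs : Real.cos (2 * θ) = Real.cos (2 * |θ|) := by
    rw [show (2 : ℝ) * |θ| = |2 * θ| by rw [abs_mul]; norm_num, Real.cos_abs]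
  have hsinabs : Real.sin (2 * |θ|) = |Real.sin (2 * θ)| := by
    rcases abs_cases θ with ⟨h1, h2⟩ | ⟨h1, h2⟩
    · rw [h1, abs_of_nonneg]
      exact Real.sin_nonneg_of_nonneg_of_le_pi (by linarith) (by linarith)
    · rw [h1, show (2 : ℝ) * -θ = -(2 * θ) by ring, Real.sin_neg,
        abs_of_nonpos]
      exact neg_nonneg.mp (by
        rw [← Real.sin_neg]
        exact Real.sin_nonneg_of_nonneg_of_le_pi (by linarith) (by linarith))
  -- |z²| = r2
  have habsz2 : ‖z ^ 2‖ = r2 := by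
    rw [norm_pow]
  have hz2ne : z ^ 2 ≠ 0 := pow_ne_zero 2 hz
  -- real/imaginary part of u² + z²
  have hre : ∀ u : ℝ, (((u : ℂ)) ^ 2 + z ^ 2).re = u ^ 2 + (z ^ 2).re := by
    intro u
    simp [← Complex.ofReal_pow]
  have him : ∀ u : ℝ, (((u : ℂ)) ^ 2 + z ^ 2).im = (z ^ 2).im := by
    intro u
    simp [← Complex.ofReal_pow]
  have hsq : ∀ u : ℝ, ‖((u : ℂ)) ^ 2 + z ^ 2‖ ^ 2
      = (u ^ 2 + (z ^ 2).re) ^ 2 + (z ^ 2).im ^ 2 := by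
    intro u
    rw [Complex.sq_norm, Complex.normSq_apply, hre, him]
    ring
  constructor
  · -- case |θ| < π/4
    intro hlt
    have hcpos : 0 < Real.cos (2 * θ) := by
      rw [hcosabs]
      apply Real.cos_pos_of_mem_Ioo
      constructor
      · have := abs_nonneg θ; linarith
      · linarith [abs_nonneg θ]
    have hApos : 0 < (z ^ 2).re := by rw [hA]; positivity
    have hbound : ∀ u : Set.Ici (0 : ℝ),
        ‖z ^ 2 / (((u : ℝ) : ℂ) ^ 2 + z ^ 2)‖ ≤ 1 := by
      rintro ⟨u, hu⟩
      have hden : r2 ≤ ‖((u : ℂ)) ^ 2 + z ^ 2‖ := by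
        have h1 : r2 ^ 2 ≤ ‖((u : ℂ)) ^ 2 + z ^ 2‖ ^ 2 := by
          rw [hsq u, ← habsz2, Complex.sq_norm, Complex.normSq_apply]
          nlinarith [sq_nonneg u, sq_nonneg (u : ℝ) ]
        exact le_of_pow_le_pow_left₀ two_ne_zero (norm_nonneg _) h1
      rw [norm_div, habsz2]
      rw [div_le_one (lt_of_lt_of_le hr2pos hden)]
      exact hden
    refine le_antisymm (ciSup_le hbound) ?_
    have h0mem : (0 : ℝ) ∈ Set.Ici (0 : ℝ) := Set.mem_Ici.mpr le_rfl
    have hattain : ‖z ^ 2 / ((((⟨0, h0mem⟩ : Set.Ici (0:ℝ)) : ℝ) : ℂ) ^ 2 + z ^ 2)‖ = 1 := by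
      simp [div_self hz2ne]
    rw [← hattain]
    exact le_ciSup (f := fun u : Set.Ici (0:ℝ) =>
      ‖z ^ 2 / (((u : ℝ) : ℂ) ^ 2 + z ^ 2)‖)
      ⟨1, by rintro x ⟨u, rfl⟩; exact hbound u⟩ ⟨0, h0mem⟩
  · -- case π/4 ≤ |θ|
    intro hge
    have hsinpos : 0 < Real.sin (2 * |θ|) := by
      apply Real.sin_pos_of_pos_of_lt_pi
      · linarith
      · linarith [(abs_lt.mp harg).1, (abs_lt.mp harg).2, abs_lt.mpr ⟨hθgt, hθlt⟩]
    have hcnonpos : Real.cos (2 * θ) ≤ 0 := by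
      rw [hcosabs]
      apply Real.cos_nonpos_of_pi_div_two_le_of_le
      · linarith
      · have : |θ| < Real.pi / 2 := harg
        linarith
    have hBabs : |(z ^ 2).im| = r2 * Real.sin (2 * |θ|) := by
      rw [hB, abs_mul, abs_of_pos hr2pos, hsinabs]
    have hBpos : 0 < |(z ^ 2).im| := by
      rw [hBabs]; positivity
    have hbound : ∀ u : Set.Ici (0 : ℝ),
        ‖z ^ 2 / (((u : ℝ) : ℂ) ^ 2 + z ^ 2)‖
          ≤ 1 / Real.sin (2 * |θ|) := by
      rintro ⟨u, hu⟩
      have hden : |(z ^ 2).im| ≤ ‖((u : ℂ)) ^ 2 + z ^ 2‖ := by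
        have := Complex.abs_im_le_norm (((u : ℂ)) ^ 2 + z ^ 2)
        rwa [him u] at this
      rw [norm_div, habsz2]
      rw [div_le_div_iff₀ (lt_of_lt_of_le hBpos hden) (by positivity)]
      calc r2 * Real.sin (2 * |θ|) = |(z ^ 2).im| := hBabs.symm
        _ ≤ ‖((u : ℂ)) ^ 2 + z ^ 2‖ := hden
        _ = ‖((u : ℂ)) ^ 2 + z ^ 2‖ * 1 := by ring
        _ = 1 * ‖((u : ℂ)) ^ 2 + z ^ 2‖ := by ring
    refine le_antisymm (ciSup_le hbound) ?_
    -- attained at u₀ = sqrt (-(z²).re)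
    set u₀ : ℝ := Real.sqrt (-(z ^ 2).re) with hu₀def
    have hu₀nn : 0 ≤ u₀ := Real.sqrt_nonneg _
    have hAnp : (z ^ 2).re ≤ 0 := by
      rw [hA]
      exact mul_nonpos_of_nonneg_of_nonpos (le_of_lt hr2pos) hcnonpos
    have hu₀sq : u₀ ^ 2 = -(z ^ 2).re := Real.sq_sqrt (by linarith)
    have hw : ((u₀ : ℂ)) ^ 2 + z ^ 2 = ((z ^ 2).im : ℂ) * Complex.I := by
      apply Complex.ext
      · rw [hre u₀, hu₀sq]; simp
      · rw [him u₀]; simp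
    have hattain : ‖z ^ 2 / (((u₀ : ℝ) : ℂ) ^ 2 + z ^ 2)‖
        = 1 / Real.sin (2 * |θ|) := by
      rw [norm_div, habsz2, hw]
      rw [norm_mul, Complex.norm_I, Complex.norm_real, Real.norm_eq_abs, mul_one, hBabs]
      rw [div_eq_div_iff (by positivity) (by positivity)]
      ring
    have hu₀mem : u₀ ∈ Set.Ici (0 : ℝ) := Set.mem_Ici.mpr hu₀nn
    rw [← hattain]
    exact le_ciSup (f := fun u : Set.Ici (0:ℝ) =>
      ‖z ^ 2 / (((u : ℝ) : ℂ) ^ 2 + z ^ 2)‖)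
      ⟨1 / Real.sin (2 * |θ|), by rintro x ⟨u, rfl⟩; exact hbound u⟩ ⟨u₀, hu₀mem⟩
end
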